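/- arXiv:1504.01206 — 5 statements merged into one kernel-verified Lean document; each statement's English description precedes it below -/
import Mathlib

section
/- Let λ = (λ₁, …, λₙ) be a vector in the Gårding cone Γ_{k+1} (i.e. σ_m(λ) > 0 for all m = 1, …, k+1) with λ₁ ≥ λ₂ ≥ ⋯ ≥ λₙ. Then σ_k(λ) ≥ λ₁ λ₂ ⋯ λ_k ≥ λ_k^k. -/
open Multiset Polynomial

namespace GardingAux

lemma esymm_zero' (s : Multiset ℝ) : s.esymm 0 = 1 := by
  simp [Multiset.esymm]

lemma esymm_cons (a : ℝ) (s : Multiset ℝ) (j : ℕ) :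
    (a ::ₘ s).esymm (j+1) = s.esymm (j+1) + a * s.esymm j := by
  simp only [Multiset.esymm, powersetCard_cons, Multiset.map_add, Multiset.sum_add,
    Multiset.map_map]
  congr 1
  rw [← Multiset.sum_map_mul_left]
  congr 1
  apply Multiset.map_congr rfl
  intro t _
  simp [Multiset.prod_cons]

lemma esymm_eq_zero_of_card_lt {s : Multiset ℝ} {j : ℕ} (h : Multiset.card s < j) :
    s.esymm j = 0 := by
  rw [Multiset.esymm, Multiset.powersetCard_eq_empty _ h]
  simp

lemma esymm_card (s : Multiset ℝ) : s.esymm (Multiset.card s) = s.prod := by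
  induction s using Multiset.induction with
  | empty => simp [Multiset.esymm]
  | cons a s ih =>
      rw [Multiset.card_cons, esymm_cons, esymm_eq_zero_of_card_lt (by simp), ih]
      simp [Multiset.prod_cons]

lemma esymm_one' (s : Multiset ℝ) : s.esymm 1 = s.sum := by
  induction s using Multiset.induction with
  | empty => simp [Multiset.esymm, Multiset.powersetCard_eq_empty _ (by simp : Multiset.card (0:Multiset ℝ) < 1)]
  | cons a s ih =>
      have := esymm_cons a s 0
      rw [this, ih, esymm_zero']
      simp [add_comm]

lemma esymm_nonneg {s : Multiset ℝ} (h : ∀ x ∈ s, 0 ≤ x) (j : ℕ) : 0 ≤ s.esymm j := by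
  rw [Multiset.esymm]
  apply Multiset.sum_nonneg
  intro x hx
  rw [Multiset.mem_map] at hx
  obtain ⟨t, ht, rfl⟩ := hx
  rw [Multiset.mem_powersetCard] at ht
  exact Multiset.prod_nonneg (fun y hy => h y (Multiset.mem_of_le ht.1 hy))

lemma esymm_pos {s : Multiset ℝ} (h : ∀ x ∈ s, 0 < x) {j : ℕ} (hj : j ≤ Multiset.card s) :
    0 < s.esymm j := by
  induction s using Multiset.induction generalizing j with
  | empty => simp only [Multiset.card_zero, Nat.le_zero] at hj; subst hj; simp [esymm_zero']
  | cons a s ih =>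
      rcases j with _ | j
      · simp [esymm_zero']
      · rw [esymm_cons]
        have ha : 0 < a := h a (Multiset.mem_cons_self a s)
        have hs : ∀ x ∈ s, 0 < x := fun x hx => h x (Multiset.mem_cons_of_mem hx)
        rw [Multiset.card_cons] at hj
        rcases Nat.lt_or_ge (Multiset.card s) (j+1) with hc | hc
        · have : Multiset.card s = j := by omega
          rw [esymm_eq_zero_of_card_lt (by omega)]
          have := ih hs (j := j) (by omega)
          nlinarith
        · have h1 := ih hs (j := j+1) hc
          have h2 := ih hs (j := j) (by omega)
          nlinarith


noncomputable def P (s : Multiset ℝ) : ℝ[X] := (s.map fun r => X + C r).prod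

lemma P_monic (s : Multiset ℝ) : (P s).Monic := by
  apply monic_multiset_prod_of_monic
  intro r _
  exact monic_X_add_C r

lemma P_natDegree (s : Multiset ℝ) : (P s).natDegree = Multiset.card s := by
  rw [P, natDegree_multiset_prod_of_monic]
  · rw [Multiset.map_map]
    have : ((fun f : ℝ[X] => f.natDegree) ∘ fun r : ℝ => X + C r) = fun _ => 1 := by
      funext r; exact natDegree_X_add_C r
    simp [this]
  · intro f hf
    rw [Multiset.mem_map] at hf
    obtain ⟨a, _, rfl⟩ := hf
    exact monic_X_add_C a

lemma P_coeff (s : Multiset ℝ) {j : ℕ} (hj : j ≤ Multiset.card s) :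
    (P s).coeff (Multiset.card s - j) = s.esymm j := by
  have := Multiset.prod_X_add_C_coeff s (k := Multiset.card s - j) (by omega)
  rw [P, this]
  congr 1
  omega

lemma P_map_add (s : Multiset ℝ) (t : ℝ) :
    P (s.map (· + t)) = taylor t (P s) := by
  rw [taylor_apply, P, P, multiset_prod_comp, Multiset.map_map, Multiset.map_map]
  congr 1
  apply Multiset.map_congr rfl
  intro r _
  simp only [Function.comp_apply, add_comp, X_comp, C_comp]
  rw [add_assoc, ← C_add, add_comm t r]

lemma esymm_shift (s : Multiset ℝ) (j : ℕ) (hj : j ≤ Multiset.card s) (t : ℝ) :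
    (s.map (· + t)).esymm j =
      ∑ l ∈ Finset.range (j+1),
        ((l + (Multiset.card s - j)).choose (Multiset.card s - j) : ℝ)
          * s.esymm (j - l) * t^l := by
  have hcard : Multiset.card (s.map (· + t)) = Multiset.card s := Multiset.card_map _ _
  have h1 : (s.map (· + t)).esymm j = (P (s.map (· + t))).coeff (Multiset.card s - j) := by
    rw [← P_coeff (s.map (· + t)) (by omega)]
    congr 1
    omega
  rw [h1, P_map_add, taylor_coeff]
  have hdeg : (hasseDeriv (Multiset.card s - j) (P s)).natDegree < j + 1 := by
    have := natDegree_hasseDeriv_le (P s) (Multiset.card s - j)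
    rw [P_natDegree] at this
    omega
  rw [eval_eq_sum_range' hdeg]
  apply Finset.sum_congr rfl
  intro l hl
  rw [Finset.mem_range] at hl
  rw [hasseDeriv_coeff]
  have : (P s).coeff (l + (Multiset.card s - j)) = s.esymm (j - l) := by
    have : l + (Multiset.card s - j) = Multiset.card s - (j - l) := by omega
    rw [this, P_coeff s (by omega)]
  rw [this]



/-! ### sum of squares and inverse identities -/

lemma sum_sq_eq (s : Multiset ℝ) :
    (s.map (fun x => x^2)).sum = s.sum^2 - 2 * s.esymm 2 := by
  induction s using Multiset.induction with
  | empty => simp [esymm_zero', Multiset.esymm, Multiset.powersetCard_eq_empty _ (by simp : Multiset.card (0:Multiset ℝ) < 2)]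
  | cons a s ih =>
      have h2 : (a ::ₘ s).esymm 2 = s.esymm 2 + a * s.esymm 1 := esymm_cons a s 1
      rw [Multiset.map_cons, Multiset.sum_cons, ih, Multiset.sum_cons, h2, esymm_one']
      ring

lemma esymm_inv (s : Multiset ℝ) (h0 : ∀ x ∈ s, x ≠ 0) {j : ℕ} (hj : j ≤ Multiset.card s) :
    s.prod * (s.map Inv.inv).esymm j = s.esymm (Multiset.card s - j) := by
  induction s using Multiset.induction generalizing j with
  | empty =>
      simp only [Multiset.card_zero, Nat.le_zero] at hj
      subst hj
      simp [esymm_zero']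
  | cons a s ih =>
      have ha : a ≠ 0 := h0 a (Multiset.mem_cons_self a s)
      have hs : ∀ x ∈ s, x ≠ 0 := fun x hx => h0 x (Multiset.mem_cons_of_mem hx)
      rw [Multiset.card_cons] at hj
      rcases j with _ | j
      · rw [esymm_zero', mul_one, Nat.sub_zero]
        exact (esymm_card (a ::ₘ s)).symm
      · rw [Multiset.map_cons, esymm_cons, Multiset.prod_cons]
        rcases Nat.lt_or_ge (Multiset.card s) (j+1) with hc | hc
        · -- here j = card s
          have hcs : j = Multiset.card s := by omega
          have hthis := ih hs (j := j) (by omega)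
          have h1 : s.esymm (Multiset.card s - j) = 1 := by
            rw [hcs, Nat.sub_self, esymm_zero']
          rw [h1] at hthis
          rw [esymm_eq_zero_of_card_lt (by rw [Multiset.card_map]; omega), zero_add]
          have hr : Multiset.card (a ::ₘ s) - (j+1) = 0 := by rw [Multiset.card_cons]; omega
          rw [hr, esymm_zero']
          calc a * s.prod * (a⁻¹ * (s.map Inv.inv).esymm j)
              = (a * a⁻¹) * (s.prod * (s.map Inv.inv).esymm j) := by ring
            _ = 1 := by rw [mul_inv_cancel₀ ha, hthis, one_mul]
        · have h1 := ih hs (j := j+1) hc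
          have h2 := ih hs (j := j) (by omega)
          have hcc : Multiset.card (a ::ₘ s) - (j+1) = (Multiset.card s - (j+1)) + 1 := by
            rw [Multiset.card_cons]; omega
          rw [hcc, esymm_cons]
          have e1 : Multiset.card s - j = Multiset.card s - (j+1) + 1 := by omega
          rw [e1] at h2
          calc a * s.prod * ((s.map Inv.inv).esymm (j+1) + a⁻¹ * (s.map Inv.inv).esymm j)
              = a * (s.prod * (s.map Inv.inv).esymm (j+1))
                + (a * a⁻¹) * (s.prod * (s.map Inv.inv).esymm j) := by ring
            _ = s.esymm (Multiset.card s - (j+1) + 1) + a * s.esymm (Multiset.card s - (j+1)) := by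
                rw [h1, mul_inv_cancel₀ ha, one_mul, h2]; ring


/-! ### Newton's inequality special case -/

lemma P_eq_prod_X_sub_C (s : Multiset ℝ) :
    P s = ((s.map Neg.neg).map (fun a => X - C a)).prod := by
  rw [P, Multiset.map_map]
  congr 1
  apply Multiset.map_congr rfl
  intro r _
  simp [sub_neg_eq_add, Function.comp_apply, map_neg]

lemma P_roots_card (s : Multiset ℝ) : Multiset.card (P s).roots = (P s).natDegree := by
  rw [P_eq_prod_X_sub_C, Polynomial.roots_multiset_prod_X_sub_C,
    natDegree_multiset_prod_X_sub_C_eq_card]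

lemma iter_deriv_real_rooted (p : ℝ[X]) (hp : Multiset.card p.roots = p.natDegree) (d : ℕ)
    (hd : d ≤ p.natDegree) :
    Multiset.card (derivative^[d] p).roots = (derivative^[d] p).natDegree ∧
      (derivative^[d] p).natDegree = p.natDegree - d := by
  induction d with
  | zero => exact ⟨by simpa using hp, by simp⟩
  | succ d ih =>
      obtain ⟨h1, h2⟩ := ih (by omega)
      set q := derivative^[d] p with hq
      have hiter : derivative^[d+1] p = derivative q := Function.iterate_succ_apply' _ _ _
      have hle : Multiset.card q.roots ≤ Multiset.card (derivative q).roots + 1 :=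
        Polynomial.card_roots_le_derivative q
      have hnd : (derivative q).natDegree ≤ q.natDegree - 1 := natDegree_derivative_le q
      have hcr : Multiset.card (derivative q).roots ≤ (derivative q).natDegree :=
        card_roots' _
      rw [hiter]
      omega

lemma newton_special (s : Multiset ℝ) (m : ℕ) (hm : 2 ≤ m)
    (h2 : 0 < s.esymm (m-2)) (h1 : s.esymm (m-1) = 0) : s.esymm m ≤ 0 := by
  obtain ⟨w, rfl⟩ : ∃ w, m = w + 2 := ⟨m - 2, by omega⟩
  simp only [Nat.add_sub_cancel] at h2
  have h1' : s.esymm (w+1) = 0 := by simpa using h1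
  by_contra hpos
  push_neg at hpos
  set N := Multiset.card s with hN
  rcases Nat.lt_or_ge N (w+2) with hNm | hNm
  · rw [esymm_eq_zero_of_card_lt (by omega)] at hpos
    exact absurd hpos (lt_irrefl 0)
  -- now w + 2 ≤ N
  set d := N - (w+2) with hd
  set q := derivative^[d] (P s) with hq
  have hPnd : (P s).natDegree = N := P_natDegree s
  obtain ⟨hql, hqd⟩ := iter_deriv_real_rooted (P s) (P_roots_card s) d (by omega)
  rw [hPnd] at hqd
  have hqdeg : q.natDegree = w + 2 := by rw [hqd]; omega
  have hsplits : Splits q := splits_iff_card_roots.mpr hql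
  -- coefficients of q
  have hcoeff : ∀ i, i ≤ w + 2 → q.coeff i =
      ((i + d).descFactorial d : ℝ) * s.esymm (w + 2 - i) := by
    intro i hi
    rw [hq, coeff_iterate_derivative, nsmul_eq_mul]
    congr 1
    have : i + d = N - (w + 2 - i) := by omega
    rw [this, P_coeff s (by omega)]
  have hlead : q.leadingCoeff = ((w + 2 + d).descFactorial d : ℝ) := by
    rw [Polynomial.leadingCoeff, hqdeg, hcoeff (w+2) le_rfl, Nat.sub_self, esymm_zero', mul_one]
  have hleadpos : 0 < q.leadingCoeff := by
    rw [hlead]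
    have : (w + 2 + d).descFactorial d ≠ 0 := by
      rw [Ne, Nat.descFactorial_eq_zero_iff_lt]; omega
    exact_mod_cast Nat.pos_of_ne_zero this
  -- roots of q
  set ρ := q.roots with hρ
  have hρcard : Multiset.card ρ = w + 2 := by rw [hρ, hql, hqdeg]
  have hfact : q = C q.leadingCoeff * (ρ.map fun a => X - C a).prod :=
    hsplits.eq_prod_roots
  have hcoeffρ : ∀ i, i ≤ w + 2 → q.coeff i =
      q.leadingCoeff * ((-1)^(w + 2 - i) * ρ.esymm (w + 2 - i)) := by
    intro i hi
    conv_lhs => rw [hfact]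
    rw [Polynomial.coeff_C_mul, Multiset.prod_X_sub_C_coeff ρ (by omega), hρcard]
  -- extract the three relations
  have hD : ∀ i : ℕ, (0:ℝ) < ((i + d).descFactorial d : ℝ) := by
    intro i
    have : (i + d).descFactorial d ≠ 0 := by
      rw [Ne, Nat.descFactorial_eq_zero_iff_lt]; omega
    exact_mod_cast Nat.pos_of_ne_zero this
  have e1 : ρ.esymm (w+1) = 0 := by
    have := (hcoeffρ 1 (by omega)).symm.trans (hcoeff 1 (by omega))
    have h21 : w + 2 - 1 = w + 1 := by omega
    rw [h21, h1', mul_zero] at this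
    have hne : q.leadingCoeff * (-1:ℝ)^(w+1) ≠ 0 := by
      apply mul_ne_zero (ne_of_gt hleadpos)
      positivity
    have : q.leadingCoeff * (-1:ℝ)^(w+1) * ρ.esymm (w+1) = 0 := by linarith [this]
    exact (mul_eq_zero.mp this).resolve_left hne
  have e2 : 0 < (-1:ℝ)^w * ρ.esymm w := by
    have := (hcoeffρ 2 (by omega)).symm.trans (hcoeff 2 (by omega))
    have h22 : w + 2 - 2 = w := by omega
    rw [h22] at this
    have hr : 0 < ((2 + d).descFactorial d : ℝ) * s.esymm w := mul_pos (hD 2) h2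
    rw [← this] at hr
    nlinarith [hleadpos]
  have e0 : 0 < (-1:ℝ)^(w+2) * ρ.esymm (w+2) := by
    have := (hcoeffρ 0 (by omega)).symm.trans (hcoeff 0 (by omega))
    have h20 : w + 2 - 0 = w + 2 := by omega
    rw [h20] at this
    have hr : 0 < ((0 + d).descFactorial d : ℝ) * s.esymm (w+2) := mul_pos (hD 0) hpos
    rw [← this] at hr
    nlinarith [hleadpos]
  have hprod : ρ.esymm (w+2) = ρ.prod := by rw [← hρcard, esymm_card]
  -- all roots nonzero
  have hρne : ∀ x ∈ ρ, x ≠ 0 := by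
    intro x hx hx0
    have : ρ.prod = 0 := by
      rw [Multiset.prod_eq_zero_iff]
      exact hx0 ▸ hx
    rw [hprod, this, mul_zero] at e0
    exact lt_irrefl 0 e0
  -- inverse multiset
  set u := ρ.map Inv.inv with hu
  have hprodne : ρ.prod ≠ 0 := fun h => hρne 0 (Multiset.prod_eq_zero_iff.mp h) rfl
  have hinv1 : ρ.prod * u.esymm 1 = ρ.esymm (w+1) := by
    have := esymm_inv ρ hρne (j := 1) (by omega)
    rw [hρcard] at this
    simpa using this
  have hinv2 : ρ.prod * u.esymm 2 = ρ.esymm w := by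
    have := esymm_inv ρ hρne (j := 2) (by omega)
    rw [hρcard] at this
    simpa using this
  have husum : u.sum = 0 := by
    rw [e1] at hinv1
    have := mul_eq_zero.mp hinv1
    rcases this with h | h
    · exact absurd h hprodne
    · rw [← esymm_one', h]
  have hsumsq : (u.map (fun x => x^2)).sum = -(2 * u.esymm 2) := by
    rw [sum_sq_eq, husum]
    ring
  have hsumsqpos : 0 < (u.map (fun x => x^2)).sum := by
    have hune : u ≠ 0 := by
      rw [hu, ← Multiset.card_pos]
      rw [Multiset.card_map, hρcard]
      omega
    obtain ⟨x, hx⟩ := Multiset.exists_mem_of_ne_zero hune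
    have hxne : x ≠ 0 := by
      rw [hu, Multiset.mem_map] at hx
      obtain ⟨y, hy, rfl⟩ := hx
      exact inv_ne_zero (hρne y hy)
    have hmem : x^2 ∈ u.map (fun x => x^2) := Multiset.mem_map_of_mem _ hx
    have hle := Multiset.single_le_sum (fun y hy => by
      rw [Multiset.mem_map] at hy
      obtain ⟨z, _, rfl⟩ := hy
      positivity) _ hmem
    have : 0 < x^2 := by positivity
    linarith
  have hu2neg : u.esymm 2 < 0 := by linarith [hsumsq ▸ hsumsqpos]
  -- contradiction
  have hsign : 0 < (-1:ℝ)^w * ρ.prod * u.esymm 2 := by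
    rw [mul_assoc, hinv2]
    exact e2
  have hprodsign : (-1:ℝ)^w * ρ.prod < 0 := by
    nlinarith [hsign, hu2neg]
  have hpw : ((-1:ℝ))^(w+2) = (-1:ℝ)^w := by rw [pow_add]; norm_num
  rw [hpw, hprod] at e0
  linarith


/-! ### The Garding cone -/

def Gam (m : ℕ) (s : Multiset ℝ) : Prop := ∀ j, 1 ≤ j → j ≤ m → 0 < s.esymm j

lemma Gam.nonneg {m : ℕ} {s : Multiset ℝ} (h : Gam m s) {j : ℕ} (hj : j ≤ m) :
    0 ≤ s.esymm j := by
  rcases Nat.eq_zero_or_pos j with h0 | h0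
  · rw [h0, esymm_zero']; norm_num
  · exact le_of_lt (h j h0 hj)

lemma Gam.shift {m : ℕ} {s : Multiset ℝ} (h : Gam m s) (hm : m ≤ Multiset.card s)
    {t : ℝ} (ht : 0 ≤ t) : Gam m (s.map (· + t)) := by
  intro j hj1 hjm
  rw [esymm_shift s j (by omega) t]
  have h0 : ∀ l ∈ Finset.range (j+1),
      0 ≤ ((l + (Multiset.card s - j)).choose (Multiset.card s - j) : ℝ)
        * s.esymm (j - l) * t^l := by
    intro l _
    have := h.nonneg (j := j - l) (by omega)
    positivity
  have hmem : (0:ℕ) ∈ Finset.range (j+1) := by simp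
  apply Finset.sum_pos' h0
  refine ⟨0, hmem, ?_⟩
  simp only [Nat.zero_add, pow_zero, mul_one, Nat.choose_self]
  rw [Nat.sub_zero]
  simpa using h j hj1 hjm

lemma esymm_pos_of_cons_nonpos {x : ℝ} (hx : x ≤ 0) {s : Multiset ℝ} {m : ℕ}
    (hG : Gam m (x ::ₘ s)) :
    ∀ j, j ≤ m → j ≤ Multiset.card s → 1 ≤ j → 0 < s.esymm j := by
  intro j
  induction j using Nat.strong_induction_on with
  | _ j ih =>
    intro hjm hjc hj1
    obtain ⟨i, rfl⟩ : ∃ i, j = i + 1 := ⟨j-1, by omega⟩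
    have hGj := hG (i+1) (by omega) (by omega)
    rw [esymm_cons] at hGj
    have hprev : 0 ≤ s.esymm i := by
      rcases Nat.eq_zero_or_pos i with h0 | h0
      · rw [h0, esymm_zero']; norm_num
      · exact le_of_lt (ih i (by omega) (by omega) (by omega) h0)
    nlinarith

lemma Gam_of_cons_min {x : ℝ} {s : Multiset ℝ} {m : ℕ} (hxmin : ∀ y ∈ s, x ≤ y)
    (hG : Gam m (x ::ₘ s)) (hm : m ≤ Multiset.card s) : Gam m s := by
  rcases le_or_gt x 0 with hx | hx
  · intro j hj1 hjm
    exact esymm_pos_of_cons_nonpos hx hG j hjm (by omega) hj1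
  · intro j hj1 hjm
    exact esymm_pos (fun y hy => lt_of_lt_of_le hx (hxmin y hy)) (by omega)

/-! ### Sorted lists: positivity of the m-th entry -/

lemma coe_append_singleton (l : List ℝ) (x : ℝ) :
    ((l ++ [x] : List ℝ) : Multiset ℝ) = x ::ₘ (l : Multiset ℝ) := by
  simp [Multiset.cons_swap]

lemma get_pos_of_Gam (m : ℕ) (hm1 : 1 ≤ m) :
    ∀ (l : List ℝ), l.Pairwise (· ≥ ·) → Gam m ↑l → (hm : m ≤ l.length) →
      0 < l[m-1]'(by omega) := by
  intro l
  induction l using List.reverseRecOn with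
  | nil => intro _ _ hm; simp at hm; omega
  | append_singleton l x ih =>
    intro hsort hG hm
    have hsort' : l.Pairwise (· ≥ ·) ∧ ∀ y ∈ l, y ≥ x := by
      rw [List.pairwise_append] at hsort
      exact ⟨hsort.1, fun y hy => hsort.2.2 y hy x (by simp)⟩
    have hcoe := coe_append_singleton l x
    rcases le_or_gt x 0 with hx | hx
    · have hxmin : ∀ y ∈ (l : Multiset ℝ), x ≤ y := fun y hy => hsort'.2 y (by simpa using hy)
      have hGx : Gam m (x ::ₘ (l : Multiset ℝ)) := by rwa [hcoe] at hG
      rcases Nat.lt_or_ge l.length m with hlen | hlen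
      · -- m = l.length + 1 : contradiction
        have hmeq : m = l.length + 1 := by
          have hlx : (l ++ [x]).length = l.length + 1 := by simp
          omega
        have hz : (l : Multiset ℝ).esymm m = 0 :=
          esymm_eq_zero_of_card_lt (by rw [Multiset.coe_card]; omega)
        have hpos' : 0 < (l : Multiset ℝ).esymm (m-1) := by
          rcases Nat.eq_zero_or_pos (m-1) with h0 | h0
          · rw [h0, esymm_zero']; norm_num
          · exact esymm_pos_of_cons_nonpos hx hGx (m-1) (by omega)
              (by rw [Multiset.coe_card]; omega) h0
        have hGm := hGx m hm1 le_rfl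
        obtain ⟨i, hieq⟩ : ∃ i, m = i + 1 := ⟨m-1, by omega⟩
        rw [hieq, esymm_cons] at hGm
        rw [hieq] at hz
        have : m - 1 = i := by omega
        rw [this] at hpos'
        nlinarith
      · -- recurse
        have hGl : Gam m (l : Multiset ℝ) :=
          Gam_of_cons_min hxmin hGx (by rw [Multiset.coe_card]; omega)
        have := ih hsort'.1 hGl hlen
        rwa [List.getElem_append_left (by omega)]
    · -- x > 0 : every entry is positive
      have hmem : (l ++ [x])[m-1]'(by omega) ∈ l ++ [x] := List.getElem_mem _
      rcases List.mem_append.mp hmem with h | h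
      · exact lt_of_lt_of_le hx (hsort'.2 _ h)
      · simp at h
        rw [h]
        exact hx

/-! ### Removing the largest entry -/

lemma sorted_map_add {l : List ℝ} (hs : l.Pairwise (· ≥ ·)) (t : ℝ) :
    (l.map (· + t)).Pairwise (· ≥ ·) :=
  List.Pairwise.map _ (fun {a b} (hab : a ≥ b) => by simp only [ge_iff_le, add_le_add_iff_right]; exact hab) hs

lemma tail_Gam : ∀ m : ℕ, ∀ l : List ℝ, l.Pairwise (· ≥ ·) → 1 ≤ m → m ≤ l.length →
    Gam m ↑l → Gam (m-1) ↑(l.tail) := by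
  intro m
  induction m using Nat.strong_induction_on with
  | _ m ih =>
    intro l hsort hm1 hml hG j hj1 hjm
    rcases Nat.lt_or_ge j (m-1) with hjlt | hjge
    · -- use the induction hypothesis at level m-1
      have hm2 : 2 ≤ m := by omega
      exact ih (m-1) (by omega) l hsort (by omega) (by omega)
        (fun i hi1 him => hG i hi1 (by omega)) j hj1 (by omega)
    · -- j = m - 1, the top case
      have hjeq : j = m - 1 := by omega
      have hm2 : 2 ≤ m := by omega
      obtain ⟨a, tl, rfl⟩ := List.exists_cons_of_ne_nil
        (List.ne_nil_of_length_pos (by omega) : l ≠ [])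
      have hlenc : (a :: tl).length = tl.length + 1 := by simp
      have hsort_tl : tl.Pairwise (· ≥ ·) := hsort.of_cons
      have hamax : ∀ y ∈ tl, y ≤ a := fun y hy => (List.pairwise_cons.mp hsort).1 y hy
      -- the path function
      set f : ℝ → ℝ := fun t => (((tl : Multiset ℝ)).map (· + t)).esymm (m-1) with hf
      have hne : ∀ t, 0 ≤ t → f t ≠ 0 := by
        intro t ht h0
        set l' := (a :: tl).map (· + t) with hl'
        have hl'sort : l'.Pairwise (· ≥ ·) := sorted_map_add hsort t
        have hl'coe : (l' : Multiset ℝ) = ((a :: tl : List ℝ) : Multiset ℝ).map (· + t) := by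
          rw [hl', ← Multiset.map_coe]
        have hG' : Gam m ↑l' := by
          rw [hl'coe]
          exact hG.shift (by rw [Multiset.coe_card]; simpa using (by omega : m ≤ tl.length + 1)) ht
        have hν : ((tl.map (· + t) : List ℝ) : Multiset ℝ)
            = ((tl : Multiset ℝ)).map (· + t) := by rw [← Multiset.map_coe]
        have hσ2 : 0 < (((tl : Multiset ℝ)).map (· + t)).esymm (m-2) := by
          rcases Nat.eq_zero_or_pos (m-2) with h02 | h02
          · rw [h02, esymm_zero']; norm_num
          · have := ih (m-1) (by omega) l' hl'sort (by omega)
              (by simp only [hl', List.length_map]; omega)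
              (fun i' hi1' him' => hG' i' hi1' (by omega)) (m-2) h02 (by omega)
            have htail : l'.tail = tl.map (· + t) := by rw [hl']; simp
            rw [htail, hν] at this
            exact this
        have hnewton := newton_special (((tl : Multiset ℝ)).map (· + t)) m hm2 hσ2 h0
        have hGm := hG' m hm1 le_rfl
        have hl'cons : (l' : Multiset ℝ) = (a + t) ::ₘ (((tl : Multiset ℝ)).map (· + t)) := by
          rw [hl']
          simp only [List.map_cons, ← Multiset.cons_coe]
          rw [hν]
        obtain ⟨i, hieq⟩ : ∃ i, m = i + 1 := ⟨m-1, by omega⟩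
        rw [hl'cons, hieq, esymm_cons] at hGm
        have hi : i = m - 1 := by omega
        have hm1e : i = m - 1 ∧ i + 1 = m := by omega
        rw [hm1e.2] at hGm
        rw [hm1e.1] at hGm
        have h0' : (Multiset.map (fun x => x + t) (tl : Multiset ℝ)).esymm (m-1) = 0 := by
          simpa [hf] using h0
        rw [h0', mul_zero, add_zero] at hGm
        linarith [hnewton]
      -- continuity
      have hcont : Continuous f := by
        have hfeq : f = fun t => ∑ i ∈ Finset.range ((m-1)+1),
            ((i + (Multiset.card (tl : Multiset ℝ) - (m-1))).choose
              (Multiset.card (tl : Multiset ℝ) - (m-1)) : ℝ)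
              * (tl : Multiset ℝ).esymm ((m-1) - i) * t^i := by
          funext t
          exact esymm_shift _ (m-1) (by rw [Multiset.coe_card]; omega) t
        rw [hfeq]
        apply continuous_finset_sum
        intro i _
        exact (continuous_const.mul continuous_const).mul (continuous_pow i)
      -- a positive value
      set T : ℝ := 1 + ((tl : Multiset ℝ).map (fun y => |y|)).sum with hT
      have habs_nonneg : 0 ≤ ((tl : Multiset ℝ).map (fun y => |y|)).sum :=
        Multiset.sum_nonneg (by
          intro y hy
          rw [Multiset.mem_map] at hy
          obtain ⟨z, _, rfl⟩ := hy
          positivity)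
      have hT0 : 0 ≤ T := by rw [hT]; linarith
      have hfT : 0 < f T := by
        rw [hf]
        apply esymm_pos
        · intro y hy
          rw [Multiset.mem_map] at hy
          obtain ⟨z, hz, rfl⟩ := hy
          have : |z| ≤ ((tl : Multiset ℝ).map (fun y => |y|)).sum :=
            Multiset.single_le_sum (by
              intro w hw
              rw [Multiset.mem_map] at hw
              obtain ⟨v, _, rfl⟩ := hw
              positivity) _ (Multiset.mem_map_of_mem _ hz)
          have hza : -z ≤ |z| := neg_le_abs z
          rw [hT]
          linarith
        · rw [Multiset.card_map, Multiset.coe_card]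
          omega
      -- conclude f 0 > 0 by the intermediate value theorem
      have hf0 : 0 < f 0 := by
        rcases lt_trichotomy (f 0) 0 with hlt | heq | hgt
        · exfalso
          have hsub : Set.Icc (f 0) (f T) ⊆ f '' Set.Icc 0 T :=
            intermediate_value_Icc hT0 hcont.continuousOn
          have : (0:ℝ) ∈ Set.Icc (f 0) (f T) := ⟨le_of_lt hlt, le_of_lt hfT⟩
          obtain ⟨c, hc, hfc⟩ := hsub this
          exact hne c hc.1 hfc
        · exact absurd heq (hne 0 le_rfl)
        · exact hgt
      -- translate back
      have hf0' : 0 < ((tl : Multiset ℝ)).esymm (m-1) := by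
        have heq : ((tl : Multiset ℝ)).map (· + 0) = (tl : Multiset ℝ) := by simp
        have := hf0
        rw [hf] at this
        simp only [] at this
        rwa [heq] at this
      simpa [hjeq] using hf0'

/-! ### The main inequality -/

lemma main_ineq : ∀ k : ℕ, ∀ l : List ℝ, l.Pairwise (· ≥ ·) → k + 1 ≤ l.length →
    Gam (k+1) ↑l → (l.take k).prod ≤ (l : Multiset ℝ).esymm k := by
  intro k
  induction k with
  | zero => intro l _ _ _; simp [esymm_zero']
  | succ k ihk =>
    intro l hsort hlen hG
    obtain ⟨a, tl, rfl⟩ := List.exists_cons_of_ne_nil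
      (List.ne_nil_of_length_pos (by omega) : l ≠ [])
    have hsort_tl : tl.Pairwise (· ≥ ·) := hsort.of_cons
    -- head is positive
    have hmax : ∀ y ∈ (a :: tl : List ℝ), y ≤ a := by
      intro y hy
      rcases List.mem_cons.mp hy with rfl | hy'
      · exact le_rfl
      · exact (List.pairwise_cons.mp hsort).1 y hy'
    have hsum := hG 1 le_rfl (by omega)
    rw [esymm_one'] at hsum
    have hsum_le : ((a :: tl : List ℝ) : Multiset ℝ).sum ≤ (a :: tl).length • a := by
      rw [Multiset.sum_coe]
      exact List.sum_le_card_nsmul _ _ hmax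
    have ha : 0 < a := by
      by_contra hale
      push_neg at hale
      rw [nsmul_eq_mul] at hsum_le
      nlinarith [hsum, hsum_le, (by positivity : (0:ℝ) ≤ (((a :: tl).length : ℕ) : ℝ))]
    -- tail is in the cone Γ_{k+1}
    have hGtl : Gam (k+1) ↑tl := by
      have := tail_Gam (k+2) (a :: tl) hsort (by omega) (by omega) hG
      simpa using this
    -- apply the induction hypothesis
    have hIH := ihk tl hsort_tl (by simp at hlen ⊢; omega) hGtl
    have htl_pos : 0 < (tl : Multiset ℝ).esymm (k+1) := hGtl (k+1) (by omega) le_rfl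
    have hrec : ((a :: tl : List ℝ) : Multiset ℝ).esymm (k+1)
        = (tl : Multiset ℝ).esymm (k+1) + a * (tl : Multiset ℝ).esymm k := by
      rw [← Multiset.cons_coe, esymm_cons]
    rw [hrec]
    have htake : ((a :: tl).take (k+1)).prod = a * (tl.take k).prod := by
      simp
    rw [htake]
    nlinarith [hIH, htl_pos, ha]


/-! ### Bridging to `Fin n` -/

lemma prod_take_ge_pow : ∀ (l : List ℝ) (c : ℝ), 0 < c → (∀ y ∈ l, c ≤ y) →
    c ^ l.length ≤ l.prod := by
  intro l
  induction l with
  | nil => intro c _ _; simp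
  | cons a tl ih =>
    intro c hc h
    have ha : c ≤ a := h a (by simp)
    have htl := ih c hc (fun y hy => h y (List.mem_cons_of_mem _ hy))
    have hpow : (0:ℝ) < c ^ tl.length := by positivity
    calc c ^ (a :: tl).length = c * c ^ tl.length := by rw [List.length_cons]; ring
      _ ≤ a * tl.prod := by
          apply mul_le_mul ha htl (le_of_lt hpow) (le_trans (le_of_lt hc) ha)
      _ = (a :: tl).prod := by simp

end GardingAux

/-- The `m`-th elementary symmetric polynomial of `x : Fin n → ℝ`. -/
noncomputable def esymm (n m : ℕ) (x : Fin n → ℝ) : ℝ :=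
  ∑ s ∈ Finset.powersetCard m (Finset.univ : Finset (Fin n)), ∏ i ∈ s, x i

namespace GardingAux

lemma esymm_eq_multiset (n m : ℕ) (x : Fin n → ℝ) :
    esymm n m x = ((List.ofFn x : List ℝ) : Multiset ℝ).esymm m := by
  rw [← Fin.univ_val_map x]
  exact (Finset.esymm_map_val x Finset.univ m).symm

lemma prod_filter_eq_take (n : ℕ) (x : Fin n → ℝ) :
    ∀ k, k ≤ n →
      ∏ i ∈ Finset.univ.filter (fun i : Fin n => (i : ℕ) < k), x i
        = ((List.ofFn x).take k).prod := by
  intro k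
  induction k with
  | zero => intro _; simp
  | succ k ih =>
    intro hk
    have hkn : k < n := by omega
    have hfilter : Finset.univ.filter (fun i : Fin n => (i : ℕ) < k + 1)
        = insert (⟨k, hkn⟩ : Fin n) (Finset.univ.filter (fun i : Fin n => (i : ℕ) < k)) := by
      ext i
      simp only [Finset.mem_filter, Finset.mem_insert, Finset.mem_univ, true_and]
      constructor
      · intro h
        rcases Nat.lt_or_ge (i : ℕ) k with h' | h'
        · exact Or.inr h'
        · left
          have : (i : ℕ) = k := by omega
          exact Fin.ext this
      · rintro (rfl | h)
        · simp
        · omega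
    rw [hfilter, Finset.prod_insert (by simp), ih (by omega)]
    have hlt : k < (List.ofFn x).length := by simp; omega
    rw [List.prod_take_succ _ k hlt]
    rw [List.getElem_ofFn]
    rw [mul_comm]

end GardingAux

theorem stmt0 (n k : ℕ) (hk : 1 ≤ k) (hkn : k ≤ n - 1)
    (lam : Fin n → ℝ)
    (hGamma : ∀ m, 1 ≤ m → m ≤ k + 1 → 0 < esymm n m lam)
    (hdec : ∀ i j : Fin n, i ≤ j → lam j ≤ lam i) :
    esymm n k lam ≥ ∏ i ∈ Finset.univ.filter (fun i : Fin n => (i : ℕ) < k), lam i ∧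
      (∏ i ∈ Finset.univ.filter (fun i : Fin n => (i : ℕ) < k), lam i) ≥
        lam ⟨k - 1, by omega⟩ ^ k := by
  open GardingAux in
  have hn : k + 1 ≤ n := by omega
  set L : List ℝ := List.ofFn lam with hL
  have hlen : L.length = n := by simp [hL]
  have hsorted : L.Pairwise (· ≥ ·) := by
    rw [hL, List.pairwise_ofFn]
    intro i j hij
    exact hdec i j (le_of_lt hij)
  have hGam : GardingAux.Gam (k+1) (L : Multiset ℝ) := by
    intro j hj1 hj2
    rw [← esymm_eq_multiset]
    exact hGamma j hj1 hj2
  have hGamk : GardingAux.Gam k (L : Multiset ℝ) := fun j hj1 hj2 => hGam j hj1 (by omega)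
  -- positivity of the k-th entry
  have hck : 0 < L[k-1]'(by omega) :=
    get_pos_of_Gam k hk L hsorted hGamk (by omega)
  have hc : 0 < lam ⟨k-1, by omega⟩ := by
    have hgetk : L[k-1]'(by omega) = lam ⟨k-1, by omega⟩ := by
      simp [hL]
    rwa [hgetk] at hck
  have hprod_take := prod_filter_eq_take n lam k (by omega)
  constructor
  · -- main inequality
    rw [esymm_eq_multiset, hprod_take, ← hL]
    exact main_ineq k L hsorted (by omega) hGam
  · -- product vs power
    rw [hprod_take, ← hL]
    have hmem : ∀ y ∈ L.take k, lam ⟨k-1, by omega⟩ ≤ y := by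
      intro y hy
      obtain ⟨i, hi, rfl⟩ := List.mem_iff_getElem.mp hy
      have hik : i < k := by
        have := List.length_take_le k L
        omega
      have hin : i < n := by omega
      have h2 : lam ⟨k-1, by omega⟩ ≤ lam ⟨i, hin⟩ := by
        apply hdec
        simp only [Fin.mk_le_mk]
        omega
      simpa [hL, List.getElem_take] using h2
    have hlen_take : (L.take k).length = k := by
      rw [List.length_take]
      omega
    have := prod_take_ge_pow (L.take k) _ hc hmem
    rw [hlen_take] at this
    exact this
end

section
/- Let λ ∈ Γ_k with λ₁ ≥ ⋯ ≥ λₙ, and suppose σ_k(λ) ≤ F for some F > 0. If K₀ > 0 satisfies (K₀/n)^k ≥ F, then λₙ + K₀ ≥ 0. -/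
namespace SigmaTools

open Polynomial

/-- The Γ-cone predicate for multisets: all elementary symmetric values up to level `m`
are positive. -/
def Gam (m : ℕ) (s : Multiset ℝ) : Prop := ∀ j, 1 ≤ j → j ≤ m → 0 < s.esymm j

lemma esymm_zero' (s : Multiset ℝ) : s.esymm 0 = 1 := by
  simp [Multiset.esymm, Multiset.powersetCard_zero_left]

lemma esymm_cons (a : ℝ) (s : Multiset ℝ) (j : ℕ) :
    (a ::ₘ s).esymm (j + 1) = s.esymm (j + 1) + a * s.esymm j := by
  simp only [Multiset.esymm, Multiset.powersetCard_cons, Multiset.map_add, Multiset.sum_add,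
    Multiset.map_map, Function.comp]
  congr 1
  rw [← Multiset.sum_map_mul_left]
  congr 1
  apply Multiset.map_congr rfl
  intro t _
  simp [Multiset.prod_cons]

lemma esymm_eq_zero_of_card_lt {s : Multiset ℝ} {j : ℕ} (h : Multiset.card s < j) :
    s.esymm j = 0 := by
  have hz : Multiset.powersetCard j s = 0 := by
    apply Multiset.eq_zero_of_forall_notMem
    intro t ht
    rw [Multiset.mem_powersetCard] at ht
    have := Multiset.card_le_card ht.1
    omega
  simp [Multiset.esymm, hz]

lemma Gam.mono {m m' : ℕ} {s : Multiset ℝ} (h : Gam m s) (hle : m' ≤ m) : Gam m' s :=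
  fun j h1 h2 => h j h1 (h2.trans hle)

lemma Gam.le_card {m : ℕ} {s : Multiset ℝ} (hm : 1 ≤ m) (h : Gam m s) : m ≤ Multiset.card s := by
  by_contra hc
  push_neg at hc
  have := h m hm le_rfl
  rw [esymm_eq_zero_of_card_lt hc] at this
  exact lt_irrefl 0 this

lemma esymm_nonneg {s : Multiset ℝ} (hs : ∀ x ∈ s, (0:ℝ) ≤ x) (j : ℕ) : 0 ≤ s.esymm j := by
  induction s using Multiset.induction generalizing j with
  | empty =>
    rcases j with _ | j
    · simp [esymm_zero']
    · rw [esymm_eq_zero_of_card_lt (by simp)]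
  | cons a s ih =>
    rcases j with _ | j
    · simp [esymm_zero']
    · rw [esymm_cons]
      have ha : 0 ≤ a := hs a (Multiset.mem_cons_self _ _)
      have h1 := ih (fun x hx => hs x (Multiset.mem_cons_of_mem hx)) (j+1)
      have h2 := ih (fun x hx => hs x (Multiset.mem_cons_of_mem hx)) j
      positivity

lemma esymm_pos_of_pos {s : Multiset ℝ} (hs : ∀ x ∈ s, (0:ℝ) < x) {j : ℕ}
    (hj : j ≤ Multiset.card s) : 0 < s.esymm j := by
  induction s using Multiset.induction generalizing j with
  | empty =>
    simp only [Multiset.card_zero, Nat.le_zero] at hj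
    simp [hj, esymm_zero']
  | cons a s ih =>
    rcases j with _ | j
    · simp [esymm_zero']
    · rw [esymm_cons]
      have ha : 0 < a := hs a (Multiset.mem_cons_self _ _)
      have hs' : ∀ x ∈ s, (0:ℝ) < x := fun x hx => hs x (Multiset.mem_cons_of_mem hx)
      have hj' : j ≤ Multiset.card s := by
        have := hj; rw [Multiset.card_cons] at this; omega
      have h2 := ih hs' hj'
      have h1 : 0 ≤ s.esymm (j+1) := esymm_nonneg (fun x hx => (hs' x hx).le) (j+1)
      nlinarith

lemma esymm_one' (s : Multiset ℝ) : s.esymm 1 = s.sum := by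
  rw [Multiset.esymm, Multiset.powersetCard_one, Multiset.map_map]
  simp [Function.comp]

lemma Gam.of_cons_neg {m : ℕ} {a : ℝ} {s : Multiset ℝ} (ha : a < 0) (h : Gam m (a ::ₘ s)) :
    Gam m s := by
  have key : ∀ j, j ≤ m → 0 < s.esymm j := by
    intro j
    induction j with
    | zero => intro _; simp [esymm_zero']
    | succ j ih =>
      intro hj
      have hprev := ih (by omega)
      have hcons := h (j+1) (by omega) hj
      rw [esymm_cons] at hcons
      nlinarith
  exact fun j _ hj => key j hj

lemma all_pos_of_card_eq {m : ℕ} {s : Multiset ℝ} (hm : 1 ≤ m) (h : Gam m s)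
    (hc : Multiset.card s = m) : ∀ x ∈ s, 0 < x := by
  intro x hx
  by_contra hneg
  push_neg at hneg
  have hsx : s = x ::ₘ s.erase x := (Multiset.cons_erase hx).symm
  have hcard' : Multiset.card (s.erase x) = m - 1 := by
    rw [Multiset.card_erase_of_mem hx, hc]; rfl
  have hzero : (s.erase x).esymm m = 0 := esymm_eq_zero_of_card_lt (by omega)
  rcases lt_or_eq_of_le hneg with hlt | heq
  · have hGam' : Gam m (s.erase x) := Gam.of_cons_neg hlt (hsx ▸ h)
    have := hGam' m hm le_rfl
    rw [hzero] at this; exact lt_irrefl 0 this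
  · subst heq
    have hm' := h m hm le_rfl
    rw [hsx] at hm'
    obtain ⟨m', rfl⟩ : ∃ m', m = m' + 1 := ⟨m - 1, by omega⟩
    rw [esymm_cons, zero_mul, add_zero] at hm'
    rw [esymm_eq_zero_of_card_lt (by omega)] at hm'
    exact lt_irrefl 0 hm'

/-- Top-window log-concavity of elementary symmetric functions (any real multiset). -/
lemma top_window : ∀ (R : Multiset ℝ) (N : ℕ), Multiset.card R = N + 2 →
    2 * R.esymm (N+2) * R.esymm N ≤ R.esymm (N+1) ^ 2 := by
  intro R
  induction R using Multiset.induction with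
  | empty => intro N h; simp at h
  | cons r R ih =>
    intro N h
    rw [Multiset.card_cons] at h
    match N with
    | 0 =>
      obtain ⟨x, rfl⟩ := Multiset.card_eq_one.mp (by omega : Multiset.card R = 1)
      have e2 : ({x} : Multiset ℝ).esymm 2 = 0 := esymm_eq_zero_of_card_lt (by simp)
      have e1 : ({x} : Multiset ℝ).esymm 1 = x := by
        rw [show ({x} : Multiset ℝ) = x ::ₘ 0 from rfl, esymm_cons]
        simp [esymm_zero', esymm_eq_zero_of_card_lt (show Multiset.card (0 : Multiset ℝ) < 1 by simp)]
      have e0 : ({x} : Multiset ℝ).esymm 0 = 1 := esymm_zero' _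
      have c2 : (r ::ₘ ({x} : Multiset ℝ)).esymm (0 + 2)
          = ({x} : Multiset ℝ).esymm 2 + r * ({x} : Multiset ℝ).esymm 1 := esymm_cons r {x} 1
      have c1 : (r ::ₘ ({x} : Multiset ℝ)).esymm (0 + 1)
          = ({x} : Multiset ℝ).esymm 1 + r * ({x} : Multiset ℝ).esymm 0 := esymm_cons r {x} 0
      rw [c2, c1, e2, e1, e0, esymm_zero']
      norm_num
      nlinarith [sq_nonneg (r - x)]
    | Nat.succ N' =>
      have hR : Multiset.card R = N' + 2 := by omega
      have IH := ih N' hR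
      have h3 : R.esymm (N' + 3) = 0 := esymm_eq_zero_of_card_lt (by omega)
      have c1 : (r ::ₘ R).esymm (N' + 1 + 2) = R.esymm (N' + 3) + r * R.esymm (N' + 2) :=
        esymm_cons r R (N' + 2)
      have c2 : (r ::ₘ R).esymm (N' + 1 + 1) = R.esymm (N' + 2) + r * R.esymm (N' + 1) :=
        esymm_cons r R (N' + 1)
      have c3 : (r ::ₘ R).esymm (N' + 1) = R.esymm (N' + 1) + r * R.esymm N' :=
        esymm_cons r R N'
      rw [c1, c2, c3, h3]
      nlinarith [sq_nonneg (R.esymm (N' + 2)), sq_nonneg r,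
        mul_nonneg (sq_nonneg r) (sub_nonneg.mpr IH)]

lemma descFactorial_cast_pos {a b : ℕ} (h : b ≤ a) : (0:ℝ) < (a.descFactorial b : ℝ) := by
  have : a.descFactorial b ≠ 0 := by
    rw [Ne, Nat.descFactorial_eq_zero_iff_lt]; omega
  exact_mod_cast Nat.pos_of_ne_zero this

lemma natDegree_iterate_derivative_le (j : ℕ) (p : ℝ[X]) :
    (derivative^[j] p).natDegree ≤ p.natDegree - j := by
  induction j generalizing p with
  | zero => simp
  | succ j ih =>
    rw [Function.iterate_succ_apply']
    have h1 : (derivative (derivative^[j] p)).natDegree ≤ (derivative^[j] p).natDegree - 1 :=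
      natDegree_derivative_le _
    have h2 := ih p
    omega

lemma card_roots_le_iterate_derivative (j : ℕ) (p : ℝ[X]) :
    Multiset.card p.roots ≤ Multiset.card (derivative^[j] p).roots + j := by
  induction j generalizing p with
  | zero => simp
  | succ j ih =>
    rw [Function.iterate_succ_apply']
    have h1 := ih p
    have h2 := card_roots_le_derivative (derivative^[j] p)
    omega

lemma newton_special (v : Multiset ℝ) (m' : ℕ) (hcard : m' + 2 ≤ Multiset.card v)
    (h1 : v.esymm (m'+1) = 0) (h2 : 0 < v.esymm m') : v.esymm (m'+2) ≤ 0 := by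
  by_contra hpos
  push_neg at hpos
  set N := Multiset.card v with hN
  set P : ℝ[X] := (v.map fun x => X + C x).prod with hPdef
  have hPdeg : P.natDegree = N := by
    rw [hPdef, natDegree_multiset_prod_of_monic]
    · rw [Multiset.map_map]
      have heq : Multiset.map (natDegree ∘ fun x => X + C x) v = Multiset.map (fun _ => 1) v :=
        Multiset.map_congr rfl (fun x _ => by simp [natDegree_X_add_C])
      rw [heq, Multiset.map_const', Multiset.sum_replicate, smul_eq_mul, mul_one]
    · intro f hf
      obtain ⟨x, _, rfl⟩ := Multiset.mem_map.mp hf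
      exact monic_X_add_C x
  have hProots : P.roots = v.map (fun x => -x) := by
    have heq : P = ((v.map fun x => -x).map fun a => X - C a).prod := by
      rw [hPdef, Multiset.map_map]
      congr 1
      apply Multiset.map_congr rfl
      intro x _
      simp [sub_neg_eq_add]
    rw [heq, roots_multiset_prod_X_sub_C]
  have hPc : ∀ j ≤ N, P.coeff (N - j) = v.esymm j := by
    intro j hj
    rw [hPdef, Multiset.prod_X_add_C_coeff v (by omega : N - j ≤ Multiset.card v)]
    congr 1
    omega
  set k₀ := N - (m' + 2) with hk₀
  set Q : ℝ[X] := derivative^[k₀] P with hQdef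
  have hQcoeff : ∀ i, Q.coeff i = ((i + k₀).descFactorial k₀ : ℝ) * P.coeff (i + k₀) := by
    intro i
    rw [hQdef, coeff_iterate_derivative, nsmul_eq_mul]
  have hc0 : Q.coeff 0 = (k₀.descFactorial k₀ : ℝ) * v.esymm (m'+2) := by
    have h := hPc (m'+2) (by omega)
    rw [hQcoeff, zero_add, show k₀ = N - (m'+2) from hk₀, h]
  have hc1 : Q.coeff 1 = 0 := by
    have h := hPc (m'+1) (by omega)
    rw [hQcoeff, show 1 + k₀ = N - (m'+1) by omega, h, h1, mul_zero]
  have hc2 : Q.coeff 2 = (((2:ℕ) + k₀).descFactorial k₀ : ℝ) * v.esymm m' := by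
    have h := hPc m' (by omega)
    rw [hQcoeff, show 2 + k₀ = N - m' by omega, h]
  have hctop : Q.coeff (m' + 2) = (N.descFactorial k₀ : ℝ) := by
    have h := hPc 0 (by omega)
    rw [Nat.sub_zero, esymm_zero'] at h
    rw [hQcoeff, show m' + 2 + k₀ = N by omega, h, mul_one]
  have hdtop : (0:ℝ) < (N.descFactorial k₀ : ℝ) := descFactorial_cast_pos (by omega)
  have hQne : Q ≠ 0 := fun h => by
    rw [h, coeff_zero] at hctop
    linarith
  have hQdeg : Q.natDegree = m' + 2 := by
    apply le_antisymm
    · have h := natDegree_iterate_derivative_le k₀ P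
      rw [hPdeg] at h
      rw [← hQdef] at h
      omega
    · apply le_natDegree_of_ne_zero
      rw [hctop]
      exact ne_of_gt hdtop
  have hQroots : Multiset.card Q.roots = m' + 2 := by
    apply le_antisymm
    · have h := card_roots' Q
      omega
    · have h5 := card_roots_le_iterate_derivative k₀ P
      rw [← hQdef] at h5
      have h6 : Multiset.card P.roots = N := by rw [hProots, Multiset.card_map]
      omega
  have hQrd : Multiset.card Q.roots = Q.natDegree := by rw [hQroots, hQdeg]
  have hcne : Q.leadingCoeff ≠ 0 := leadingCoeff_ne_zero.mpr hQne
  have key : ∀ i ≤ m' + 2, Q.coeff i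
      = Q.leadingCoeff * (-1)^(m' + 2 - i) * Q.roots.esymm (m' + 2 - i) := by
    intro i hi
    have h := Polynomial.coeff_eq_esymm_roots_of_card hQrd (k := i)
      (by rw [hQdeg]; omega)
    rw [hQdeg] at h
    exact h
  have hE1 : Q.roots.esymm (m' + 1) = 0 := by
    have h := key 1 (by omega)
    rw [hc1, show m' + 2 - 1 = m' + 1 by omega] at h
    have hne : Q.leadingCoeff * (-1:ℝ)^(m'+1) ≠ 0 :=
      mul_ne_zero hcne (by positivity)
    rcases mul_eq_zero.mp h.symm with h' | h'
    · exact absurd h' hne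
    · exact h'
  have hTW := top_window Q.roots m' hQroots
  rw [hE1] at hTW
  have hEprod : Q.roots.esymm (m'+2) * Q.roots.esymm m' ≤ 0 := by nlinarith
  have e0 := key 0 (by omega)
  have e2 := key 2 (by omega)
  rw [hc0, show m' + 2 - 0 = m' + 2 by omega] at e0
  rw [hc2, show m' + 2 - 2 = m' by omega] at e2
  have hsign : ((-1:ℝ))^(m'+2) * ((-1:ℝ))^(m') = 1 := by
    rw [← pow_add]
    exact Even.neg_one_pow ⟨m' + 1, by ring⟩
  have hd0 : (0:ℝ) < (k₀.descFactorial k₀ : ℝ) := descFactorial_cast_pos le_rfl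
  have hd2 : (0:ℝ) < (((2:ℕ) + k₀).descFactorial k₀ : ℝ) := descFactorial_cast_pos (by omega)
  have hmul : ((k₀.descFactorial k₀ : ℝ) * v.esymm (m'+2)) *
      ((((2:ℕ) + k₀).descFactorial k₀ : ℝ) * v.esymm m')
      = Q.leadingCoeff^2 * (Q.roots.esymm (m'+2) * Q.roots.esymm m') := by
    rw [e0, e2]
    calc (Q.leadingCoeff * (-1)^(m'+2) * Q.roots.esymm (m'+2)) *
          (Q.leadingCoeff * (-1)^(m') * Q.roots.esymm m')
        = Q.leadingCoeff^2 * (Q.roots.esymm (m'+2) * Q.roots.esymm m') *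
          (((-1:ℝ))^(m'+2) * ((-1:ℝ))^(m')) := by ring
      _ = Q.leadingCoeff^2 * (Q.roots.esymm (m'+2) * Q.roots.esymm m') := by
          rw [hsign, mul_one]
  nlinarith [mul_pos (mul_pos hd0 hpos) (mul_pos hd2 h2), sq_nonneg Q.leadingCoeff]

lemma taylor_multiset_prod (t : ℝ) (u : Multiset ℝ[X]) :
    Polynomial.taylor t u.prod = (u.map (Polynomial.taylor t)).prod := by
  induction u using Multiset.induction with
  | empty => simp
  | cons p u ih => simp [Multiset.prod_cons, taylor_mul, ih]

lemma esymm_shift (s : Multiset ℝ) (t : ℝ) (j : ℕ) (hj : j ≤ Multiset.card s) :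
    (s.map (· + t)).esymm j
      = (Polynomial.hasseDeriv (Multiset.card s - j) ((s.map fun x => X + C x).prod)).eval t := by
  have hcard : Multiset.card (s.map (· + t)) = Multiset.card s := Multiset.card_map _ _
  have h1 : ((s.map (· + t)).map fun r => X + C r).prod
      = Polynomial.taylor t ((s.map fun x => X + C x).prod) := by
    rw [taylor_multiset_prod, Multiset.map_map, Multiset.map_map]
    congr 1
    apply Multiset.map_congr rfl
    intro x _
    simp only [Function.comp_apply]
    rw [show Polynomial.taylor t (X + C x) = (X + C t) + C x by
      simp [LinearMap.map_add, taylor_X, taylor_C]]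
    rw [add_assoc, ← C_add, add_comm t x]
  have h2 := Multiset.prod_X_add_C_coeff (s.map (· + t))
    (k := Multiset.card s - j) (by rw [hcard]; omega)
  rw [hcard, Nat.sub_sub_self hj] at h2
  rw [← h2, h1, Polynomial.taylor_coeff]

lemma Gam.shift {m : ℕ} {s : Multiset ℝ} (hm : 1 ≤ m) (h : Gam m s) {t : ℝ} (ht : 0 ≤ t) :
    Gam m (s.map (· + t)) := by
  intro j hj1 hjm
  have hjc : j ≤ Multiset.card s := le_trans hjm (h.le_card hm)
  set N := Multiset.card s with hN
  set P : ℝ[X] := (s.map fun x => X + C x).prod with hPdef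
  have hPdeg : P.natDegree = N := by
    rw [hPdef, natDegree_multiset_prod_of_monic]
    · rw [Multiset.map_map]
      have heq : Multiset.map (natDegree ∘ fun x => X + C x) s = Multiset.map (fun _ => 1) s :=
        Multiset.map_congr rfl (fun x _ => by simp [natDegree_X_add_C])
      rw [heq, Multiset.map_const', Multiset.sum_replicate, smul_eq_mul, mul_one]
    · intro f hf
      obtain ⟨x, _, rfl⟩ := Multiset.mem_map.mp hf
      exact monic_X_add_C x
  have hPc : ∀ i ≤ N, P.coeff (N - i) = s.esymm i := by
    intro i hi
    rw [hPdef, Multiset.prod_X_add_C_coeff s (by omega : N - i ≤ Multiset.card s)]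
    congr 1
    omega
  rw [esymm_shift s t j hjc]
  have hdeg : (Polynomial.hasseDeriv (N - j) P).natDegree < j + 1 := by
    have := natDegree_hasseDeriv_le P (N - j)
    omega
  rw [Polynomial.eval_eq_sum_range' hdeg]
  have hterm : ∀ i, i ≤ j → (Polynomial.hasseDeriv (N - j) P).coeff i
      = ((i + (N - j)).choose (N - j) : ℝ) * s.esymm (j - i) := by
    intro i hi
    rw [Polynomial.hasseDeriv_coeff]
    congr 1
    rw [show i + (N - j) = N - (j - i) by omega]
    exact hPc (j - i) (by omega)
  apply Finset.sum_pos'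
  · intro i hi
    rw [Finset.mem_range] at hi
    rw [hterm i (by omega)]
    have h1 : (0:ℝ) ≤ ((i + (N - j)).choose (N - j) : ℝ) := by positivity
    have h2 : 0 ≤ s.esymm (j - i) := by
      rcases Nat.eq_zero_or_pos (j - i) with hz | hp
      · rw [hz, esymm_zero']; norm_num
      · exact (h (j - i) hp (by omega)).le
    positivity
  · refine ⟨0, Finset.mem_range.mpr (by omega), ?_⟩
    rw [hterm 0 (by omega)]
    simp only [Nat.sub_zero, zero_add, Nat.choose_self, Nat.cast_one, one_mul, pow_zero, mul_one]
    exact h j hj1 hjm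

/-- Key fact: removing a maximal element of `s ∈ Γ_m` keeps `σ_{m-1}` positive. -/
lemma D1 : ∀ m : ℕ, 1 ≤ m → ∀ s : Multiset ℝ, Gam m s → ∀ a, a ∈ s → (∀ b ∈ s, b ≤ a) →
    0 < (s.erase a).esymm (m - 1) := by
  intro m
  induction m using Nat.strong_induction_on with
  | _ m ih =>
  intro hm s hGam a ha hmax
  match m, hm with
  | 1, _ =>
    simpa using (esymm_zero' (s.erase a)) ▸ one_pos
  | (m'+2), _ =>
    have hcard : m' + 2 ≤ Multiset.card s := hGam.le_card (by omega)
    have hcerase : Multiset.card (s.erase a) = Multiset.card s - 1 := by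
      rw [Multiset.card_erase_of_mem ha]
      rfl
    rcases eq_or_lt_of_le hcard with hc | hc
    · -- card s = m'+2 : all entries positive
      have hpos := all_pos_of_card_eq (by omega) hGam hc.symm
      have : 0 < (s.erase a).esymm (m' + 1) :=
        esymm_pos_of_pos (fun x hx => hpos x (Multiset.mem_of_mem_erase hx)) (by omega)
      simpa using this
    · -- card s > m'+2 : IVT argument
      by_contra hneg
      push_neg at hneg
      set v := s.erase a with hv
      have hcv : m' + 2 ≤ Multiset.card v := by omega
      set f : ℝ → ℝ := fun t => ((v.map (· + t)).esymm (m'+1)) with hf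
      have hcont : Continuous f := by
        have hfe : f = fun t =>
            (Polynomial.hasseDeriv (Multiset.card v - (m'+1))
              ((v.map fun x => X + C x).prod)).eval t :=
          funext fun t => esymm_shift v t (m'+1) (by omega)
        rw [hfe]
        exact Polynomial.continuous _
      have hf0 : f 0 ≤ 0 := by
        have : v.map (· + (0:ℝ)) = v := by
          rw [show (· + (0:ℝ)) = id by funext x; simp]
          exact Multiset.map_id v
        rw [hf]
        simp only [this]
        simpa using hneg
      set B : ℝ := (v.map (fun x => |x|)).sum with hB
      have hBmem : ∀ x ∈ v, |x| ≤ B := by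
        intro x hx
        rw [hB]
        exact Multiset.single_le_sum (by intro y hy; obtain ⟨z, _, rfl⟩ := Multiset.mem_map.mp hy
                                         exact abs_nonneg z) _
          (Multiset.mem_map_of_mem _ hx)
      set T : ℝ := B + 1 with hT
      have hT0 : (0:ℝ) ≤ T := by
        have : (0:ℝ) ≤ B := by
          rw [hB]
          apply Multiset.sum_nonneg
          intro y hy
          obtain ⟨z, _, rfl⟩ := Multiset.mem_map.mp hy
          exact abs_nonneg z
        linarith
      have hfT : 0 < f T := by
        rw [hf]
        apply esymm_pos_of_pos
        · intro x hx
          obtain ⟨z, hz, rfl⟩ := Multiset.mem_map.mp hx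
          have := hBmem z hz
          have := abs_le.mp this
          rw [hT]
          linarith [this.1]
        · rw [Multiset.card_map]; omega
      obtain ⟨t₀, ht₀mem, ht₀⟩ : ∃ t₀ ∈ Set.Icc (0:ℝ) T, f t₀ = 0 := by
        have hsub := intermediate_value_Icc hT0 hcont.continuousOn
        have h0mem : (0:ℝ) ∈ Set.Icc (f 0) (f T) := ⟨hf0, hfT.le⟩
        obtain ⟨t₀, ht₀, hft₀⟩ := hsub h0mem
        exact ⟨t₀, ht₀, hft₀⟩
      set μ := s.map (· + t₀) with hμ
      have hμGam : Gam (m'+2) μ := hGam.shift (by omega) ht₀mem.1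
      have hmem : a + t₀ ∈ μ := Multiset.mem_map_of_mem _ ha
      have hμmax : ∀ b ∈ μ, b ≤ a + t₀ := by
        rintro b hb
        obtain ⟨x, hx, rfl⟩ := Multiset.mem_map.mp hb
        linarith [hmax x hx]
      have herase : μ.erase (a + t₀) = v.map (· + t₀) := by
        rw [hμ, hv, ← Multiset.map_erase _ (fun x y => by simp) a s]
      have h1 : (μ.erase (a+t₀)).esymm (m'+1) = 0 := by rw [herase]; exact ht₀
      have h2 : 0 < (μ.erase (a+t₀)).esymm m' := by
        have := ih (m'+1) (by omega) (by omega) μ (hμGam.mono (by omega)) (a+t₀) hmem hμmax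
        simpa using this
      have h3 : (μ.erase (a+t₀)).esymm (m'+2) ≤ 0 := by
        apply newton_special _ m' _ h1 h2
        rw [herase, Multiset.card_map]
        omega
      have h4 : 0 < μ.esymm (m'+2) := hμGam (m'+2) (by omega) le_rfl
      have h5 : μ.esymm (m'+2)
          = (μ.erase (a+t₀)).esymm (m'+2) + (a+t₀) * (μ.erase (a+t₀)).esymm (m'+1) := by
        conv_lhs => rw [← Multiset.cons_erase hmem]
        exact esymm_cons _ _ _
      rw [h1, mul_zero, add_zero] at h5
      linarith

/-- Removing a maximal element of `s ∈ Γ_m` lands in `Γ_{m-1}`. -/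
lemma RL {m : ℕ} {s : Multiset ℝ} (h : Gam m s) {a : ℝ} (ha : a ∈ s)
    (hmax : ∀ b ∈ s, b ≤ a) : Gam (m-1) (s.erase a) := by
  intro j hj1 hjm
  have := D1 (j+1) (by omega) s (h.mono (by omega)) a ha hmax
  simpa using this

lemma le_head_of_sorted {l : List ℝ} (hs : l.Pairwise (· ≥ ·)) (hne : l ≠ [])
    {x : ℝ} (hx : x ∈ l) : x ≤ l.head hne := by
  match l, hne with
  | hd :: tl, _ =>
    rcases List.mem_cons.mp hx with rfl | hmem
    · simp [List.head_cons]
    · exact (List.pairwise_cons.mp hs).1 x hmem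

lemma gam_drop : ∀ (j m : ℕ) (l : List ℝ), l.Pairwise (· ≥ ·) → Gam m ↑l → j < m →
    Gam (m - j) ↑(l.drop j) := by
  intro j
  induction j with
  | zero => intro m l _ h _; simpa using h
  | succ j ih =>
    intro m l hs h hj
    match l with
    | [] =>
      exfalso
      have h1 := h 1 le_rfl (by omega)
      rw [esymm_eq_zero_of_card_lt (by simp)] at h1
      exact lt_irrefl 0 h1
    | hd :: tl =>
      have hcoe : (↑(hd :: tl) : Multiset ℝ) = hd ::ₘ ↑tl := (Multiset.cons_coe hd tl).symm
      have hmax : ∀ b ∈ (↑(hd :: tl) : Multiset ℝ), b ≤ hd := by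
        intro b hb
        exact le_head_of_sorted hs (by simp) (by exact_mod_cast hb)
      have hmem : hd ∈ (↑(hd :: tl) : Multiset ℝ) := by simp
      have h1 : Gam (m - 1) ((↑(hd :: tl) : Multiset ℝ).erase hd) := RL h hmem hmax
      rw [hcoe, Multiset.erase_cons_head] at h1
      have h2 := ih (m - 1) tl (List.pairwise_cons.mp hs).2 h1 (by omega)
      rw [show m - 1 - j = m - (j + 1) by omega] at h2
      simpa using h2

lemma head_pos_of_gam {l : List ℝ} (hs : l.Pairwise (· ≥ ·)) (hne : l ≠ [])
    (h : Gam 1 ↑l) : 0 < l.head hne := by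
  have hsum : 0 < (↑l : Multiset ℝ).sum := by
    have := h 1 le_rfl le_rfl
    rwa [esymm_one'] at this
  have hsum' : 0 < l.sum := by
    rwa [Multiset.sum_coe] at hsum
  by_contra hle
  push_neg at hle
  have : l.sum ≤ l.length • l.head hne :=
    List.sum_le_card_nsmul l _ (fun x hx => le_head_of_sorted hs hne hx)
  rw [nsmul_eq_mul] at this
  nlinarith [this, Nat.cast_nonneg (α := ℝ) l.length]

lemma pow_le_prod : ∀ (u : List ℝ) (y : ℝ), 0 < y → (∀ x ∈ u, y ≤ x) →
    y ^ u.length ≤ u.prod := by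
  intro u
  induction u with
  | nil => intro y _ _; simp
  | cons a u ih =>
    intro y hy h
    have ha : y ≤ a := h a (List.mem_cons_self)
    have hih := ih y hy (fun x hx => h x (List.mem_cons_of_mem a hx))
    rw [List.length_cons, List.prod_cons, pow_succ, mul_comm (y ^ u.length) y]
    exact mul_le_mul ha hih (by positivity) (by linarith)

lemma P1 : ∀ (kk : ℕ) (l : List ℝ), l.Pairwise (· ≥ ·) → Gam (kk+1) ↑l →
    (l.take kk).prod ≤ Multiset.esymm ↑l kk := by
  intro kk
  induction kk with
  | zero => intro l _ _; simp [esymm_zero']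
  | succ kk ih =>
    intro l hs h
    have hcard : kk + 2 ≤ l.length := by
      have := h.le_card (by omega)
      rwa [Multiset.coe_card] at this
    match l with
    | [] => simp at hcard
    | hd :: tl =>
      have hcoe : (↑(hd :: tl) : Multiset ℝ) = hd ::ₘ ↑tl := (Multiset.cons_coe hd tl).symm
      have hmax : ∀ b ∈ (↑(hd :: tl) : Multiset ℝ), b ≤ hd := by
        intro b hb
        exact le_head_of_sorted hs (by simp) (by exact_mod_cast hb)
      have hmem : hd ∈ (↑(hd :: tl) : Multiset ℝ) := by simp
      have hGam' : Gam (kk + 1) ↑tl := by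
        have h1 := RL h hmem hmax
        rwa [hcoe, Multiset.erase_cons_head, show kk + 1 + 1 - 1 = kk + 1 by omega] at h1
      have hhd : 0 < hd := by
        have := head_pos_of_gam (l := hd :: tl) hs (List.cons_ne_nil hd tl) (h.mono (by omega))
        simpa using this
      have hih := ih tl (List.pairwise_cons.mp hs).2 hGam'
      have hσtl : 0 < Multiset.esymm (↑tl : Multiset ℝ) (kk+1) := by
        apply hGam' (kk+1) (by omega) le_rfl
      have hexp : Multiset.esymm (↑(hd :: tl) : Multiset ℝ) (kk+1) =
          Multiset.esymm (↑tl : Multiset ℝ) (kk+1)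
            + hd * Multiset.esymm (↑tl : Multiset ℝ) kk := by
        rw [hcoe]; exact esymm_cons hd (↑tl : Multiset ℝ) kk
      rw [List.take_succ_cons, List.prod_cons, hexp]
      nlinarith [mul_le_mul_of_nonneg_left hih hhd.le]


end SigmaTools

open SigmaTools Polynomial

theorem stmt1 (n k : ℕ) (hk : 1 ≤ k) (hkn : k ≤ n - 1)
    (lam : Fin n → ℝ) (F K₀ : ℝ)
    (hGamma : ∀ m, 1 ≤ m → m ≤ k + 1 → 0 < esymm n m lam)
    (hdec : ∀ i j : Fin n, i ≤ j → lam j ≤ lam i)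
    (hF : 0 < F) (hσ : esymm n k lam ≤ F)
    (hK₀ : 0 < K₀) (hKF : (K₀ / (n : ℝ)) ^ k ≥ F) :
    lam ⟨n - 1, by omega⟩ + K₀ ≥ 0 := by
  have hn : k + 1 ≤ n := by omega
  set l : List ℝ := List.ofFn lam with hl
  have hlen : l.length = n := List.length_ofFn
  -- bridge between the two esymm notions
  have hbridge : ∀ m : ℕ, Multiset.esymm (↑l : Multiset ℝ) m = esymm n m lam := by
    intro m
    have h1 : (↑l : Multiset ℝ) = Finset.univ.val.map lam := by
      rw [hl, List.ofFn_eq_map]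
      rfl
    rw [h1, Finset.esymm_map_val]
    rfl
  have hGam : Gam (k+1) ↑l := by
    intro j h1 h2
    rw [hbridge]
    exact hGamma j h1 h2
  have hsort : l.Pairwise (· ≥ ·) := by
    apply List.pairwise_iff_getElem.mpr
    intro i j hi hj hij
    simp only [hl, List.getElem_ofFn]
    exact hdec _ _ (by simp only [Fin.mk_le_mk]; omega)
  -- the sorted entries
  have hgetl : ∀ (i : ℕ) (hi : i < n), l[i]'(by omega) = lam ⟨i, hi⟩ := by
    intro i hi
    simp only [hl, List.getElem_ofFn]
  set y : ℝ := lam ⟨k - 1, by omega⟩ with hy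
  set z : ℝ := lam ⟨n - 1, by omega⟩ with hz
  -- the tail d
  set d : List ℝ := l.drop (k-1) with hd
  have hdlen : d.length = n - k + 1 := by
    rw [hd, List.length_drop, hlen]; omega
  have hdne : d ≠ [] := by
    intro hcon
    have h0 : d.length = 0 := by rw [hcon]; rfl
    omega
  have hdsort : d.Pairwise (· ≥ ·) := List.Pairwise.sublist (List.drop_sublist _ _) hsort
  have hdGam : Gam 2 ↑d := by
    have := gam_drop (k-1) (k+1) l hsort hGam (by omega)
    rwa [show k + 1 - (k-1) = 2 by omega] at this
  have hgetd : ∀ (i : ℕ) (hi : i < d.length), d[i]'hi = lam ⟨k - 1 + i, by omega⟩ := by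
    intro i hi
    have h1 : d[i]'hi = l[k - 1 + i]'(by rw [hlen]; omega) := by
      simp only [hd, List.getElem_drop]
    rw [h1, hgetl (k - 1 + i) (by omega)]
  -- head of d is y
  have hdhead : d.head hdne = y := by
    rw [List.head_eq_getElem_zero hdne, hgetd 0 (by omega)]
    apply congrArg lam
    apply Fin.ext
    simp
  -- last of d is z
  have hdlast : d.getLast hdne = z := by
    rw [List.getLast_eq_getElem, hgetd (d.length - 1) (by omega)]
    apply congrArg lam
    apply Fin.ext
    simp only [hz]
    rw [hdlen]
    omega
  -- positivity of y
  have hy0 : 0 < y := by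
    have := head_pos_of_gam hdsort hdne (hdGam.mono (by omega))
    rwa [hdhead] at this
  -- tail sum positive
  have hsum : 0 < d.sum := by
    have h1 := hdGam 1 le_rfl (by omega)
    rw [esymm_one', Multiset.sum_coe] at h1
    exact h1
  -- sum bound : d.sum ≤ (d.length - 1) * y + z
  have hsplit : d.sum = (d.dropLast).sum + z := by
    conv_lhs => rw [← List.dropLast_append_getLast hdne]
    rw [List.sum_append, hdlast]
    simp
  have hdropbound : (d.dropLast).sum ≤ ((n - k : ℕ) : ℝ) * y := by
    have h1 : (d.dropLast).sum ≤ (d.dropLast).length • (d.head hdne) := by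
      apply List.sum_le_card_nsmul
      intro x hx
      exact le_head_of_sorted hdsort hdne ((List.dropLast_sublist d).mem hx)
    rw [nsmul_eq_mul, hdhead, List.length_dropLast, hdlen] at h1
    simpa using h1
  -- P1 : y^k ≤ take k prod ≤ esymm k ≤ F ≤ (K₀/n)^k
  have htake : ∀ x ∈ l.take k, y ≤ x := by
    intro x hx
    obtain ⟨i, hi, hix⟩ := List.mem_iff_getElem.mp hx
    have hik : i < k := by
      have := hi
      rw [List.length_take] at this
      omega
    have hin : i < n := by omega
    rw [List.getElem_take] at hix
    rw [hgetl i hin] at hix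
    rw [← hix, hy]
    exact hdec ⟨i, hin⟩ ⟨k-1, by omega⟩ (by simp only [Fin.mk_le_mk]; omega)
  have hlentake : (l.take k).length = k := by
    rw [List.length_take, hlen]; omega
  have hyk : y ^ k ≤ (l.take k).prod := by
    have := pow_le_prod (l.take k) y hy0 htake
    rwa [hlentake] at this
  have hP1 := P1 k l hsort hGam
  rw [hbridge] at hP1
  have hykF : y ^ k ≤ (K₀ / (n:ℝ)) ^ k := by
    calc y ^ k ≤ (l.take k).prod := hyk
      _ ≤ esymm n k lam := hP1
      _ ≤ F := hσ
      _ ≤ (K₀ / (n:ℝ)) ^ k := hKF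
  have hn0 : (0:ℝ) < n := by
    have : (1:ℕ) ≤ n := by omega
    exact_mod_cast Nat.lt_of_lt_of_le Nat.zero_lt_one this
  have hyK : y ≤ K₀ / n := by
    apply le_of_pow_le_pow_left₀ (by omega) (by positivity) hykF
  -- conclude
  have hzbound : 0 < ((n - k : ℕ) : ℝ) * y + z := by
    have := hsplit ▸ hsum
    linarith [hdropbound]
  have hcast : ((n - k : ℕ) : ℝ) ≤ (n : ℝ) := by
    exact_mod_cast Nat.sub_le n k
  have hcast0 : (0:ℝ) ≤ ((n - k : ℕ) : ℝ) := Nat.cast_nonneg _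
  have hfin : ((n - k : ℕ) : ℝ) * y ≤ K₀ := by
    calc ((n - k : ℕ) : ℝ) * y ≤ ((n - k : ℕ) : ℝ) * (K₀ / n) := by
          apply mul_le_mul_of_nonneg_left hyK hcast0
      _ ≤ (n : ℝ) * (K₀ / n) := by
          apply mul_le_mul_of_nonneg_right hcast (by positivity)
      _ = K₀ := by field_simp
  rw [ge_iff_le, hz] at *
  linarith
end

section
/- Let u be a C² function on a domain Ω ⊂ ℝⁿ that is (k+1)-convex (the eigenvalue vector of D²u(x) lies in Γ_{k+1} for all x ∈ Ω) and satisfies σ_k(D²u) = f(x, u, ∇u) in Ω with sup_Ω f ≤ F. Then with K₀ = n·F^{1/k}, the matrix D²u(x) + K₀·I is positive semidefinite for every x ∈ Ω. -/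
set_option linter.unusedSectionVars false
set_option linter.unusedVariables false
set_option maxHeartbeats 1000000

section EsymTheory

open Finset Polynomial

variable {ι : Type*} [DecidableEq ι]

/-- Elementary symmetric function of `y` over a finset `u`. -/
noncomputable def Esym (m : ℕ) (u : Finset ι) (y : ι → ℝ) : ℝ :=
  ∑ s ∈ u.powersetCard m, ∏ i ∈ s, y i

lemma Esym_zero (u : Finset ι) (y : ι → ℝ) : Esym 0 u y = 1 := by
  simp [Esym]

lemma Esym_one (u : Finset ι) (y : ι → ℝ) : Esym 1 u y = ∑ i ∈ u, y i := by
  simp [Esym, Finset.powersetCard_one, Finset.sum_map]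

lemma Esym_insert (m : ℕ) {u : Finset ι} {a : ι} (ha : a ∉ u) (y : ι → ℝ) :
    Esym (m + 1) (insert a u) y = Esym (m + 1) u y + y a * Esym m u y := by
  unfold Esym
  rw [Finset.powersetCard_succ_insert ha, Finset.sum_union, Finset.sum_image, Finset.mul_sum]
  · congr 1
    refine Finset.sum_congr rfl fun s hs => ?_
    rw [Finset.mem_powersetCard] at hs
    exact Finset.prod_insert (fun h => ha (hs.1 h))
  · intro s hs t ht hst
    rw [Finset.mem_coe, Finset.mem_powersetCard] at hs ht
    have has : a ∉ s := fun h => ha (hs.1 h)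
    have hat : a ∉ t := fun h => ha (ht.1 h)
    have := congrArg (Finset.erase · a) hst
    simpa [Finset.erase_insert, has, hat] using this
  · rw [Finset.disjoint_left]
    intro s hs hs'
    rw [Finset.mem_powersetCard] at hs
    rw [Finset.mem_image] at hs'
    obtain ⟨t, ht, rfl⟩ := hs'
    exact (fun h => ha (hs.1 h)) (Finset.mem_insert_self a t)

lemma Esym_erase (m : ℕ) {u : Finset ι} {a : ι} (ha : a ∈ u) (y : ι → ℝ) :
    Esym (m + 1) u y = Esym (m + 1) (u.erase a) y + y a * Esym m (u.erase a) y := by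
  conv_lhs => rw [← Finset.insert_erase ha]
  exact Esym_insert m (Finset.notMem_erase a u) y

lemma le_card_of_Esym_ne_zero {m : ℕ} {u : Finset ι} {y : ι → ℝ} (h : Esym m u y ≠ 0) :
    m ≤ u.card := by
  by_contra hc
  apply h
  unfold Esym
  rw [Finset.powersetCard_eq_empty.2 (not_le.1 hc)]
  simp

/-- Removal lemma: removing an entry with nonpositive value preserves positivity of the
elementary symmetric functions. -/
lemma Esym_erase_pos {M : ℕ} {u : Finset ι} {y : ι → ℝ} {a : ι} (ha : a ∈ u) (hya : y a ≤ 0)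
    (h : ∀ m, 1 ≤ m → m ≤ M → 0 < Esym m u y) :
    ∀ m ≤ M, 0 < Esym m (u.erase a) y := by
  intro m
  induction m with
  | zero => intro _; rw [Esym_zero]; norm_num
  | succ m ih =>
    intro hm
    have h1 : 0 < Esym m (u.erase a) y := ih (le_trans (Nat.le_succ m) hm)
    have h2 := Esym_erase m ha y
    have h3 : 0 < Esym (m + 1) u y := h (m + 1) (Nat.succ_le_succ (Nat.zero_le m)) hm
    nlinarith [mul_nonneg (neg_nonneg.2 hya) h1.le]

/-- `2 e₂ = (∑ y)² - ∑ y²`. -/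
lemma two_mul_Esym_two (u : Finset ι) (y : ι → ℝ) :
    2 * Esym 2 u y = (∑ i ∈ u, y i) ^ 2 - ∑ i ∈ u, (y i) ^ 2 := by
  classical
  induction u using Finset.induction_on with
  | empty =>
    simp only [Esym, Finset.sum_empty]
    rw [Finset.powersetCard_eq_empty.2 (by simp)]
    simp
  | insert a s ha ih =>
    have h2 : Esym 2 (insert a s) y = Esym 2 s y + y a * Esym 1 s y := Esym_insert 1 ha y
    rw [h2, Finset.sum_insert ha, Finset.sum_insert ha, Esym_one]
    ring_nf
    ring_nf at ih
    linarith [ih]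

/-- Cauchy–Schwarz type inequality for `e₂` vs `e₁`. -/
lemma Esym_two_le (u : Finset ι) (y : ι → ℝ) :
    2 * (u.card : ℝ) * Esym 2 u y ≤ ((u.card : ℝ) - 1) * (Esym 1 u y) ^ 2 := by
  have hcs : (∑ i ∈ u, y i) ^ 2 ≤ (u.card : ℝ) * ∑ i ∈ u, (y i) ^ 2 := by
    exact_mod_cast sq_sum_le_card_mul_sum_sq (s := u) (f := y)
  have h2 := two_mul_Esym_two u y
  rw [Esym_one]
  have h3 : (u.card : ℝ) * (2 * Esym 2 u y)
      = (u.card : ℝ) * ((∑ i ∈ u, y i) ^ 2 - ∑ i ∈ u, (y i) ^ 2) := by rw [h2]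
  ring_nf at h3 ⊢
  linarith [hcs, h3]

/-- Complement identity: `e_{card - j}(y) = (∏ y) * e_j(y⁻¹)` for `y` nonvanishing on `u`. -/
lemma Esym_compl {u : Finset ι} {y : ι → ℝ} (h0 : ∀ i ∈ u, y i ≠ 0) {j : ℕ} (hj : j ≤ u.card) :
    Esym (u.card - j) u y = (∏ i ∈ u, y i) * Esym j u (fun i => (y i)⁻¹) := by
  unfold Esym
  rw [Finset.mul_sum]
  refine Finset.sum_nbij' (fun s => u \ s) (fun s => u \ s) ?_ ?_ ?_ ?_ ?_
  · intro s hs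
    rw [Finset.mem_powersetCard] at hs ⊢
    refine ⟨Finset.sdiff_subset, ?_⟩
    rw [Finset.card_sdiff_of_subset hs.1, hs.2]
    omega
  · intro s hs
    rw [Finset.mem_powersetCard] at hs ⊢
    refine ⟨Finset.sdiff_subset, ?_⟩
    rw [Finset.card_sdiff_of_subset hs.1, hs.2]
  · intro s hs
    rw [Finset.mem_powersetCard] at hs
    exact Finset.sdiff_sdiff_eq_self hs.1
  · intro s hs
    rw [Finset.mem_powersetCard] at hs
    exact Finset.sdiff_sdiff_eq_self hs.1
  · intro s hs
    rw [Finset.mem_powersetCard] at hs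
    rw [Finset.prod_inv_distrib]
    have : (∏ i ∈ u, y i) = (∏ i ∈ u \ s, y i) * ∏ i ∈ s, y i := by
      rw [Finset.prod_sdiff hs.1]
    rw [this]
    have hsd0 : (∏ i ∈ u \ s, y i) ≠ 0 :=
      Finset.prod_ne_zero_iff.2 fun i hi => h0 i (Finset.mem_sdiff.1 hi).1
    show (∏ i ∈ s, y i) = ((∏ i ∈ u \ s, y i) * ∏ i ∈ s, y i) * (∏ i ∈ u \ s, y i)⁻¹
    rw [mul_comm ((∏ i ∈ u \ s, y i) * ∏ i ∈ s, y i), inv_mul_cancel_left₀ hsd0]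

lemma Esym_card (u : Finset ι) (y : ι → ℝ) : Esym u.card u y = ∏ i ∈ u, y i := by
  unfold Esym
  rw [Finset.powersetCard_self, Finset.sum_singleton]

/-- Bottom Newton inequality for a full vector. -/
lemma Esym_bottom (u : Finset ι) (y : ι → ℝ) (hD : 2 ≤ u.card) :
    2 * (u.card : ℝ) * (Esym u.card u y * Esym (u.card - 2) u y)
      ≤ ((u.card : ℝ) - 1) * (Esym (u.card - 1) u y) ^ 2 := by
  have hc1 : (1:ℝ) ≤ (u.card : ℝ) := by exact_mod_cast le_trans (by norm_num) hD
  by_cases hz : ∀ i ∈ u, y i ≠ 0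
  · have h0 := Esym_compl hz (j := 0) (Nat.zero_le _)
    have h1 := Esym_compl hz (j := 1) (le_trans (by norm_num) hD)
    have h2 := Esym_compl hz (j := 2) hD
    rw [Nat.sub_zero, Esym_zero, mul_one] at h0
    rw [h0, h1, h2]
    have hcs := Esym_two_le u (fun i => (y i)⁻¹)
    nlinarith [sq_nonneg (∏ i ∈ u, y i), hcs]
  · push_neg at hz
    obtain ⟨i, hi, hyi⟩ := hz
    have hP : Esym u.card u y = 0 := by
      rw [Esym_card]; exact Finset.prod_eq_zero hi hyi
    rw [hP]
    have : ((u.card : ℝ) - 1) * (Esym (u.card - 1) u y) ^ 2 ≥ 0 := by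
      apply mul_nonneg (by linarith) (sq_nonneg _)
    linarith

/-- Bottom Newton inequality for multisets. -/
lemma Multiset.esymm_bottom (t : Multiset ℝ) (h2 : 2 ≤ Multiset.card t) :
    2 * (Multiset.card t : ℝ) * (t.esymm (Multiset.card t) * t.esymm (Multiset.card t - 2))
      ≤ ((Multiset.card t : ℝ) - 1) * (t.esymm (Multiset.card t - 1)) ^ 2 := by
  obtain ⟨l, rfl⟩ : ∃ l : List ℝ, t = ↑l := ⟨t.toList, (Multiset.coe_toList t).symm⟩
  have huniv : (Finset.univ : Finset (Fin l.length)).val.map l.get = (l : Multiset ℝ) := by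
    show (Multiset.map l.get (List.finRange l.length : List (Fin l.length)) : Multiset ℝ) = _
    rw [Multiset.map_coe, List.map_get_finRange]
  have hcard : (Finset.univ : Finset (Fin l.length)).card = Multiset.card (l : Multiset ℝ) := by
    simp
  have hes : ∀ j, (l : Multiset ℝ).esymm j = Esym j Finset.univ l.get := by
    intro j
    rw [← huniv, Finset.esymm_map_val]
    rfl
  rw [hes, hes, hes, ← hcard]
  exact Esym_bottom Finset.univ l.get (by omega)

lemma deriv_real_rooted (p : ℝ[X]) (h : Multiset.card p.roots = p.natDegree) :
    Multiset.card (derivative p).roots = (derivative p).natDegree ∧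
      (derivative p).natDegree = p.natDegree - 1 := by
  have h1 := p.card_roots_le_derivative
  have h2 := (derivative p).card_roots'
  have h3 := p.natDegree_derivative_le
  omega

lemma iter_real_rooted (p : ℝ[X]) (h : Multiset.card p.roots = p.natDegree) (d : ℕ) :
    Multiset.card (derivative^[d] p).roots = (derivative^[d] p).natDegree ∧
      (derivative^[d] p).natDegree = p.natDegree - d := by
  induction d with
  | zero => exact ⟨h, rfl⟩
  | succ d ih =>
    rw [Function.iterate_succ_apply']
    have := deriv_real_rooted _ ih.1
    exact ⟨this.1, by omega⟩

/-- Newton-type inequality for the three lowest coefficients of a real-rooted polynomial. -/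
lemma coeff_newton_bottom (g : ℝ[X]) (hroots : Multiset.card g.roots = g.natDegree)
    (hD : 2 ≤ g.natDegree) :
    2 * (g.natDegree : ℝ) * (g.coeff 0 * g.coeff 2)
      ≤ ((g.natDegree : ℝ) - 1) * (g.coeff 1) ^ 2 := by
  set t := g.roots with ht
  set L := g.leadingCoeff with hL
  have hfac := Polynomial.C_leadingCoeff_mul_prod_multiset_X_sub_C hroots
  have hcoeff : ∀ j, j ≤ Multiset.card t →
      g.coeff j = L * ((-1) ^ (Multiset.card t - j) * t.esymm (Multiset.card t - j)) := by
    intro j hj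
    conv_lhs => rw [← hfac]
    rw [Polynomial.coeff_C_mul, Multiset.prod_X_sub_C_coeff t hj]
  have h0 := hcoeff 0 (by omega)
  have h1 := hcoeff 1 (by omega)
  have h2 := hcoeff 2 (by omega)
  have hBN := Multiset.esymm_bottom t (by omega)
  have hsign2 : ((-1:ℝ)) ^ (Multiset.card t - 0) * (-1:ℝ) ^ (Multiset.card t - 2) = 1 := by
    rw [← pow_add]
    apply Even.neg_one_pow
    exact ⟨Multiset.card t - 1, by omega⟩
  have hsign1 : ((-1:ℝ) ^ (Multiset.card t - 1)) ^ 2 = 1 := by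
    rw [← pow_mul, mul_comm, pow_mul]
    norm_num
  rw [← hroots]
  have hg02 : g.coeff 0 * g.coeff 2
      = L ^ 2 * (((-1:ℝ) ^ (Multiset.card t - 0) * (-1:ℝ) ^ (Multiset.card t - 2))
        * (t.esymm (Multiset.card t - 0) * t.esymm (Multiset.card t - 2))) := by
    rw [h0, h2]; ring
  rw [hsign2, one_mul] at hg02
  have hg1 : (g.coeff 1) ^ 2
      = L ^ 2 * (((-1:ℝ) ^ (Multiset.card t - 1)) ^ 2 * (t.esymm (Multiset.card t - 1)) ^ 2) := by
    rw [h1]; ring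
  rw [hsign1, one_mul] at hg1
  rw [hg02, hg1, Nat.sub_zero]
  nlinarith [mul_le_mul_of_nonneg_left hBN (sq_nonneg L)]

lemma descFactorial_sq_le (d : ℕ) :
    ((d+1).descFactorial d) ^ 2 ≤ 2 * (d.descFactorial d) * ((d+2).descFactorial d) := by
  have hB : (d+1).descFactorial d = Nat.factorial (d+1) := by
    have h := Nat.descFactorial_succ (d+1) d
    rw [Nat.descFactorial_self] at h
    simpa using h.symm
  have hC : 2 * (d+2).descFactorial d = Nat.factorial (d+2) := by
    have h1 := Nat.descFactorial_succ (d+2) (d+1)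
    have h2 := Nat.descFactorial_succ (d+2) d
    rw [Nat.descFactorial_self] at h1
    have e1 : d + 2 - (d+1) = 1 := by omega
    have e2 : d + 2 - d = 2 := by omega
    rw [e1, one_mul] at h1
    rw [e2] at h2
    rw [h1, h2]
  rw [hB, pow_two]
  have : Nat.factorial (d+1) = (d+1) * Nat.factorial d := Nat.factorial_succ d
  calc Nat.factorial (d+1) * Nat.factorial (d+1)
      = (d+1) * (Nat.factorial d * Nat.factorial (d+1)) := by rw [this]; ring
    _ ≤ (d+2) * (Nat.factorial d * Nat.factorial (d+1)) :=
        Nat.mul_le_mul_right _ (by omega)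
    _ = Nat.factorial d * ((d+2) * Nat.factorial (d+1)) := by ring
    _ = Nat.factorial d * Nat.factorial (d+2) := by rw [← Nat.factorial_succ (d+1)]
    _ = Nat.factorial d * (2 * (d+2).descFactorial d) := by rw [hC]
    _ = 2 * d.descFactorial d * ((d+2).descFactorial d) := by
        rw [Nat.descFactorial_self]; ring

/-- Newton's inequality (weak form) for elementary symmetric functions of a real vector. -/
lemma Esym_newton (u : Finset ι) (y : ι → ℝ) (m : ℕ) (hm : 1 ≤ m) (hmM : m + 1 ≤ u.card) :
    ((m:ℝ) + 1) * (Esym (m+1) u y * Esym (m-1) u y) ≤ (m:ℝ) * (Esym m u y) ^ 2 := by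
  classical
  set M := u.card with hM
  set q : ℝ[X] := ∏ i ∈ u, (X + C (y i)) with hq
  have hmonic : q.Monic := monic_prod_of_monic _ _ (fun i _ => monic_X_add_C (y i))
  have hqdeg : q.natDegree = M := by
    rw [hq, natDegree_prod_of_monic _ _ (fun i _ => monic_X_add_C (y i))]
    simp [natDegree_X_add_C, hM]
  have hqroots : Multiset.card q.roots = M := by
    have : q = ((u.val.map (fun i => -(y i))).map (fun a => X - C a)).prod := by
      rw [hq, Multiset.map_map, Finset.prod_eq_multiset_prod]
      congr 1
      apply Multiset.map_congr rfl
      intro i _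
      simp [sub_neg_eq_add]
    rw [this, Polynomial.roots_multiset_prod_X_sub_C]
    simp [hM]
  have hcoeff : ∀ c, c ≤ M → q.coeff c = Esym (M - c) u y := by
    intro c hc
    rw [hq, Finset.prod_X_add_C_coeff u y hc]
    rfl
  set d := M - m - 1 with hd
  have hdfpos : ∀ j : ℕ, 0 < ((d + j).descFactorial d : ℝ) := by
    intro j
    have : (d+j).descFactorial d ≠ 0 := by
      intro h
      have := Nat.descFactorial_eq_zero_iff_lt.1 h
      omega
    exact_mod_cast Nat.pos_of_ne_zero this
  obtain ⟨hgroots, hgdeg⟩ := iter_real_rooted q (by rw [hqroots, hqdeg]) d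
  rw [hqdeg] at hgdeg
  set g := derivative^[d] q with hg
  have hgdeg' : g.natDegree = m + 1 := by omega
  have hBN := coeff_newton_bottom g (by rw [hgroots]) (by omega)
  rw [hgdeg'] at hBN
  have hgc : ∀ j, j ≤ 2 → g.coeff j = ((j + d).descFactorial d : ℝ) * Esym (m + 1 - j) u y := by
    intro j hj
    rw [hg, Polynomial.coeff_iterate_derivative, hcoeff (j + d) (by omega), nsmul_eq_mul]
    congr 2
    omega
  have h0 := hgc 0 (by omega)
  have h1 := hgc 1 (by omega)
  have h2 := hgc 2 (by omega)
  rw [h0, h1, h2] at hBN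
  have hm12 : m + 1 - 2 = m - 1 := by omega
  rw [hm12] at hBN
  push_cast at hBN
  set A := ((0 + d).descFactorial d : ℝ) with hA'
  set B := ((1 + d).descFactorial d : ℝ) with hB'
  set Cc := ((2 + d).descFactorial d : ℝ) with hC'
  have hA : (0:ℝ) < A := by
    rw [hA']; have := hdfpos 0; rwa [Nat.add_comm d 0] at this
  have hB : (0:ℝ) < B := by
    rw [hB']; have := hdfpos 1; rwa [Nat.add_comm d 1] at this
  have hC : (0:ℝ) < Cc := by
    rw [hC']; have := hdfpos 2; rwa [Nat.add_comm d 2] at this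
  have hfact : B ^ 2 ≤ 2 * A * Cc := by
    rw [hA', hB', hC']
    have := descFactorial_sq_le d
    have e0 : 0 + d = d := by omega
    have e1 : 1 + d = d + 1 := by omega
    have e2 : 2 + d = d + 2 := by omega
    rw [e0, e1, e2]
    exact_mod_cast this
  set E1 := Esym (m+1) u y
  set E0 := Esym m u y
  set E2 := Esym (m-1) u y
  have key : (2*A*Cc) * (((m:ℝ)+1) * (E1*E2)) ≤ (2*A*Cc) * ((m:ℝ)*E0^2) := by
    calc (2*A*Cc) * (((m:ℝ)+1) * (E1*E2)) = 2 * ((m:ℝ)+1) * (A*E1*(Cc*E2)) := by ring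
      _ ≤ ((m:ℝ)+1-1) * (B*E0)^2 := hBN
      _ = B^2 * ((m:ℝ)*E0^2) := by push_cast; ring
      _ ≤ (2*A*Cc) * ((m:ℝ)*E0^2) :=
          mul_le_mul_of_nonneg_right hfact (by positivity)
  exact le_of_mul_le_mul_left key (by positivity)

/-- Main quantitative bound: a negative entry of a vector in the Gårding cone `Γ_{k+1}`
is controlled by `σ_k`. -/
lemma Esym_main {k : ℕ} (hk : 1 ≤ k) (u : Finset ι) (y : ι → ℝ)
    (hpos : ∀ m, 1 ≤ m → m ≤ k + 1 → 0 < Esym m u y) {a : ι} (ha : a ∈ u) (hya : y a < 0) :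
    (-(y a)) ^ k ≤ (u.card : ℝ) ^ k * Esym k u y := by
  set v := u.erase a with hv
  set b := -(y a) with hb
  have hb0 : 0 < b := by rw [hb]; linarith
  have hP : ∀ m ≤ k + 1, 0 < Esym m v y := Esym_erase_pos ha hya.le hpos
  have hcard : k + 1 ≤ v.card := le_card_of_Esym_ne_zero (hP (k+1) le_rfl).ne'
  have hucard : v.card + 1 = u.card := by
    rw [hv, Finset.card_erase_of_mem ha]
    have : 1 ≤ u.card := Finset.card_pos.2 ⟨a, ha⟩
    omega
  set ρ := Esym (k+1) v y / Esym k v y with hρ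
  have hρ0 : 0 < ρ := div_pos (hP (k+1) le_rfl) (hP k (by omega))
  -- b < ρ
  have hbρ : b < ρ := by
    have he := Esym_erase k ha y
    have hu1 : 0 < Esym (k+1) u y := hpos (k+1) (by omega) le_rfl
    rw [hρ, lt_div_iff₀ (hP k (by omega))]
    rw [he, ← hv] at hu1
    have hbe : b * Esym k v y = -(y a * Esym k v y) := by rw [hb]; ring
    linarith [hu1, hbe.le, hbe.ge]
  -- ratio chain: ρ ≤ Esym j v y / Esym (j-1) v y for 1 ≤ j ≤ k+1
  have hratio : ∀ m, 1 ≤ m → m ≤ k → Esym (m+1) v y * Esym (m-1) v y ≤ Esym m v y ^ 2 := by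
    intro m hm1 hmk
    have hN := Esym_newton v y m hm1 (by omega)
    nlinarith [hN, sq_nonneg (Esym m v y)]
  have hchain : ∀ t, t ≤ k → ρ ≤ Esym (k+1-t) v y / Esym (k-t) v y := by
    intro t
    induction t with
    | zero => intro _; simp [hρ]
    | succ t ih =>
      intro ht
      have h1 := ih (by omega)
      have e1 : k + 1 - t = (k - t - 1 + 1) + 1 := by omega
      have e2 : k - t = k - t - 1 + 1 := by omega
      have e3 : k + 1 - (t+1) = k - t - 1 + 1 := by omega
      have e4 : k - (t+1) = k - t - 1 := by omega
      have hr := hratio (k - t - 1 + 1) (by omega) (by omega)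
      have p1 : 0 < Esym (k - t - 1 + 1 + 1) v y := hP _ (by omega)
      have p2 : 0 < Esym (k - t - 1 + 1) v y := hP _ (by omega)
      have p3 : 0 < Esym (k - t - 1) v y := hP _ (by omega)
      have hstep : Esym (k - t - 1 + 1 + 1) v y / Esym (k - t - 1 + 1) v y
          ≤ Esym (k - t - 1 + 1) v y / Esym (k - t - 1) v y := by
        rw [div_le_div_iff₀ p2 p3]
        have e5 : k - t - 1 + 1 - 1 = k - t - 1 := by omega
        rw [e5] at hr
        nlinarith [hr]
      rw [e3, e4]
      calc ρ ≤ Esym (k+1-t) v y / Esym (k-t) v y := h1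
        _ = Esym (k - t - 1 + 1 + 1) v y / Esym (k - t - 1 + 1) v y := by rw [← e1, ← e2]
        _ ≤ _ := hstep
  -- ρ^j ≤ Esym j v y for 1 ≤ j ≤ k
  have hpow : ∀ j, 1 ≤ j → j ≤ k → ρ ^ j ≤ Esym j v y := by
    intro j
    induction j with
    | zero => omega
    | succ j ih =>
      intro _ hjk
      rcases Nat.eq_or_lt_of_le (show 1 ≤ j + 1 by omega) with h1 | h1
      · -- j = 0
        have hj0 : j = 0 := by omega
        subst hj0
        have := hchain k (le_refl k)
        have ek : k + 1 - k = 1 := by omega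
        have ek2 : k - k = 0 := by omega
        rw [ek, ek2, Esym_zero, div_one] at this
        simpa using this
      · have hj1 : 1 ≤ j := by omega
        have hstep := hchain (k - j) (by omega)
        have e1 : k + 1 - (k - j) = j + 1 := by omega
        have e2 : k - (k - j) = j := by omega
        rw [e1, e2] at hstep
        have hEj : 0 < Esym j v y := hP j (by omega)
        have hEj1 : 0 < Esym (j+1) v y := hP (j+1) (by omega)
        have hρj : ρ ^ j ≤ Esym j v y := ih hj1 (by omega)
        calc ρ ^ (j+1) = ρ ^ j * ρ := by ring
          _ ≤ Esym j v y * (Esym (j+1) v y / Esym j v y) := by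
              apply mul_le_mul hρj hstep hρ0.le hEj.le
          _ = Esym (j+1) v y := by field_simp
  -- sharp bound at k : b * Esym (k-1) v y ≤ (k/(k+1)) Esym k v y
  have hNk := Esym_newton v y k hk (by omega)
  have hEk : 0 < Esym k v y := hP k (by omega)
  have hEk1 : 0 < Esym (k+1) v y := hP (k+1) le_rfl
  have hEkm : 0 < Esym (k-1) v y := hP (k-1) (by omega)
  have hbE : ((k:ℝ)+1) * (b * Esym (k-1) v y) ≤ (k:ℝ) * Esym k v y := by
    have h1 : b * Esym (k-1) v y ≤ ρ * Esym (k-1) v y :=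
      mul_le_mul_of_nonneg_right hbρ.le hEkm.le
    have h2 : ((k:ℝ)+1) * (ρ * Esym (k-1) v y) ≤ (k:ℝ) * Esym k v y := by
      rw [hρ]
      rw [div_mul_eq_mul_div, ← sub_nonneg]
      have expand : (k:ℝ) * Esym k v y - ((k:ℝ)+1) * (Esym (k+1) v y * Esym (k-1) v y / Esym k v y)
          = ((k:ℝ) * Esym k v y ^ 2 - ((k:ℝ)+1) * (Esym (k+1) v y * Esym (k-1) v y)) / Esym k v y := by
        field_simp
      rw [expand]
      apply div_nonneg _ hEk.le
      linarith [hNk]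
    calc ((k:ℝ)+1) * (b * Esym (k-1) v y) ≤ ((k:ℝ)+1) * (ρ * Esym (k-1) v y) := by
          apply mul_le_mul_of_nonneg_left h1 (by positivity)
      _ ≤ (k:ℝ) * Esym k v y := h2
  -- Esym k u y ≥ Esym k v y / (k+1)
  have hEku : Esym k v y ≤ ((k:ℝ)+1) * Esym k u y := by
    have he : Esym k u y = Esym k v y - b * Esym (k-1) v y := by
      have h := Esym_erase (k-1) ha y
      have ek : k - 1 + 1 = k := by omega
      rw [ek] at h
      rw [h, ← hv, hb]
      ring
    rw [he]
    have : ((k:ℝ)+1) * (b * Esym (k-1) v y) ≤ (k:ℝ) * Esym k v y := hbE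
    nlinarith [this]
  -- conclude
  have hbk : b ^ k ≤ Esym k v y := by
    calc b ^ k ≤ ρ ^ k := pow_le_pow_left₀ hb0.le hbρ.le k
      _ ≤ Esym k v y := hpow k hk (le_refl k)
  have hEkupos : 0 < Esym k u y := by nlinarith [hEku, hEk]
  have hcard' : ((k:ℝ)+1) ≤ (u.card : ℝ) ^ k := by
    have h1 : (k+1 : ℝ) ≤ (u.card : ℝ) := by
      have : k + 1 ≤ u.card := by omega
      exact_mod_cast this
    have h2 : (u.card : ℝ) ≤ (u.card : ℝ) ^ k := by
      apply le_self_pow₀ _ (by omega)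
      have : (1:ℕ) ≤ u.card := by omega
      exact_mod_cast this
    linarith
  calc b ^ k ≤ Esym k v y := hbk
    _ ≤ ((k:ℝ)+1) * Esym k u y := hEku
    _ ≤ (u.card : ℝ) ^ k * Esym k u y := by
        apply mul_le_mul_of_nonneg_right hcard' hEkupos.le

end EsymTheory

/-- The Hessian matrix of `u : (Fin n → ℝ) → ℝ` at a point. -/
noncomputable def hessian (n : ℕ) (u : (Fin n → ℝ) → ℝ) (x : Fin n → ℝ) :
    Matrix (Fin n) (Fin n) ℝ :=
  fun i j => fderiv ℝ (fun y => fderiv ℝ u y (Pi.single j 1)) x (Pi.single i 1)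

/-- scalar step : each eigenvalue is ≥ -K₀ -/
lemma eig_bound {n k : ℕ} (hk : 1 ≤ k) (hkn : k + 1 ≤ n) {w : Fin n → ℝ} {F : ℝ} (hF : 0 < F)
    (hpos : ∀ m, 1 ≤ m → m ≤ k + 1 → 0 < esymm n m w) (hkF : esymm n k w ≤ F) (i : Fin n) :
    0 ≤ w i + (n : ℝ) * F ^ ((1 : ℝ) / k) := by
  have hrpos : 0 < F ^ ((1 : ℝ) / k) := Real.rpow_pos_of_pos hF _
  have hn0 : (0:ℝ) < (n:ℝ) := by
    have : 0 < n := by omega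
    exact_mod_cast this
  rcases le_or_gt 0 (w i) with hw | hw
  · positivity
  · have hmain := Esym_main hk Finset.univ w
      (fun m h1 h2 => hpos m h1 h2) (Finset.mem_univ i) hw
    have hcard : (Finset.univ : Finset (Fin n)).card = n := by simp
    rw [hcard] at hmain
    have hEsym : Esym k Finset.univ w = esymm n k w := rfl
    rw [hEsym] at hmain
    have h2 : (-(w i)) ^ k ≤ (n:ℝ) ^ k * F := by
      calc (-(w i)) ^ k ≤ (n:ℝ) ^ k * esymm n k w := hmain
        _ ≤ (n:ℝ) ^ k * F := by
            apply mul_le_mul_of_nonneg_left hkF (by positivity)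
    have hkey : ((n:ℝ) * F ^ ((1:ℝ)/k)) ^ k = (n:ℝ) ^ k * F := by
      rw [mul_pow, ← Real.rpow_natCast (F ^ ((1:ℝ)/k)) k, ← Real.rpow_mul hF.le]
      congr 1
      rw [one_div, inv_mul_cancel₀, Real.rpow_one]
      exact Nat.cast_ne_zero.2 (by omega)
    have h3 : (-(w i)) ^ k ≤ ((n:ℝ) * F ^ ((1:ℝ)/k)) ^ k := by rw [hkey]; exact h2
    have h4 : -(w i) ≤ (n:ℝ) * F ^ ((1:ℝ)/k) :=
      (pow_le_pow_iff_left₀ (by linarith) (by positivity) (by omega)).1 h3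
    linarith

theorem stmt2 (n k : ℕ) (hk : 1 ≤ k) (hkn : k ≤ n - 1)
    (Ω : Set (Fin n → ℝ)) (hΩ : IsOpen Ω)
    (u : (Fin n → ℝ) → ℝ) (hu : ContDiffOn ℝ 2 u Ω)
    (f : (Fin n → ℝ) → ℝ → (Fin n → ℝ) → ℝ) (F K₀ : ℝ) (hF : 0 < F)
    (hsym : ∀ x ∈ Ω, (hessian n u x).IsHermitian)
    -- `(k+1)`-convexity: the eigenvalues of the Hessian lie in the Gårding cone `Γ_{k+1}`
    (hconv : ∀ x (hx : x ∈ Ω), ∀ m, 1 ≤ m → m ≤ k + 1 →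
      0 < esymm n m (hsym x hx).eigenvalues)
    -- the equation `σ_k(D²u) = f(x, u, ∇u)` in `Ω`
    (heq : ∀ x (hx : x ∈ Ω),
      esymm n k (hsym x hx).eigenvalues
        = f x (u x) (fun i => fderiv ℝ u x (Pi.single i 1)))
    -- `sup_Ω f ≤ F`
    (hfF : ∀ x ∈ Ω, f x (u x) (fun i => fderiv ℝ u x (Pi.single i 1)) ≤ F)
    (hK₀ : K₀ = (n : ℝ) * F ^ ((1 : ℝ) / k)) :
    ∀ x ∈ Ω, (hessian n u x + K₀ • (1 : Matrix (Fin n) (Fin n) ℝ)).PosSemidef := by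
  intro x hx
  set A := hessian n u x with hA
  have hHerm : A.IsHermitian := hsym x hx
  set w := hHerm.eigenvalues with hw
  -- n ≥ k + 1
  have hn : k + 1 ≤ n := by
    have h1 := hconv x hx (k+1) (by omega) le_rfl
    by_contra hc
    push_neg at hc
    have : Finset.powersetCard (k+1) (Finset.univ : Finset (Fin n)) = ∅ := by
      apply Finset.powersetCard_eq_empty.2
      simpa using by omega
    rw [esymm, this] at h1
    simp at h1
  have hkF : esymm n k w ≤ F := by
    rw [hw, heq x hx]
    exact hfF x hx
  have heig : ∀ i, 0 ≤ w i + K₀ := by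
    intro i
    rw [hK₀]
    exact eig_bound hk hn hF (fun m h1 h2 => hconv x hx m h1 h2) hkF i
  -- spectral decomposition
  have hspec := hHerm.spectral_theorem
  set U : Matrix (Fin n) (Fin n) ℝ := (Matrix.IsHermitian.eigenvectorUnitary hHerm : Matrix (Fin n) (Fin n) ℝ) with hU
  have hUU : U * star U = 1 :=
    Matrix.mem_unitaryGroup_iff.mp (Matrix.IsHermitian.eigenvectorUnitary hHerm).2
  have hofReal : (RCLike.ofReal ∘ w : Fin n → ℝ) = w := by
    funext i; simp [RCLike.ofReal]
  have hdecomp : A + K₀ • (1 : Matrix (Fin n) (Fin n) ℝ)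
      = U * Matrix.diagonal (fun i => w i + K₀) * star U := by
    have h1 : K₀ • (1 : Matrix (Fin n) (Fin n) ℝ)
        = U * (K₀ • (1 : Matrix (Fin n) (Fin n) ℝ)) * star U := by
      rw [Matrix.mul_smul, mul_one, Matrix.smul_mul, hUU]
    have hDsum : Matrix.diagonal (RCLike.ofReal ∘ w) + K₀ • (1 : Matrix (Fin n) (Fin n) ℝ)
        = Matrix.diagonal (fun i => w i + K₀) := by
      rw [hofReal, Matrix.smul_one_eq_diagonal, ← Matrix.diagonal_add]
    calc A + K₀ • (1 : Matrix (Fin n) (Fin n) ℝ)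
        = U * Matrix.diagonal (RCLike.ofReal ∘ w) * star U
          + U * (K₀ • (1 : Matrix (Fin n) (Fin n) ℝ)) * star U := by
            rw [hspec, Unitary.conjStarAlgAut_apply, ← h1]
      _ = U * (Matrix.diagonal (RCLike.ofReal ∘ w) + K₀ • (1 : Matrix (Fin n) (Fin n) ℝ)) * star U := by
            rw [Matrix.mul_add, Matrix.add_mul]
      _ = U * Matrix.diagonal (fun i => w i + K₀) * star U := by rw [hDsum]
  rw [hdecomp]
  apply Matrix.PosSemidef.mul_mul_conjTranspose_same
  · exact Matrix.PosSemidef.diagonal (by intro i; simpa using heig i)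
end

section
/- Let λ ∈ Γ_{μ+2} ⊂ ℝⁿ with λ₁ ≥ ⋯ ≥ λₙ and 1 ≤ μ ≤ n−2. Then for every index a with a ≤ μ, the partial derivative σ_μ^{aa}(λ) = σ_{μ−1}(λ|a) satisfies σ_μ^{aa}(λ) ≥ (λ₁ ⋯ λ_μ)/λ_a. -/
/-- The `m`-th elementary symmetric polynomial of the entries of `x` with indices in `s`. -/
noncomputable def esymmRes (n : ℕ) (s : Finset (Fin n)) (m : ℕ) (x : Fin n → ℝ) : ℝ :=
  ∑ t ∈ Finset.powersetCard m s, ∏ i ∈ t, x i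

open Multiset Polynomial

namespace SigmaAux

/-- esymm of the empty index -/
lemma esymm_zero' (s : Multiset ℝ) : s.esymm 0 = 1 := by
  simp [Multiset.esymm, Multiset.powersetCard_zero_left]

lemma esymm_cons (a : ℝ) (s : Multiset ℝ) (m : ℕ) :
    (a ::ₘ s).esymm (m + 1) = s.esymm (m + 1) + a * s.esymm m := by
  simp only [Multiset.esymm, Multiset.powersetCard_cons, Multiset.map_add, Multiset.sum_add,
    Multiset.map_map]
  congr 1
  rw [← Multiset.sum_map_mul_left]
  congr 1
  apply Multiset.map_congr rfl
  intro t _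
  simp [Multiset.prod_cons]

lemma esymm_eq_zero_of_card_lt {s : Multiset ℝ} {m : ℕ} (h : Multiset.card s < m) :
    s.esymm m = 0 := by
  simp [Multiset.esymm, Multiset.powersetCard_eq_empty _ h]

lemma esymm_one' (s : Multiset ℝ) : s.esymm 1 = s.sum := by
  simp [Multiset.esymm, Multiset.powersetCard_one, Multiset.map_map, Function.comp_def]

lemma esymm_card_eq_prod (s : Multiset ℝ) : s.esymm (Multiset.card s) = s.prod := by
  induction s using Multiset.induction with
  | empty => simp [esymm_zero']
  | cons a t ih =>
    rw [Multiset.card_cons, esymm_cons, ih, esymm_eq_zero_of_card_lt (by simp),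
      Multiset.prod_cons, zero_add]

lemma esymm_nonneg {s : Multiset ℝ} (h : ∀ x ∈ s, 0 ≤ x) (m : ℕ) : 0 ≤ s.esymm m := by
  apply Multiset.sum_nonneg
  intro x hx
  obtain ⟨t, ht, rfl⟩ := Multiset.mem_map.1 hx
  have ht' := (Multiset.mem_powersetCard.1 ht).1
  exact Multiset.prod_nonneg fun y hy => h y (Multiset.mem_of_le ht' hy)

lemma prod_le_esymm {s z : Multiset ℝ} (h : ∀ x ∈ s, 0 ≤ x) (hz : z ≤ s) {m : ℕ}
    (hc : Multiset.card z = m) : z.prod ≤ s.esymm m := by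
  have hmem : z.prod ∈ (s.powersetCard m).map Multiset.prod :=
    Multiset.mem_map_of_mem _ (Multiset.mem_powersetCard.2 ⟨hz, hc⟩)
  obtain ⟨r, hr⟩ := Multiset.exists_cons_of_mem hmem
  rw [Multiset.esymm, hr, Multiset.sum_cons]
  have : 0 ≤ r.sum := by
    apply Multiset.sum_nonneg
    intro x hx
    have : x ∈ (s.powersetCard m).map Multiset.prod := by rw [hr]; exact Multiset.mem_cons_of_mem hx
    obtain ⟨t, ht, rfl⟩ := Multiset.mem_map.1 this
    exact Multiset.prod_nonneg fun y hy => h y (Multiset.mem_of_le (Multiset.mem_powersetCard.1 ht).1 hy)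
  linarith

lemma esymm_pos_of_count {s : Multiset ℝ} (h : ∀ x ∈ s, 0 ≤ x) {m : ℕ}
    (hm : m ≤ Multiset.card (s.filter (fun x => 0 < x))) : 0 < s.esymm m := by
  induction m generalizing s with
  | zero => simp [esymm_zero']
  | succ m ih =>
    have hne : ∃ x ∈ s, 0 < x := by
      have : 0 < Multiset.card (s.filter (fun x => 0 < x)) := lt_of_lt_of_le (Nat.succ_pos m) hm
      obtain ⟨x, hx⟩ := Multiset.card_pos_iff_exists_mem.1 this
      exact ⟨x, (Multiset.mem_filter.1 hx).1, (Multiset.mem_filter.1 hx).2⟩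
    obtain ⟨x, hxs, hxpos⟩ := hne
    obtain ⟨t, rfl⟩ := Multiset.exists_cons_of_mem hxs
    rw [esymm_cons]
    have ht : ∀ y ∈ t, 0 ≤ y := fun y hy => h y (Multiset.mem_cons_of_mem hy)
    have hcard : m ≤ Multiset.card (t.filter (fun x => 0 < x)) := by
      have heq : (x ::ₘ t).filter (fun x => 0 < x) = x ::ₘ t.filter (fun x => 0 < x) :=
        Multiset.filter_cons_of_pos _ hxpos
      rw [heq, Multiset.card_cons] at hm
      omega
    have := ih ht hcard
    have h2 : 0 ≤ t.esymm (m + 1) := esymm_nonneg ht _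
    nlinarith


/-- the Gårding-type condition: the first `k` elementary symmetric functions are positive. -/
def Gam (s : Multiset ℝ) (k : ℕ) : Prop := ∀ j, 1 ≤ j → j ≤ k → 0 < s.esymm j

lemma gam_mono {s : Multiset ℝ} {k k' : ℕ} (h : Gam s k) (hk : k' ≤ k) : Gam s k' :=
  fun j hj1 hj2 => h j hj1 (hj2.trans hk)

lemma gam_esymm_pos {s : Multiset ℝ} {k : ℕ} (h : Gam s k) {j : ℕ} (hj : j ≤ k) :
    0 < s.esymm j := by
  rcases Nat.eq_zero_or_pos j with rfl | hj1
  · rw [esymm_zero']; norm_num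
  · exact h j hj1 hj

lemma gam_card_le {s : Multiset ℝ} {k : ℕ} (h : Gam s k) (hk : 1 ≤ k) :
    k ≤ Multiset.card s := by
  by_contra hc
  have := h k hk le_rfl
  rw [esymm_eq_zero_of_card_lt (by omega)] at this
  exact lt_irrefl _ this

/-- removing a nonpositive entry preserves (and improves) the Gårding condition -/
lemma gam_cons_nonpos {a : ℝ} {s : Multiset ℝ} {k : ℕ} (ha : a ≤ 0)
    (h : Gam (a ::ₘ s) k) : Gam s k := by
  have key : ∀ j, j ≤ k → 0 < s.esymm j := by
    intro j
    induction j with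
    | zero => intro _; rw [esymm_zero']; norm_num
    | succ j ih =>
      intro hjk
      have h1 := ih (by omega)
      have h2 := h (j+1) (by omega) hjk
      rw [esymm_cons] at h2
      nlinarith
  exact fun j _ hj2 => key j hj2

/-- a multiset in `Gam · k` has at least `k` positive entries -/
lemma gam_pos_count {s : Multiset ℝ} {k : ℕ} (h : Gam s k) :
    k ≤ Multiset.card (s.filter (fun x => 0 < x)) := by
  induction s using Multiset.strongInductionOn with
  | _ s ihs =>
    by_cases hneg : ∃ b ∈ s, b < 0
    · obtain ⟨b, hbs, hb⟩ := hneg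
      obtain ⟨t, rfl⟩ := Multiset.exists_cons_of_mem hbs
      have ht : Gam t k := gam_cons_nonpos (le_of_lt hb) h
      have heq : (b ::ₘ t).filter (fun x => 0 < x) = t.filter (fun x => 0 < x) :=
        Multiset.filter_cons_of_neg _ (by linarith)
      rw [heq]
      exact ihs t (Multiset.lt_cons_self t b) ht
    · push_neg at hneg
      have hnn : ∀ x ∈ s, 0 ≤ x := fun x hx => hneg x hx
      rcases Nat.eq_zero_or_pos k with rfl | hk
      · omega
      by_contra hc
      push_neg at hc
      have hzero : s.esymm k = 0 := by
        rw [Multiset.esymm]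
        apply Multiset.sum_eq_zero
        intro x hx
        obtain ⟨t, ht, rfl⟩ := Multiset.mem_map.1 hx
        obtain ⟨hts, htc⟩ := Multiset.mem_powersetCard.1 ht
        by_cases hall : ∀ y ∈ t, 0 < y
        · exfalso
          have : t ≤ s.filter (fun x => 0 < x) := Multiset.le_filter.2 ⟨hts, hall⟩
          have := Multiset.card_le_card this
          omega
        · push_neg at hall
          obtain ⟨y, hyt, hy⟩ := hall
          have hy0 : y = 0 := le_antisymm hy (hnn y (Multiset.mem_of_le hts hyt))
          exact Multiset.prod_eq_zero (hy0 ▸ hyt)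
      have := h k hk le_rfl
      rw [hzero] at this
      exact lt_irrefl _ this


/-- reflection identity: `σ_p(s) = (∏ s) σ_q(s⁻¹)` when `p + q = card s`. -/
lemma esymm_reflect (s : Multiset ℝ) (h0 : (0:ℝ) ∉ s) (p q : ℕ) (hpq : p + q = Multiset.card s) :
    s.esymm p = s.prod * ((s.map fun x => x⁻¹).esymm q) := by
  induction s using Multiset.induction generalizing p q with
  | empty =>
    simp only [Multiset.card_zero] at hpq
    obtain ⟨rfl, rfl⟩ : p = 0 ∧ q = 0 := by omega
    simp [esymm_zero']
  | cons a t ih =>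
    have ha : a ≠ 0 := fun h => h0 (h ▸ Multiset.mem_cons_self a t)
    have h0t : (0:ℝ) ∉ t := fun h => h0 (Multiset.mem_cons_of_mem h)
    have hpt : t.prod ≠ 0 := Multiset.prod_ne_zero h0t
    rw [Multiset.card_cons] at hpq
    rw [Multiset.map_cons, Multiset.prod_cons]
    cases p with
    | zero =>
      have hq : q = Multiset.card t + 1 := by omega
      subst hq
      rw [esymm_zero']
      have hcard : Multiset.card ((a⁻¹ ::ₘ t.map fun x => x⁻¹)) = Multiset.card t + 1 := by simp
      rw [show Multiset.card t + 1 = Multiset.card ((a⁻¹ ::ₘ t.map fun x => x⁻¹)) from hcard.symm,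
        esymm_card_eq_prod, Multiset.prod_cons]
      rw [Multiset.prod_map_inv']
      field_simp
    | succ p' =>
      rw [esymm_cons]
      cases q with
      | zero =>
        have hp' : p' = Multiset.card t := by omega
        rw [esymm_zero', hp', esymm_card_eq_prod, esymm_eq_zero_of_card_lt (by omega)]
        ring
      | succ q' =>
        have ih1 : t.esymm p' = t.prod * ((t.map fun x => x⁻¹).esymm (q' + 1)) :=
          ih h0t p' (q' + 1) (by omega)
        have ih2 : t.esymm (p' + 1) = t.prod * ((t.map fun x => x⁻¹).esymm q') :=
          ih h0t (p' + 1) q' (by omega)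
        rw [ih1, ih2, esymm_cons]
        field_simp
        ring
  
/-- Cauchy–Schwarz for multisets -/
lemma sq_sum_le (s : Multiset ℝ) :
    s.sum ^ 2 ≤ (Multiset.card s : ℝ) * ((s.map fun x => x ^ 2).sum) := by
  induction s using Multiset.induction with
  | empty => simp
  | cons a t ih =>
    have hT : 0 ≤ (t.map fun x => x ^ 2).sum :=
      Multiset.sum_nonneg (by intro x hx; obtain ⟨y, _, rfl⟩ := Multiset.mem_map.1 hx; positivity)
    have hn : (0:ℝ) ≤ (Multiset.card t : ℝ) := Nat.cast_nonneg _
    rw [Multiset.sum_cons, Multiset.map_cons, Multiset.sum_cons, Multiset.card_cons]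
    push_cast
    by_cases ht0 : t = 0
    · subst ht0; simp
    · have hn1 : (1:ℝ) ≤ (Multiset.card t : ℝ) := by
        have : t ≠ 0 := ht0
        have := Multiset.card_pos.2 this
        exact_mod_cast this
      nlinarith [sq_nonneg ((Multiset.card t : ℝ) * a - t.sum), ih, hn1, hT]

/-- `(Σ s)² = Σ s² + 2 σ₂(s)` -/
lemma sq_sum_eq (s : Multiset ℝ) :
    s.sum ^ 2 = (s.map fun x => x ^ 2).sum + 2 * s.esymm 2 := by
  induction s using Multiset.induction with
  | empty => simp [esymm_eq_zero_of_card_lt (show Multiset.card (0 : Multiset ℝ) < 2 by simp)]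
  | cons a t ih =>
    rw [Multiset.sum_cons, Multiset.map_cons, Multiset.sum_cons,
      show (2:ℕ) = 1 + 1 from rfl, esymm_cons, esymm_one']
    ring_nf
    ring_nf at ih
    nlinarith [ih]

/-- The basic Newton inequality at the top level: for a multiset of `i+2` reals. -/
lemma newton_base (i : ℕ) (ν : Multiset ℝ) (hc : Multiset.card ν = i + 2) :
    2 * ((i:ℝ) + 2) * (ν.esymm (i + 2) * ν.esymm i) ≤ ((i:ℝ) + 1) * (ν.esymm (i + 1)) ^ 2 := by
  by_cases h0 : (0:ℝ) ∈ ν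
  · have : ν.esymm (i + 2) = 0 := by
      rw [← hc, esymm_card_eq_prod]; exact Multiset.prod_eq_zero h0
    rw [this]
    have : (0:ℝ) ≤ ((i:ℝ) + 1) * (ν.esymm (i + 1)) ^ 2 := by positivity
    linarith
  · set τ := ν.map fun x => x⁻¹ with hτ
    have hcτ : Multiset.card τ = i + 2 := by simp [hτ, hc]
    have e1 : ν.esymm (i + 1) = ν.prod * τ.esymm 1 := esymm_reflect ν h0 (i+1) 1 (by omega)
    have e2 : ν.esymm i = ν.prod * τ.esymm 2 := esymm_reflect ν h0 i 2 (by omega)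
    have e3 : ν.esymm (i + 2) = ν.prod := by rw [← hc, esymm_card_eq_prod]
    have core : 2 * ((i:ℝ) + 2) * τ.esymm 2 ≤ ((i:ℝ) + 1) * τ.sum ^ 2 := by
      have hCS := sq_sum_le τ
      have hI := sq_sum_eq τ
      rw [hcτ] at hCS
      push_cast at hCS
      nlinarith [hCS, hI]
    rw [e1, e2, e3, esymm_one']
    nlinarith [mul_le_mul_of_nonneg_left core (sq_nonneg ν.prod)]


/-- `C(n-q, r) * C(n, q) = C(n, r) * C(d, q)` when `n = d + r`, `q ≤ d`. -/
lemma choose_swap {n d r q : ℕ} (hn : n = d + r) (hq : q ≤ d) :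
    (n - q).choose r * n.choose q = n.choose r * d.choose q := by
  have e1 : (n - q).choose r * r.factorial * (d - q).factorial = (n - q).factorial := by
    have h := Nat.choose_mul_factorial_mul_factorial (show r ≤ n - q by omega)
    rwa [show n - q - r = d - q by omega] at h
  have e2 : n.choose q * q.factorial * (n - q).factorial = n.factorial :=
    Nat.choose_mul_factorial_mul_factorial (by omega)
  have e3 : n.choose r * r.factorial * d.factorial = n.factorial := by
    have h := Nat.choose_mul_factorial_mul_factorial (show r ≤ n by omega)
    rwa [show n - r = d by omega] at h
  have e4 : d.choose q * q.factorial * (d - q).factorial = d.factorial :=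
    Nat.choose_mul_factorial_mul_factorial hq
  have hX : 0 < q.factorial * r.factorial * (d - q).factorial := by positivity
  apply Nat.eq_of_mul_eq_mul_right hX
  calc (n - q).choose r * n.choose q * (q.factorial * r.factorial * (d - q).factorial)
      = (n.choose q * q.factorial) * ((n - q).choose r * r.factorial * (d - q).factorial) := by ring
    _ = (n.choose q * q.factorial) * (n - q).factorial := by rw [e1]
    _ = n.factorial := by rw [← e2]
    _ = (n.choose r * r.factorial) * d.factorial := by rw [← e3]
    _ = (n.choose r * r.factorial) * (d.choose q * q.factorial * (d - q).factorial) := by rw [e4]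
    _ = n.choose r * d.choose q * (q.factorial * r.factorial * (d - q).factorial) := by ring

/-- `c_q * C(n,q) = A * C(d,q)` with `c_q = (n-q).descFactorial r`, `A = n.descFactorial r`. -/
lemma nid {n d r q : ℕ} (hn : n = d + r) (hq : q ≤ d) :
    (n - q).descFactorial r * n.choose q = n.descFactorial r * d.choose q := by
  rw [Nat.descFactorial_eq_factorial_mul_choose, Nat.descFactorial_eq_factorial_mul_choose]
  rw [mul_assoc, mul_assoc, choose_swap hn hq]

lemma two_choose (i : ℕ) : 2 * (i + 2).choose i = (i + 1) * (i + 2) := by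
  have h1 : (i + 2).choose i = (i + 2).choose 2 := by
    have h := Nat.choose_symm (show 2 ≤ i + 2 by omega)
    rwa [show i + 2 - 2 = i from by omega] at h
  rw [h1, mul_comm, Nat.choose_succ_right_eq (i + 2) 1, Nat.choose_one_right,
    show i + 2 - 1 = i + 1 from by omega]
  ring

theorem newton_normalized (s : Multiset ℝ) (i : ℕ) (h : i + 2 ≤ Multiset.card s) :
    s.esymm i * s.esymm (i + 2) * ((Multiset.card s).choose (i + 1) : ℝ) ^ 2 ≤
      (s.esymm (i + 1)) ^ 2 * (((Multiset.card s).choose i : ℝ) * ((Multiset.card s).choose (i + 2) : ℝ)) := by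
  set n := Multiset.card s with hns
  set d := i + 2 with hd
  set r := n - d with hr
  have hn : n = d + r := by omega
  -- the polynomial with roots `s`
  set f : ℝ[X] := (s.map fun a => X - C a).prod with hf
  have hfdeg : f.natDegree = n := by
    rw [hf, natDegree_multiset_prod_X_sub_C_eq_card, hns]
  have hfroots : f.roots = s := roots_multiset_prod_X_sub_C s
  have hfcoeff : ∀ q ≤ n, f.coeff (n - q) = (-1 : ℝ) ^ q * s.esymm q := by
    intro q hq
    rw [hf, Multiset.prod_X_sub_C_coeff s (show n - q ≤ Multiset.card s by omega)]
    rw [show Multiset.card s - (n - q) = q by omega]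
  set g : ℝ[X] := derivative^[r] f with hg
  have hcoeffg : ∀ q ≤ d, g.coeff (d - q) = ((n - q).descFactorial r : ℝ) * ((-1 : ℝ) ^ q * s.esymm q) := by
    intro q hq
    rw [hg, Polynomial.coeff_iterate_derivative, show d - q + r = n - q by omega,
      hfcoeff q (by omega), nsmul_eq_mul]
  have hgtop : g.coeff d = (n.descFactorial r : ℝ) := by
    have h0 := hcoeffg 0 (by omega)
    simpa [esymm_zero'] using h0
  have hAne : (n.descFactorial r : ℝ) ≠ 0 := by
    have hnz : n.descFactorial r ≠ 0 := fun hz => by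
      have := Nat.descFactorial_eq_zero_iff_lt.1 hz; omega
    exact Nat.cast_ne_zero.2 hnz
  have hgne : g ≠ 0 := by
    intro hzero
    rw [hzero, Polynomial.coeff_zero] at hgtop
    exact hAne hgtop.symm
  have hdegle : g.natDegree ≤ d := by
    rw [Polynomial.natDegree_le_iff_coeff_eq_zero]
    intro N hN
    rw [hg, Polynomial.coeff_iterate_derivative]
    have hfz : f.coeff (N + r) = 0 := Polynomial.coeff_eq_zero_of_natDegree_lt (by omega)
    rw [hfz, smul_zero]
  have hdeg : g.natDegree = d :=
    le_antisymm hdegle (Polynomial.le_natDegree_of_ne_zero (by rw [hgtop]; exact hAne))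
  -- root counting via Rolle
  have hcount : ∀ t : ℕ, n - t ≤ Multiset.card (derivative^[t] f).roots := by
    intro t
    induction t with
    | zero => simp [hfroots, hns]
    | succ t ih =>
      have h1 := Polynomial.card_roots_le_derivative (derivative^[t] f)
      have h2 : (⇑derivative)^[t+1] f = derivative ((⇑derivative)^[t] f) :=
        Function.iterate_succ_apply' _ _ _
      rw [h2]
      omega
  have hνcard : Multiset.card g.roots = d := by
    have h1 : Multiset.card g.roots ≤ d := hdeg ▸ g.card_roots'
    have h2 := hcount r
    rw [← hg] at h2
    omega
  have hsplits : g.Splits := by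
    rw [Polynomial.splits_iff_card_roots, hνcard, hdeg]
  have hfact : g = C g.leadingCoeff * (g.roots.map fun a => X - C a).prod :=
    hsplits.eq_prod_roots
  have hlead : g.leadingCoeff = (n.descFactorial r : ℝ) := by
    rw [Polynomial.leadingCoeff, hdeg, hgtop]
  set ν := g.roots with hν
  have hcoeffν : ∀ q ≤ d, g.coeff (d - q) = (n.descFactorial r : ℝ) * ((-1 : ℝ) ^ q * ν.esymm q) := by
    intro q hq
    conv_lhs => rw [hfact]
    rw [Polynomial.coeff_C_mul,
      Multiset.prod_X_sub_C_coeff ν (show d - q ≤ Multiset.card ν by rw [hνcard]; omega),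
      hνcard, hlead, show d - (d - q) = q by omega]
  have key : ∀ q ≤ d, (n.descFactorial r : ℝ) * ν.esymm q = ((n - q).descFactorial r : ℝ) * s.esymm q := by
    intro q hq
    have h1 := hcoeffg q hq
    have h2 := hcoeffν q hq
    rw [h1] at h2
    have hne : ((-1 : ℝ)) ^ q ≠ 0 := pow_ne_zero _ (by norm_num)
    have h3 : (-1 : ℝ) ^ q * (((n - q).descFactorial r : ℝ) * s.esymm q)
        = (-1 : ℝ) ^ q * ((n.descFactorial r : ℝ) * ν.esymm q) := by linear_combination h2
    exact (mul_left_cancel₀ hne h3).symm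
  -- base inequality for ν, multiplied by A²
  have hbase := newton_base i ν hνcard
  set A : ℝ := (n.descFactorial r : ℝ) with hA
  have hbase2 : 2 * ((i:ℝ) + 2) * ((A * ν.esymm (i + 2)) * (A * ν.esymm i)) ≤
      ((i:ℝ) + 1) * (A * ν.esymm (i + 1)) ^ 2 := by
    nlinarith [mul_le_mul_of_nonneg_left hbase (sq_nonneg A)]
  set c0 : ℝ := ((n - i).descFactorial r : ℝ) with hc0
  set c1 : ℝ := ((n - (i+1)).descFactorial r : ℝ) with hc1
  set c2 : ℝ := ((n - (i+2)).descFactorial r : ℝ) with hc2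
  have k0 := key i (by omega)
  have k1 := key (i+1) (by omega)
  have k2 := key (i+2) (by omega)
  have H : 2 * ((i:ℝ) + 2) * ((c2 * s.esymm (i + 2)) * (c0 * s.esymm i)) ≤
      ((i:ℝ) + 1) * (c1 * s.esymm (i + 1)) ^ 2 := by
    rw [hc0, hc1, hc2, ← k0, ← k1, ← k2]
    exact hbase2
  -- constants
  set C0 : ℝ := (n.choose i : ℝ) with hC0
  set C1 : ℝ := (n.choose (i+1) : ℝ) with hC1
  set C2 : ℝ := (n.choose (i+2) : ℝ) with hC2
  have n0 : c0 * C0 = A * ((d.choose i : ℕ) : ℝ) := by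
    rw [hc0, hC0, hA]
    exact_mod_cast congrArg (fun k : ℕ => (k : ℝ)) (nid hn (show i ≤ d by omega))
  have n1 : c1 * C1 = A * (((d.choose (i+1)) : ℕ) : ℝ) := by
    rw [hc1, hC1, hA]
    exact_mod_cast congrArg (fun k : ℕ => (k : ℝ)) (nid hn (show i + 1 ≤ d by omega))
  have n2 : c2 * C2 = A * (((d.choose (i+2)) : ℕ) : ℝ) := by
    rw [hc2, hC2, hA]
    exact_mod_cast congrArg (fun k : ℕ => (k : ℝ)) (nid hn (show i + 2 ≤ d by omega))
  have hd1 : ((d.choose (i+1) : ℕ) : ℝ) = (i:ℝ) + 2 := by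
    rw [hd, Nat.choose_succ_self_right]; push_cast; ring
  have hd2 : ((d.choose (i+2) : ℕ) : ℝ) = 1 := by
    rw [hd, Nat.choose_self]; norm_num
  have hd3 : 2 * ((d.choose i : ℕ) : ℝ) = ((i:ℝ) + 1) * ((i:ℝ) + 2) := by
    rw [hd]
    exact_mod_cast congrArg (fun k : ℕ => (k : ℝ)) (two_choose i)
  have CONST : ((i:ℝ) + 1) * (c1 * C1) ^ 2 = 2 * ((i:ℝ) + 2) * ((c2 * C2) * (c0 * C0)) := by
    rw [n0, n1, n2, hd1, hd2]
    have : ((d.choose i : ℕ) : ℝ) = ((i:ℝ) + 1) * ((i:ℝ) + 2) / 2 := by linarith [hd3]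
    rw [this]
    ring
  -- positivity of the c's
  have hc0pos : 0 < c0 := by
    rw [hc0]
    have hnz : (n - i).descFactorial r ≠ 0 := fun hz => by
      have := Nat.descFactorial_eq_zero_iff_lt.1 hz; omega
    exact_mod_cast Nat.pos_of_ne_zero hnz
  have hc2pos : 0 < c2 := by
    rw [hc2]
    have hnz : (n - (i + 2)).descFactorial r ≠ 0 := fun hz => by
      have := Nat.descFactorial_eq_zero_iff_lt.1 hz; omega
    exact_mod_cast Nat.pos_of_ne_zero hnz
  -- conclude
  have hKpos : (0:ℝ) < 2 * ((i:ℝ) + 2) * (c2 * c0) := by positivity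
  have hfinal : (2 * ((i:ℝ) + 2) * (c2 * c0)) * (s.esymm i * s.esymm (i + 2) * C1 ^ 2) ≤
      (2 * ((i:ℝ) + 2) * (c2 * c0)) * ((s.esymm (i + 1)) ^ 2 * (C0 * C2)) := by
    have step1 : (2 * ((i:ℝ) + 2) * ((c2 * s.esymm (i + 2)) * (c0 * s.esymm i))) * C1 ^ 2 ≤
        (((i:ℝ) + 1) * (c1 * s.esymm (i + 1)) ^ 2) * C1 ^ 2 :=
      mul_le_mul_of_nonneg_right H (sq_nonneg C1)
    calc (2 * ((i:ℝ) + 2) * (c2 * c0)) * (s.esymm i * s.esymm (i + 2) * C1 ^ 2)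
        = (2 * ((i:ℝ) + 2) * ((c2 * s.esymm (i + 2)) * (c0 * s.esymm i))) * C1 ^ 2 := by ring
      _ ≤ (((i:ℝ) + 1) * (c1 * s.esymm (i + 1)) ^ 2) * C1 ^ 2 := step1
      _ = (s.esymm (i + 1)) ^ 2 * (((i:ℝ) + 1) * (c1 * C1) ^ 2) := by ring
      _ = (s.esymm (i + 1)) ^ 2 * (2 * ((i:ℝ) + 2) * ((c2 * C2) * (c0 * C0))) := by rw [CONST]
      _ = (2 * ((i:ℝ) + 2) * (c2 * c0)) * ((s.esymm (i + 1)) ^ 2 * (C0 * C2)) := by ring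
  exact le_of_mul_le_mul_left hfinal hKpos


/-- log-concavity of binomial coefficients -/
lemma choose_log_concave {n i : ℕ} (h : i + 2 ≤ n) :
    n.choose i * n.choose (i + 2) ≤ n.choose (i + 1) ^ 2 := by
  have key : n.choose i * n.choose (i + 2) * ((i + 1) * (i + 2)) ≤
      n.choose (i + 1) ^ 2 * ((i + 1) * (i + 2)) := by
    have e1 : n.choose (i + 2) * (i + 2) = n.choose (i + 1) * (n - (i + 1)) :=
      Nat.choose_succ_right_eq n (i + 1)
    have e2 : n.choose (i + 1) * (i + 1) = n.choose i * (n - i) :=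
      Nat.choose_succ_right_eq n i
    calc n.choose i * n.choose (i + 2) * ((i + 1) * (i + 2))
        = n.choose i * (i + 1) * (n.choose (i + 2) * (i + 2)) := by ring
      _ = n.choose i * (i + 1) * (n.choose (i + 1) * (n - (i + 1))) := by rw [e1]
      _ = n.choose i * (i + 1) * n.choose (i + 1) * (n - (i + 1)) := by ring
      _ ≤ n.choose i * (i + 1) * n.choose (i + 1) * (n - i) := by
          apply Nat.mul_le_mul_left
          omega
      _ = n.choose (i + 1) * (n.choose i * (n - i)) * (i + 1) := by ring
      _ = n.choose (i + 1) * (n.choose (i + 1) * (i + 1)) * (i + 1) := by rw [e2]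
      _ ≤ n.choose (i + 1) ^ 2 * ((i + 1) * (i + 2)) := by
          have : n.choose (i + 1) * (n.choose (i + 1) * (i + 1)) * (i + 1)
              = n.choose (i + 1) ^ 2 * ((i + 1) * (i + 1)) := by ring
          rw [this]
          apply Nat.mul_le_mul_left
          exact Nat.mul_le_mul_left _ (by omega)
  exact Nat.le_of_mul_le_mul_right key (by positivity)

/-- The unnormalized Newton inequality for multisets with enough positivity. -/
lemma newton_wrapper {t : Multiset ℝ} {K : ℕ}
    (h2 : 0 < t.esymm K) (h1 : 0 < t.esymm (K + 1)) (hk : 0 < t.esymm (K + 2)) :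
    t.esymm (K + 2) * t.esymm K ≤ t.esymm (K + 1) ^ 2 := by
  have hcard : K + 2 ≤ Multiset.card t := by
    by_contra hc
    rw [esymm_eq_zero_of_card_lt (by omega)] at hk
    exact lt_irrefl _ hk
  have hN := newton_normalized t K hcard
  have hlog := choose_log_concave hcard
  have hlog' : ((Multiset.card t).choose K : ℝ) * ((Multiset.card t).choose (K + 2) : ℝ) ≤
      ((Multiset.card t).choose (K + 1) : ℝ) ^ 2 := by exact_mod_cast hlog
  have hC1pos : (0:ℝ) < ((Multiset.card t).choose (K + 1) : ℝ) := by
    exact_mod_cast Nat.choose_pos (show K + 1 ≤ Multiset.card t by omega)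
  have step : t.esymm (K + 2) * t.esymm K * ((Multiset.card t).choose (K + 1) : ℝ) ^ 2 ≤
      t.esymm (K + 1) ^ 2 * ((Multiset.card t).choose (K + 1) : ℝ) ^ 2 := by
    calc t.esymm (K + 2) * t.esymm K * ((Multiset.card t).choose (K + 1) : ℝ) ^ 2
        = t.esymm K * t.esymm (K + 2) * ((Multiset.card t).choose (K + 1) : ℝ) ^ 2 := by ring
      _ ≤ t.esymm (K + 1) ^ 2 * (((Multiset.card t).choose K : ℝ) * ((Multiset.card t).choose (K + 2) : ℝ)) := hN
      _ ≤ t.esymm (K + 1) ^ 2 * ((Multiset.card t).choose (K + 1) : ℝ) ^ 2 := by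
          apply mul_le_mul_of_nonneg_left hlog' (sq_nonneg _)
  exact le_of_mul_le_mul_right step (by positivity)

/-- The key minor lemma: removing one entry from a `Γ_k` multiset lands in `Γ_{k-1}`. -/
theorem gam_minor : ∀ k : ℕ, ∀ s : Multiset ℝ, ∀ a : ℝ, Gam (a ::ₘ s) k → Gam s (k - 1) := by
  intro k
  induction k using Nat.strong_induction_on with
  | _ k ihk =>
    intro s
    induction s using Multiset.strongInductionOn with
    | _ s ihs =>
      intro a hG j hj1 hj2
      rcases lt_or_eq_of_le hj2 with hlt | heq
      · -- j < k - 1 : use the induction on k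
        have hk1 : j + 1 < k := by omega
        have := ihk (j + 1) hk1 s a (gam_mono hG (by omega))
        exact this j hj1 (by omega)
      · -- j = k - 1
        have hk2 : 2 ≤ k := by omega
        obtain ⟨K, rfl⟩ : ∃ K, k = K + 2 := ⟨k - 2, by omega⟩
        have hjK : j = K + 1 := by omega
        subst hjK
        by_cases ha : a ≤ 0
        · exact gam_cons_nonpos ha hG (K + 1) hj1 (by omega)
        push_neg at ha
        by_cases hneg : ∃ b ∈ s, b < 0
        · obtain ⟨b, hbs, hb⟩ := hneg
          obtain ⟨t, rfl⟩ := Multiset.exists_cons_of_mem hbs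
          -- reorder : a ::ₘ b ::ₘ t = b ::ₘ a ::ₘ t
          have hG' : Gam (b ::ₘ a ::ₘ t) (K + 2) := by
            rwa [Multiset.cons_swap] at hG
          have hGat : Gam (a ::ₘ t) (K + 2) := gam_cons_nonpos (le_of_lt hb) hG'
          have hGt : Gam t (K + 1) := by
            have := ihs t (Multiset.lt_cons_self t b) a hGat
            simpa using this
          by_contra hcon
          push_neg at hcon
          have hsK1 : (b ::ₘ t).esymm (K + 1) ≤ 0 := hcon
          -- esymm (a ::ₘ b ::ₘ t) (K+2) > 0
          have hfull : 0 < (a ::ₘ b ::ₘ t).esymm (K + 2) := hG (K + 2) (by omega) le_rfl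
          rw [esymm_cons] at hfull
          have hsK2 : 0 < (b ::ₘ t).esymm (K + 2) := by nlinarith
          have e1 : 0 < t.esymm (K + 1) := hGt (K + 1) (by omega) le_rfl
          have e2 : 0 < t.esymm K := gam_esymm_pos hGt (by omega)
          rw [esymm_cons] at hsK2
          have etK2 : 0 < t.esymm (K + 2) := by nlinarith
          have hNewt := newton_wrapper e2 e1 etK2
          rw [esymm_cons] at hsK1
          nlinarith
        · -- all entries of s nonnegative
          push_neg at hneg
          have hnn : ∀ x ∈ s, 0 ≤ x := fun x hx => hneg x hx
          have hcount := gam_pos_count hG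
          have heq2 : (a ::ₘ s).filter (fun x => 0 < x) = a ::ₘ s.filter (fun x => 0 < x) :=
            Multiset.filter_cons_of_pos _ ha
          rw [heq2, Multiset.card_cons] at hcount
          exact esymm_pos_of_count hnn (show K + 1 ≤ _ by omega)

/-- peeling: `σ_m(y) ≥` the product of any `m` positive elements of `y`, for `y ∈ Γ_{m+1}`. -/
theorem gam_peel : ∀ m : ℕ, ∀ y z : Multiset ℝ, Gam y (m + 1) → z ≤ y →
    Multiset.card z = m → (∀ x ∈ z, 0 < x) → z.prod ≤ y.esymm m := by
  intro m
  induction m with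
  | zero =>
    intro y z _ _ hc _
    rw [Multiset.card_eq_zero.1 hc, esymm_zero', Multiset.prod_zero]
  | succ m ih =>
    intro y z hG hzy hc hz
    have hzne : z ≠ 0 := by
      intro h; rw [h] at hc; simp at hc
    obtain ⟨c, hcz⟩ := Multiset.exists_mem_of_ne_zero hzne
    obtain ⟨z', rfl⟩ := Multiset.exists_cons_of_mem hcz
    have hcy : c ∈ y := Multiset.mem_of_le hzy (Multiset.mem_cons_self c z')
    obtain ⟨y', rfl⟩ := Multiset.exists_cons_of_mem hcy
    have hz'y' : z' ≤ y' := by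
      rwa [← Multiset.cons_le_cons_iff c]
    have hGy' : Gam y' (m + 1) := by
      have := gam_minor (m + 2) y' c hG
      simpa using this
    have hcpos : 0 < c := hz c (Multiset.mem_cons_self c z')
    have h1 : z'.prod ≤ y'.esymm m := ih y' z' hGy' hz'y' (by simpa using hc)
      (fun x hx => hz x (Multiset.mem_cons_of_mem hx))
    have h2 : 0 < y'.esymm (m + 1) := hGy' (m + 1) (by omega) le_rfl
    rw [esymm_cons, Multiset.prod_cons]
    nlinarith


lemma card_filter_coe_lt (n c : ℕ) (hc : c ≤ n) :
    (Finset.univ.filter (fun j : Fin n => (j : ℕ) < c)).card = c := by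
  have hmem : ∀ m ∈ Finset.range c, m < n := fun m hm =>
    lt_of_lt_of_le (Finset.mem_range.1 hm) hc
  have : Finset.univ.filter (fun j : Fin n => (j : ℕ) < c) = (Finset.range c).attachFin hmem := by
    ext j
    simp [Finset.mem_attachFin]
  rw [this, Finset.card_attachFin, Finset.card_range]


lemma esymmRes_eq {n : ℕ} (s : Finset (Fin n)) (m : ℕ) (x : Fin n → ℝ) :
    esymmRes n s m x = (s.val.map x).esymm m := by
  exact (Finset.esymm_map_val x s m).symm

lemma esymm_eq {n : ℕ} (m : ℕ) (x : Fin n → ℝ) :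
    esymm n m x = ((Finset.univ : Finset (Fin n)).val.map x).esymm m := by
  exact (Finset.esymm_map_val x Finset.univ m).symm


end SigmaAux

theorem stmt5 (n μ : ℕ) (hμ : 1 ≤ μ) (hμn : μ ≤ n - 2)
    (lam : Fin n → ℝ)
    (hGamma : ∀ m, 1 ≤ m → m ≤ μ + 2 → 0 < esymm n m lam)
    (hdec : ∀ i j : Fin n, i ≤ j → lam j ≤ lam i)
    (a : Fin n) (ha : (a : ℕ) < μ) :   -- `a ≤ μ` in 1-based indexing
    esymmRes n {a}ᶜ (μ - 1) lam
      ≥ (∏ i ∈ Finset.univ.filter (fun i : Fin n => (i : ℕ) < μ), lam i) / lam a := by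
  classical
  open SigmaAux in
  set M : Multiset ℝ := (Finset.univ : Finset (Fin n)).val.map lam with hM
  set Y : Multiset ℝ := (({a}ᶜ : Finset (Fin n)).val.map lam) with hY
  have hGamM : SigmaAux.Gam M (μ + 2) := fun j hj1 hj2 => by
    rw [hM, ← SigmaAux.esymm_eq]
    exact hGamma j hj1 hj2
  have hsplit : (Finset.univ : Finset (Fin n)).val = a ::ₘ (({a}ᶜ : Finset (Fin n)).val) := by
    rw [Finset.compl_singleton, Finset.erase_val]
    exact (Multiset.cons_erase (by simp : a ∈ (Finset.univ : Finset (Fin n)).val)).symm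
  have hMY : M = lam a ::ₘ Y := by
    rw [hM, hsplit, Multiset.map_cons, hY]
  have hGamY : SigmaAux.Gam Y (μ + 1) := by
    have := SigmaAux.gam_minor (μ + 2) Y (lam a) (hMY ▸ hGamM)
    simpa using this
  have hcardM : Multiset.card M = n := by
    rw [hM, Multiset.card_map]
    simp
  have hn2 : μ + 2 ≤ n := by
    have := SigmaAux.gam_card_le hGamM (by omega)
    omega
  -- positivity of the top μ entries
  have hposcount : μ + 2 ≤ (Finset.univ.filter (fun j : Fin n => 0 < lam j)).card := by
    have h := SigmaAux.gam_pos_count hGamM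
    rw [hM, Multiset.filter_map, Multiset.card_map] at h
    have : (Finset.univ.filter (fun j : Fin n => 0 < lam j)).card
        = Multiset.card (Multiset.filter ((fun x => 0 < x) ∘ lam) (Finset.univ : Finset (Fin n)).val) := by
      rw [Finset.card_def, Finset.filter_val]
      congr 1
    omega
  have hpos : ∀ i : Fin n, (i : ℕ) < μ → 0 < lam i := by
    intro i hi
    by_contra hle
    push_neg at hle
    have hsub : Finset.univ.filter (fun j : Fin n => 0 < lam j)
        ⊆ Finset.univ.filter (fun j : Fin n => (j : ℕ) < (i : ℕ)) := by
      intro j hj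
      simp only [Finset.mem_filter, Finset.mem_univ, true_and] at hj ⊢
      by_contra hji
      push_neg at hji
      have hij : i ≤ j := by
        rw [Fin.le_def]; exact hji
      have := hdec i j hij
      linarith
    have hcardle := Finset.card_le_card hsub
    rw [SigmaAux.card_filter_coe_lt n (i : ℕ) (le_of_lt i.isLt)] at hcardle
    omega
  set F : Finset (Fin n) := Finset.univ.filter (fun i : Fin n => (i : ℕ) < μ) with hF
  have haF : a ∈ F := by simp [hF, ha]
  have hcardF : F.card = μ := SigmaAux.card_filter_coe_lt n μ (by omega)
  have hlama : 0 < lam a := hpos a ha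
  set Z : Multiset ℝ := (F.erase a).val.map lam with hZ
  have hZprod : Z.prod = ∏ i ∈ F.erase a, lam i := (Finset.prod_eq_multiset_prod _ _).symm
  have hZcard : Multiset.card Z = μ - 1 := by
    rw [hZ, Multiset.card_map, ← Finset.card_def, Finset.card_erase_of_mem haF, hcardF]
  have hZY : Z ≤ Y := by
    apply Multiset.map_le_map
    rw [Finset.val_le_iff]
    intro j hj
    have hja : j ≠ a := Finset.ne_of_mem_erase hj
    simp [hja]
  have hZpos : ∀ x ∈ Z, 0 < x := by
    intro x hx
    obtain ⟨i, hi, rfl⟩ := Multiset.mem_map.1 hx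
    apply hpos
    have : i ∈ F := Finset.mem_of_mem_erase hi
    simpa [hF] using this
  have hGamY' : SigmaAux.Gam Y ((μ - 1) + 1) := by
    rw [show μ - 1 + 1 = μ by omega]
    exact SigmaAux.gam_mono hGamY (by omega)
  have hpeel := SigmaAux.gam_peel (μ - 1) Y Z hGamY' hZY hZcard hZpos
  rw [ge_iff_le, ← Finset.mul_prod_erase F lam haF, mul_comm, mul_div_assoc,
    div_self (ne_of_gt hlama), mul_one, SigmaAux.esymmRes_eq]
  rw [hZprod] at hpeel
  exact hpeel
end

section
/- Let λ ∈ Γ_{μ+2} with λ₁ ≥ ⋯ ≥ λₙ. There exists a constant C depending only on n and μ such that for all indices i ≥ μ+1, |λ_i| ≤ C·λ_{μ+1}, and for all a, b ≤ μ with a ≠ b: σ_{μ−1}(λ|ab) ≤ C·(λ₁⋯λ_{μ+1})/(λ_a λ_b). -/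
open Finset

lemma esymmRes_zero (n : ℕ) (s : Finset (Fin n)) (x : Fin n → ℝ) : esymmRes n s 0 x = 1 := by
  simp [esymmRes]

lemma esymmRes_eq_zero {n m : ℕ} {s : Finset (Fin n)} (x : Fin n → ℝ) (h : s.card < m) :
    esymmRes n s m x = 0 := by
  rw [esymmRes, Finset.powersetCard_eq_empty.2 h, Finset.sum_empty]

lemma esymmRes_pos {n m : ℕ} {s : Finset (Fin n)} {x : Fin n → ℝ} (h : m ≤ s.card)
    (hx : ∀ i ∈ s, 0 < x i) : 0 < esymmRes n s m x := by
  rw [esymmRes]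
  apply Finset.sum_pos
  · intro t ht
    rw [Finset.mem_powersetCard] at ht
    exact Finset.prod_pos fun i hi => hx i (ht.1 hi)
  · exact Finset.powersetCard_nonempty.2 h

lemma esymmRes_insert {n m : ℕ} {s : Finset (Fin n)} {a : Fin n} (ha : a ∉ s) (x : Fin n → ℝ) :
    esymmRes n (insert a s) (m + 1) x
      = esymmRes n s (m + 1) x + x a * esymmRes n s m x := by
  rw [esymmRes, Finset.powersetCard_succ_insert ha]
  rw [Finset.sum_union]
  · congr 1
    rw [Finset.sum_image]
    · rw [esymmRes, Finset.mul_sum]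
      apply Finset.sum_congr rfl
      intro t ht
      rw [Finset.mem_powersetCard] at ht
      rw [Finset.prod_insert (fun hat => ha (ht.1 hat))]
    · intro t ht t' ht' hE
      rw [Finset.mem_coe, Finset.mem_powersetCard] at ht ht'
      have h1 : a ∉ t := fun hat => ha (ht.1 hat)
      have h2 : a ∉ t' := fun hat => ha (ht'.1 hat)
      have := congrArg (Finset.erase · a) hE
      simpa [Finset.erase_insert_of_ne, Finset.erase_insert, h1, h2] using this
  · rw [Finset.disjoint_left]
    intro t ht ht'
    rw [Finset.mem_powersetCard] at ht
    rw [Finset.mem_image] at ht'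
    obtain ⟨t', _, rfl⟩ := ht'
    exact ha (ht.1 (Finset.mem_insert_self a t'))

lemma card_supersets {n m : ℕ} {s v : Finset (Fin n)} (hv : v ⊆ s) (hj : v.card ≤ m) :
    ((Finset.powersetCard m s).filter (fun u => v ⊆ u)).card
      = (s.card - v.card).choose (m - v.card) := by
  rw [← Finset.card_sdiff_of_subset hv, ← Finset.card_powersetCard (m - v.card) (s \ v)]
  apply Finset.card_bij' (fun u _ => u \ v) (fun w _ => w ∪ v)
  · intro u hu
    rw [Finset.mem_filter, Finset.mem_powersetCard] at hu
    rw [Finset.mem_powersetCard]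
    exact ⟨Finset.sdiff_subset_sdiff hu.1.1 le_rfl,
      by rw [Finset.card_sdiff_of_subset hu.2, hu.1.2]⟩
  · intro w hw
    rw [Finset.mem_powersetCard] at hw
    have hdisj : Disjoint w v := Finset.disjoint_of_subset_left hw.1 Finset.sdiff_disjoint
    rw [Finset.mem_filter, Finset.mem_powersetCard]
    refine ⟨⟨Finset.union_subset (hw.1.trans Finset.sdiff_subset) hv, ?_⟩,
      Finset.subset_union_right⟩
    rw [Finset.card_union_of_disjoint hdisj, hw.2]
    omega
  · intro u hu
    rw [Finset.mem_filter] at hu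
    exact Finset.sdiff_union_of_subset hu.2
  · intro w hw
    rw [Finset.mem_powersetCard] at hw
    have hdisj : Disjoint w v := Finset.disjoint_of_subset_left hw.1 Finset.sdiff_disjoint
    rw [Finset.union_sdiff_right, Finset.sdiff_eq_self_of_disjoint hdisj]

lemma esymmRes_shift (n : ℕ) (s : Finset (Fin n)) (x : Fin n → ℝ) (m : ℕ) (t : ℝ) :
    esymmRes n s m (fun i => x i + t)
      = ∑ j ∈ Finset.range (m+1),
          ((s.card - j).choose (m - j) : ℝ) * esymmRes n s j x * t ^ (m - j) := by
  have step1 : esymmRes n s m (fun i => x i + t)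
      = ∑ u ∈ Finset.powersetCard m s, ∑ v ∈ Finset.powerset s,
          (if v ⊆ u then (∏ i ∈ v, x i) * t ^ (m - v.card) else 0) := by
    rw [esymmRes]
    apply Finset.sum_congr rfl
    intro u hu
    rw [Finset.mem_powersetCard] at hu
    rw [Finset.prod_add]
    have huf : u.powerset = (s.powerset).filter (fun v => v ⊆ u) := by
      ext v
      simp only [Finset.mem_powerset, Finset.mem_filter]
      exact ⟨fun h => ⟨h.trans hu.1, h⟩, fun h => h.2⟩
    rw [huf, Finset.sum_filter]
    apply Finset.sum_congr rfl
    intro v _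
    by_cases hvu : v ⊆ u
    · simp only [hvu, if_true]
      rw [Finset.prod_const, Finset.card_sdiff_of_subset hvu, hu.2]
    · simp [hvu]
  rw [step1, Finset.sum_comm]
  have step2 : ∀ v ∈ s.powerset, (∑ u ∈ Finset.powersetCard m s,
      if v ⊆ u then (∏ i ∈ v, x i) * t ^ (m - v.card) else 0)
      = (∏ i ∈ v, x i) * (((s.card - v.card).choose (m - v.card) : ℝ) * t ^ (m - v.card)
          * (if v.card ≤ m then 1 else 0)) := by
    intro v hv
    rw [Finset.mem_powerset] at hv
    rw [← Finset.sum_filter, Finset.sum_const]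
    by_cases hcard : v.card ≤ m
    · rw [card_supersets hv hcard]
      simp only [hcard, if_true, nsmul_eq_mul]
      ring
    · have hempty : (Finset.powersetCard m s).filter (fun u => v ⊆ u) = ∅ := by
        rw [Finset.filter_eq_empty_iff]
        intro u hu hvu
        rw [Finset.mem_powersetCard] at hu
        exact hcard (hu.2 ▸ Finset.card_le_card hvu)
      simp [hempty, hcard]
  rw [Finset.sum_congr rfl step2, Finset.sum_powerset]
  have step3 : ∀ j ∈ Finset.range (s.card + 1),
      (∑ v ∈ Finset.powersetCard j s, (∏ i ∈ v, x i) *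
        (((s.card - v.card).choose (m - v.card) : ℝ) * t ^ (m - v.card)
          * (if v.card ≤ m then 1 else 0)))
      = (if j ≤ m then ((s.card - j).choose (m - j) : ℝ) * esymmRes n s j x * t ^ (m - j)
          else 0) := by
    intro j _
    have : ∀ v ∈ Finset.powersetCard j s, (∏ i ∈ v, x i) *
        (((s.card - v.card).choose (m - v.card) : ℝ) * t ^ (m - v.card)
          * (if v.card ≤ m then 1 else 0))
        = (∏ i ∈ v, x i) * (((s.card - j).choose (m - j) : ℝ) * t ^ (m - j)
          * (if j ≤ m then 1 else 0)) := by
      intro v hv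
      rw [Finset.mem_powersetCard] at hv
      rw [hv.2]
    rw [Finset.sum_congr rfl this, ← Finset.sum_mul]
    rw [esymmRes]
    by_cases hjm : j ≤ m <;> simp [hjm] <;> ring
  rw [Finset.sum_congr rfl step3]
  have hG0 : ∀ j, s.card < j → ((s.card - j).choose (m - j) : ℝ) * esymmRes n s j x * t ^ (m - j) = 0 := by
    intro j hj
    rw [esymmRes_eq_zero x hj]
    ring
  set M := max s.card m with hM
  have e1 : (∑ j ∈ Finset.range (s.card + 1),
      (if j ≤ m then ((s.card - j).choose (m - j) : ℝ) * esymmRes n s j x * t ^ (m - j) else 0))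
      = ∑ j ∈ Finset.range (M + 1),
      (if j ≤ m then ((s.card - j).choose (m - j) : ℝ) * esymmRes n s j x * t ^ (m - j) else 0) := by
    apply Finset.sum_subset
    · apply Finset.range_subset_range.2; omega
    · intro j _ hj
      rw [Finset.mem_range, not_lt] at hj
      rw [hG0 j (by omega)]
      simp
  rw [e1, ← Finset.sum_filter]
  congr 1
  ext j
  simp only [Finset.mem_filter, Finset.mem_range]
  omega

lemma esymmRes_card (n : ℕ) (s : Finset (Fin n)) (x : Fin n → ℝ) :
    esymmRes n s s.card x = ∏ i ∈ s, x i := by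
  rw [esymmRes, Finset.powersetCard_self, Finset.sum_singleton]

section Key

variable {D : ℕ} (f : Fin D → ℝ)

def pairs (D : ℕ) : Finset (Fin D × Fin D) :=
  (Finset.univ ×ˢ Finset.univ).filter fun p => p.1 < p.2

lemma mem_pairs {D : ℕ} {p : Fin D × Fin D} : p ∈ pairs D ↔ p.1 < p.2 := by
  simp [pairs]

lemma esymmRes_univ_self : esymmRes D Finset.univ D f = ∏ k, f k := by
  have := esymmRes_card D Finset.univ f
  rwa [Finset.card_fin] at this

lemma compl_card_pos {m : ℕ} {t : Finset (Fin D)} (ht : t ∈ Finset.powersetCard (D - m) Finset.univ)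
    (hm : 1 ≤ m) (hD : m ≤ D) : 0 < (tᶜ).card := by
  rw [Finset.mem_powersetCard] at ht
  rw [Finset.card_compl, ht.2, Fintype.card_fin]
  omega

lemma alpha (hD : 1 ≤ D) :
    esymmRes D Finset.univ (D-1) f = ∑ i, ∏ k ∈ ({i} : Finset (Fin D))ᶜ, f k := by
  rw [esymmRes]
  symm
  refine Finset.sum_bij' (i := fun i _ => ({i} : Finset (Fin D))ᶜ)
    (j := fun t ht => (tᶜ).min' (Finset.card_pos.1 (compl_card_pos ht le_rfl hD)))
    ?_ ?_ ?_ ?_ ?_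
  · intro i _
    rw [Finset.mem_powersetCard]
    refine ⟨Finset.subset_univ _, ?_⟩
    rw [Finset.card_compl, Finset.card_singleton, Fintype.card_fin]
  · intro t _; exact Finset.mem_univ _
  · intro i _
    simp
  · intro t ht
    have h1 : (tᶜ).card = 1 := by
      rw [Finset.mem_powersetCard] at ht
      rw [Finset.card_compl, ht.2, Fintype.card_fin]; omega
    obtain ⟨b, hb⟩ := Finset.card_eq_one.1 h1
    simp only [hb, Finset.min'_singleton]
    rw [← compl_compl t, hb]
  · intro i _
    rfl

lemma pair_prod {i j : Fin D} (hij : i ≠ j) :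
    (∏ k ∈ ({i} : Finset (Fin D))ᶜ, f k) * (∏ k ∈ ({j} : Finset (Fin D))ᶜ, f k)
      = (∏ k, f k) * ∏ k ∈ ({i, j} : Finset (Fin D))ᶜ, f k := by
  have h1 : ({i, j} : Finset (Fin D))ᶜ = (({j} : Finset (Fin D))ᶜ).erase i := by
    ext k; simp [and_comm]
  have h2 : i ∈ (({j} : Finset (Fin D))ᶜ) := by simp [hij]
  have h3 : (∏ k ∈ ({j} : Finset (Fin D))ᶜ, f k)
      = f i * ∏ k ∈ ({i, j} : Finset (Fin D))ᶜ, f k := by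
    rw [h1, Finset.mul_prod_erase _ _ h2]
  have h4 : (∏ k, f k) = f i * ∏ k ∈ ({i} : Finset (Fin D))ᶜ, f k := by
    rw [Finset.compl_singleton, Finset.mul_prod_erase _ _ (Finset.mem_univ i)]
  rw [h3, h4]; ring

lemma min'_pair {i j : Fin D} (hij : i < j) (H : ({i,j} : Finset (Fin D)).Nonempty) :
    ({i, j} : Finset (Fin D)).min' H = i := by
  apply le_antisymm
  · exact Finset.min'_le _ _ (Finset.mem_insert_self _ _)
  · apply Finset.le_min'
    intro y hy
    rcases Finset.mem_insert.1 hy with h | h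
    · omega
    · rw [Finset.mem_singleton] at h; omega

lemma max'_pair {i j : Fin D} (hij : i < j) (H : ({i,j} : Finset (Fin D)).Nonempty) :
    ({i, j} : Finset (Fin D)).max' H = j := by
  apply le_antisymm
  · apply Finset.max'_le
    intro y hy
    rcases Finset.mem_insert.1 hy with h | h
    · omega
    · rw [Finset.mem_singleton] at h; omega
  · exact Finset.le_max' _ _ (Finset.mem_insert_of_mem (Finset.mem_singleton_self _))

lemma beta (hD : 2 ≤ D) :
    esymmRes D Finset.univ (D-2) f
      = ∑ p ∈ pairs D, ∏ k ∈ ({p.1, p.2} : Finset (Fin D))ᶜ, f k := by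
  rw [esymmRes]
  symm
  refine Finset.sum_bij' (i := fun p _ => ({p.1, p.2} : Finset (Fin D))ᶜ)
    (j := fun t ht => ((tᶜ).min' (Finset.card_pos.1 (compl_card_pos ht (by omega) (by omega))),
      (tᶜ).max' (Finset.card_pos.1 (compl_card_pos ht (by omega) (by omega)))))
    ?_ ?_ ?_ ?_ ?_
  · intro p hp
    rw [mem_pairs] at hp
    rw [Finset.mem_powersetCard]
    refine ⟨Finset.subset_univ _, ?_⟩
    rw [Finset.card_compl, Fintype.card_fin, Finset.card_insert_of_notMem (by simp [hp.ne]),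
      Finset.card_singleton]
  · intro t ht
    have h2 : 1 < (tᶜ).card := by
      rw [Finset.mem_powersetCard] at ht
      rw [Finset.card_compl, ht.2, Fintype.card_fin]; omega
    rw [mem_pairs]
    exact Finset.min'_lt_max'_of_card _ h2
  · intro p hp
    rw [mem_pairs] at hp
    have hc : (({p.1, p.2} : Finset (Fin D))ᶜ)ᶜ = {p.1, p.2} := compl_compl _
    simp only [hc]
    rw [min'_pair hp, max'_pair hp]
  · intro t ht
    have h2 : (tᶜ).card = 2 := by
      rw [Finset.mem_powersetCard] at ht
      rw [Finset.card_compl, ht.2, Fintype.card_fin]; omega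
    obtain ⟨a, b, hab, h2'⟩ := Finset.card_eq_two.1 h2
    have hab' : a < b ∨ b < a := by
      rcases lt_trichotomy a b with h | h | h
      · exact Or.inl h
      · exact absurd h hab
      · exact Or.inr h
    have key : ({(tᶜ).min' (Finset.card_pos.1 (compl_card_pos ht (by omega) (by omega))),
        (tᶜ).max' (Finset.card_pos.1 (compl_card_pos ht (by omega) (by omega)))}
          : Finset (Fin D)) = tᶜ := by
      rcases hab' with h | h
      · simp only [h2']
        rw [min'_pair h, max'_pair h]
      · have : tᶜ = {b, a} := by rw [h2', Finset.pair_comm]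
        simp only [this]
        rw [min'_pair h, max'_pair h]
    dsimp only
    rw [key, compl_compl]
  · intro p _
    rfl

lemma gamma (a : Fin D → ℝ) :
    (∑ i, a i)^2 = (∑ i, (a i)^2) + 2 * ∑ p ∈ pairs D, a p.1 * a p.2 := by
  have expand : (∑ i, a i)^2 = ∑ p ∈ Finset.univ ×ˢ Finset.univ, a p.1 * a p.2 := by
    rw [sq, Finset.sum_mul_sum, ← Finset.sum_product']
  have split : ∀ p : Fin D × Fin D, a p.1 * a p.2
      = (if p.1 < p.2 then a p.1 * a p.2 else 0)
        + (if p.2 < p.1 then a p.1 * a p.2 else 0)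
        + (if p.1 = p.2 then a p.1 * a p.2 else 0) := by
    intro p
    rcases lt_trichotomy p.1 p.2 with h | h | h
    · simp [h, not_lt_of_gt h, h.ne]
    · simp [h, lt_irrefl]
    · simp [h, not_lt_of_gt h, h.ne']
  rw [expand, Finset.sum_congr rfl (fun p _ => split p)]
  rw [Finset.sum_add_distrib, Finset.sum_add_distrib]
  have t1 : (∑ p ∈ Finset.univ ×ˢ Finset.univ, if p.1 < p.2 then a p.1 * a p.2 else 0)
      = ∑ p ∈ pairs D, a p.1 * a p.2 := by
    rw [pairs, Finset.sum_filter]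
  have t2 : (∑ p ∈ Finset.univ ×ˢ Finset.univ, if p.2 < p.1 then a p.1 * a p.2 else 0)
      = ∑ p ∈ pairs D, a p.1 * a p.2 := by
    rw [← t1]
    apply Finset.sum_nbij' (i := fun p => (p.2, p.1)) (j := fun p => (p.2, p.1))
    · intro p _; exact Finset.mem_product.2 ⟨Finset.mem_univ _, Finset.mem_univ _⟩
    · intro p _; exact Finset.mem_product.2 ⟨Finset.mem_univ _, Finset.mem_univ _⟩
    · intro p _; rfl
    · intro p _; rfl
    · intro p _
      simp only []
      by_cases h : p.2 < p.1 <;> simp [h, mul_comm]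
  have t3 : (∑ p ∈ Finset.univ ×ˢ Finset.univ, if p.1 = p.2 then a p.1 * a p.2 else 0)
      = ∑ i, (a i)^2 := by
    rw [Finset.sum_product]
    apply Finset.sum_congr rfl
    intro i _
    simp [Finset.sum_ite_eq, sq]
  rw [t1, t2, t3]; ring

lemma key_ineq (hD : 2 ≤ D)
    (h : esymmRes D Finset.univ (D-1) f = 0) :
    esymmRes D Finset.univ (D-2) f * esymmRes D Finset.univ D f ≤ 0 := by
  set a : Fin D → ℝ := fun i => ∏ k ∈ ({i} : Finset (Fin D))ᶜ, f k with ha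
  have hsum : ∑ i, a i = 0 := by rw [← alpha f (by omega), h]
  have hS : esymmRes D Finset.univ (D-2) f * esymmRes D Finset.univ D f
      = ∑ p ∈ pairs D, a p.1 * a p.2 := by
    rw [beta f hD, esymmRes_univ_self, Finset.sum_mul]
    apply Finset.sum_congr rfl
    intro p hp
    rw [mem_pairs] at hp
    rw [ha]
    rw [pair_prod f hp.ne]
    ring
  have := gamma a
  rw [hsum] at this
  have hsq : (0:ℝ) ≤ ∑ i, (a i)^2 := Finset.sum_nonneg fun i _ => sq_nonneg _
  nlinarith [hS]

lemma coe_list_eq (d : ℕ) (L : List ℝ) (h : L.length = d) :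
    (L : Multiset ℝ) = Finset.univ.val.map (fun i : Fin d => L.get (Fin.cast h.symm i)) := by
  subst h
  rw [Fin.univ_val_map]
  exact congrArg _ (List.ofFn_get L).symm

lemma multiset_esymm_eq (d : ℕ) (R : Multiset ℝ) (hR : Multiset.card R = d) (k : ℕ) :
    R.esymm k = esymmRes d Finset.univ k
      (fun i => R.toList.get (Fin.cast (by rw [Multiset.length_toList, hR]) i)) := by
  conv_lhs => rw [← Multiset.coe_toList R]
  rw [coe_list_eq d R.toList (by rw [Multiset.length_toList, hR])]
  rw [Finset.esymm_map_val]
  rfl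

lemma key_ineq_multiset (d : ℕ) (hd : 2 ≤ d) (R : Multiset ℝ) (hR : Multiset.card R = d)
    (h : R.esymm (d-1) = 0) : R.esymm (d-2) * R.esymm d ≤ 0 := by
  rw [multiset_esymm_eq d R hR] at h ⊢
  rw [multiset_esymm_eq d R hR]
  exact key_ineq _ hd h

lemma descFac_pos {a b : ℕ} (h : b ≤ a) : 0 < (a.descFactorial b : ℝ) := by
  have : a.descFactorial b ≠ 0 := by
    rw [Ne, Nat.descFactorial_eq_zero_iff_lt]
    omega
  have : 0 < a.descFactorial b := Nat.pos_of_ne_zero this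
  exact_mod_cast this

open Polynomial in
lemma sign_lemma {n : ℕ} (s : Finset (Fin n)) (y : Fin n → ℝ) (m : ℕ) (hm : 1 ≤ m)
    (h1 : 0 < esymmRes n s (m-1) y) (h2 : 0 < esymmRes n s (m+1) y)
    (h0 : esymmRes n s m y = 0) : False := by
  set N := s.card with hN
  have hmN : m + 1 ≤ N := by
    by_contra hc
    push_neg at hc
    rw [esymmRes_eq_zero y hc] at h2
    exact lt_irrefl _ h2
  set p : ℝ[X] := ∏ i ∈ s, (X - C (y i)) with hp
  have hmonic : p.Monic := monic_prod_of_monic _ _ (fun i _ => monic_X_sub_C _)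
  have hdeg : p.natDegree = N := by
    rw [hp, natDegree_prod _ _ (fun i _ => X_sub_C_ne_zero _)]
    simp [natDegree_X_sub_C, hN]
  have hroots : p.roots = s.val.map y := by
    have hrw : p = ((s.val.map y).map (fun a => X - C a)).prod := by
      rw [hp, Finset.prod_eq_multiset_prod, Multiset.map_map]
      rfl
    rw [hrw, roots_multiset_prod_X_sub_C]
  have hcroots : Multiset.card p.roots = N := by
    rw [hroots, Multiset.card_map]
    rfl
  set J := N - (m + 1) with hJ
  set q : ℝ[X] := derivative^[J] p with hq
  have coeffq : ∀ k, q.coeff k = ((k + J).descFactorial J : ℝ) * p.coeff (k + J) := by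
    intro k
    rw [hq, Polynomial.coeff_iterate_derivative, nsmul_eq_mul]
  have hqdegle : q.natDegree ≤ m + 1 := by
    rw [natDegree_le_iff_coeff_eq_zero]
    intro k hk
    rw [coeffq, coeff_eq_zero_of_natDegree_lt (by rw [hdeg]; omega), mul_zero]
  have hcoefftop : q.coeff (m+1) = (N.descFactorial J : ℝ) := by
    rw [coeffq]
    have : m + 1 + J = N := by omega
    rw [this]
    have : p.coeff N = 1 := by
      rw [← hdeg]
      exact hmonic.coeff_natDegree
    rw [this, mul_one]
  have hdescpos : 0 < (N.descFactorial J : ℝ) := descFac_pos (by omega)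
  have hqdeg : q.natDegree = m + 1 := by
    refine le_antisymm hqdegle (le_natDegree_of_ne_zero ?_)
    rw [hcoefftop]
    exact ne_of_gt hdescpos
  have hqroots : Multiset.card q.roots = m + 1 := by
    have hlow : ∀ j : ℕ, N ≤ Multiset.card (derivative^[j] p).roots + j := by
      intro j
      induction j with
      | zero => simp [hcroots]
      | succ j ih =>
        rw [Function.iterate_succ_apply']
        have := Polynomial.card_roots_le_derivative (derivative^[j] p)
        omega
    have h1' := hlow J
    have h2' : Multiset.card q.roots ≤ m + 1 := by
      rw [← hqdeg]
      exact q.card_roots'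
    rw [← hq] at h1'
    omega
  -- Vieta for q
  have hvq : ∀ k, k ≤ m + 1 → q.coeff k
      = (N.descFactorial J : ℝ) * (-1)^(m+1-k) * q.roots.esymm (m+1-k) := by
    intro k hk
    have := Polynomial.coeff_eq_esymm_roots_of_card (p := q) (by rw [hqroots, hqdeg])
      (k := k) (by rw [hqdeg]; omega)
    rw [this, hqdeg]
    congr 2
    rw [Polynomial.leadingCoeff, hqdeg, hcoefftop]
  -- Vieta for p
  have hvp : ∀ l, l ≤ N → p.coeff (N - l) = (-1)^l * esymmRes n s l y := by
    intro l hl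
    have := Polynomial.coeff_eq_esymm_roots_of_card (p := p) (by rw [hcroots, hdeg])
      (k := N - l) (by rw [hdeg]; omega)
    rw [this, hdeg]
    have hNl : N - (N - l) = l := by omega
    rw [hNl, hmonic.leadingCoeff, one_mul, hroots, Finset.esymm_map_val]
    rfl
  -- combine at k = 0, 1, 2
  have combine : ∀ k, k ≤ 2 → ((k + J).descFactorial J : ℝ) * esymmRes n s (m+1-k) y
      = (N.descFactorial J : ℝ) * q.roots.esymm (m+1-k) := by
    intro k hk
    have e1 := coeffq k
    have e2 := hvq k (by omega)
    have e3 : k + J = N - (m+1-k) := by omega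
    rw [e3, hvp (m+1-k) (by omega)] at e1
    rw [e3]
    rw [e1] at e2
    have hne : ((-1:ℝ))^(m+1-k) ≠ 0 := pow_ne_zero _ (by norm_num)
    apply mul_left_cancel₀ hne
    linear_combination e2
  have c0 := combine 0 (by omega)
  have c1 := combine 1 (by omega)
  have c2 := combine 2 (by omega)
  have hmm1 : m + 1 - 1 = m := by omega
  have hmm2 : m + 1 - 2 = m - 1 := by omega
  rw [Nat.sub_zero] at c0
  rw [hmm1] at c1
  rw [hmm2] at c2
  -- esymm values of the roots
  have hez : q.roots.esymm m = 0 := by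
    have : (N.descFactorial J : ℝ) * q.roots.esymm m = 0 := by
      rw [← c1, h0, mul_zero]
    exact (mul_eq_zero.1 this).resolve_left (ne_of_gt hdescpos)
  have posof : ∀ z : ℝ, 0 < (N.descFactorial J : ℝ) * z → 0 < z := by
    intro z hz
    rcases mul_pos_iff.1 hz with ⟨_, h⟩ | ⟨h, _⟩
    · exact h
    · linarith
  have hepos1 : 0 < q.roots.esymm (m+1) := by
    apply posof
    rw [← c0]
    exact mul_pos (descFac_pos (by omega)) h2
  have hepos2 : 0 < q.roots.esymm (m-1) := by
    apply posof
    rw [← c2]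
    exact mul_pos (descFac_pos (by omega)) h1
  have hfin := key_ineq_multiset (m+1) (by omega) q.roots hqroots
    (by rw [Nat.add_sub_cancel]; exact hez)
  have hmm2' : m + 1 - 2 = m - 1 := by omega
  rw [hmm2'] at hfin
  nlinarith

lemma esymmRes_continuous (n : ℕ) (s : Finset (Fin n)) (m : ℕ) (x : Fin n → ℝ) :
    Continuous (fun t : ℝ => esymmRes n s m (fun i => x i + t)) := by
  have hrw : (fun t : ℝ => esymmRes n s m (fun i => x i + t))
      = fun t => ∑ u ∈ Finset.powersetCard m s, ∏ i ∈ u, (x i + t) := rfl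
  rw [hrw]
  exact continuous_finset_sum _ fun u _ =>
    continuous_finset_prod _ fun i _ => continuous_const.add continuous_id

lemma S_insert (n r : ℕ) (hr : r < n) :
    (Finset.univ.filter fun i : Fin n => r ≤ i.val)
      = insert ⟨r, hr⟩ (Finset.univ.filter fun i : Fin n => r + 1 ≤ i.val) := by
  ext i
  simp only [Finset.mem_filter, Finset.mem_univ, true_and, Finset.mem_insert, Fin.ext_iff]
  omega

lemma S_card (n r : ℕ) (hr : r ≤ n) :
    (Finset.univ.filter fun i : Fin n => r ≤ i.val).card = n - r := by
  rcases eq_or_lt_of_le hr with h | h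
  · have hempty : (Finset.univ.filter fun i : Fin n => r ≤ i.val) = ∅ := by
      rw [Finset.filter_eq_empty_iff]
      intro i _
      have := i.isLt
      omega
    rw [hempty]
    simp
    omega
  · have : (Finset.univ.filter fun i : Fin n => r ≤ i.val) = Finset.Ici (⟨r, h⟩ : Fin n) := by
      ext i
      simp [Fin.le_def]
    rw [this, Fin.card_Ici]

lemma removalStep (n r j : ℕ) (hr : r < n) (hj : j ≤ n - r) (x : Fin n → ℝ)
    (H : ∀ m, 1 ≤ m → m ≤ j →
      0 < esymmRes n (Finset.univ.filter fun i : Fin n => r ≤ i.val) m x) :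
    ∀ m, 1 ≤ m → m ≤ j - 1 →
      0 < esymmRes n (Finset.univ.filter fun i : Fin n => r + 1 ≤ i.val) m x := by
  classical
  by_contra hcon
  push_neg at hcon
  obtain ⟨mb, hmb1, hmbj, hmble⟩ := hcon
  -- positivity of level-r shifted esymm
  have hF : ∀ m, 1 ≤ m → m ≤ j → ∀ t : ℝ, 0 ≤ t →
      0 < esymmRes n (Finset.univ.filter fun i : Fin n => r ≤ i.val) m (fun i => x i + t) := by
    intro m hm1 hmj t ht
    rw [esymmRes_shift]
    have hterm : ∀ j' ∈ Finset.range (m+1), 0 ≤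
        (((Finset.univ.filter fun i : Fin n => r ≤ i.val).card - j').choose (m - j') : ℝ)
          * esymmRes n (Finset.univ.filter fun i : Fin n => r ≤ i.val) j' x * t ^ (m - j') := by
      intro j' hj'
      rw [Finset.mem_range] at hj'
      have he : 0 ≤ esymmRes n (Finset.univ.filter fun i : Fin n => r ≤ i.val) j' x := by
        rcases Nat.eq_zero_or_pos j' with h | h
        · subst h; rw [esymmRes_zero]; norm_num
        · exact le_of_lt (H j' h (by omega))
      have h1 : (0:ℝ) ≤ (((Finset.univ.filter fun i : Fin n => r ≤ i.val).card - j').choose (m - j') : ℝ) :=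
        Nat.cast_nonneg _
      have h2 : (0:ℝ) ≤ t ^ (m - j') := pow_nonneg ht _
      positivity
    have hmem : m ∈ Finset.range (m+1) := by simp
    calc (0:ℝ) < (((Finset.univ.filter fun i : Fin n => r ≤ i.val).card - m).choose (m - m) : ℝ)
          * esymmRes n (Finset.univ.filter fun i : Fin n => r ≤ i.val) m x * t ^ (m - m) := by
          rw [Nat.sub_self, Nat.choose_zero_right, pow_zero, Nat.cast_one, one_mul, mul_one]
          exact H m hm1 hmj
      _ ≤ _ := Finset.single_le_sum hterm hmem
  -- large t positivity at level r+1
  set t0 : ℝ := 1 + ∑ i, |x i| with ht0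
  have ht0pos : 0 ≤ t0 := by
    have : 0 ≤ ∑ i, |x i| := Finset.sum_nonneg fun i _ => abs_nonneg _
    rw [ht0]; linarith
  have hGlarge : ∀ t : ℝ, t0 ≤ t → ∀ m, 1 ≤ m → m ≤ j - 1 →
      0 < esymmRes n (Finset.univ.filter fun i : Fin n => r + 1 ≤ i.val) m (fun i => x i + t) := by
    intro t ht m hm1 hmj'
    apply esymmRes_pos
    · rw [S_card n (r+1) (by omega)]
      omega
    · intro i _
      have h1 : |x i| ≤ ∑ k, |x k| :=
        Finset.single_le_sum (fun k _ => abs_nonneg (x k)) (Finset.mem_univ i)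
      have h2 : -x i ≤ |x i| := neg_le_abs _
      rw [ht0] at ht
      linarith
  -- the bad set
  set A : Set ℝ := {t | 0 ≤ t ∧ ∃ m, 1 ≤ m ∧ m ≤ j - 1 ∧
      esymmRes n (Finset.univ.filter fun i : Fin n => r + 1 ≤ i.val) m (fun i => x i + t) ≤ 0}
    with hA
  have h0A : (0:ℝ) ∈ A := by
    refine ⟨le_refl 0, mb, hmb1, hmbj, ?_⟩
    have : (fun i => x i + (0:ℝ)) = x := by funext i; ring
    rw [this]
    exact hmble
  have hAsub : A ⊆ Set.Icc 0 t0 := by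
    rintro t ⟨ht0', m, hm1, hmj', hle⟩
    refine ⟨ht0', ?_⟩
    by_contra hgt
    push_neg at hgt
    exact absurd hle (not_le.2 (hGlarge t (le_of_lt hgt) m hm1 hmj'))
  have hclosed : IsClosed A := by
    have : A = Set.Ici 0 ∩ ⋃ m ∈ Finset.Icc 1 (j-1), {t : ℝ |
        esymmRes n (Finset.univ.filter fun i : Fin n => r + 1 ≤ i.val) m (fun i => x i + t) ≤ 0} := by
      ext t
      simp only [hA, Set.mem_setOf_eq, Set.mem_inter_iff, Set.mem_Ici, Set.mem_iUnion,
        Finset.mem_Icc, exists_prop]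
      constructor
      · rintro ⟨h1, m, h2, h3, h4⟩; exact ⟨h1, m, ⟨h2, h3⟩, h4⟩
      · rintro ⟨h1, m, ⟨h2, h3⟩, h4⟩; exact ⟨h1, m, h2, h3, h4⟩
    rw [this]
    refine isClosed_Ici.inter (isClosed_biUnion_finset fun m _ => ?_)
    exact isClosed_le (esymmRes_continuous n _ m x) continuous_const
  have hcompact : IsCompact A :=
    (isCompact_Icc (a := (0:ℝ)) (b := t0)).of_isClosed_subset hclosed hAsub
  set T := sSup A with hT
  have hTA : T ∈ A := hcompact.sSup_mem ⟨0, h0A⟩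
  have hTnonneg : 0 ≤ T := hTA.1
  have hbdd : BddAbove A := hcompact.bddAbove
  have hafter : ∀ t : ℝ, T < t → ∀ m, 1 ≤ m → m ≤ j - 1 →
      0 < esymmRes n (Finset.univ.filter fun i : Fin n => r + 1 ≤ i.val) m (fun i => x i + t) := by
    intro t ht m hm1 hmj'
    by_contra hle
    push_neg at hle
    have : t ∈ A := ⟨by linarith, m, hm1, hmj', hle⟩
    exact absurd (le_csSup hbdd this) (not_le.2 ht)
  have hTge : ∀ m, 1 ≤ m → m ≤ j - 1 →
      0 ≤ esymmRes n (Finset.univ.filter fun i : Fin n => r + 1 ≤ i.val) m (fun i => x i + T) := by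
    intro m hm1 hmj'
    have hcont := (esymmRes_continuous n (Finset.univ.filter fun i : Fin n => r + 1 ≤ i.val) m x)
    refine ge_of_tendsto ((hcont.tendsto T).mono_left (nhdsWithin_le_nhds (s := Set.Ioi T))) ?_
    filter_upwards [self_mem_nhdsWithin] with t ht
    exact le_of_lt (hafter t ht m hm1 hmj')
  -- minimal bad m at T
  have hPex : ∃ m, 1 ≤ m ∧ m ≤ j - 1 ∧
      esymmRes n (Finset.univ.filter fun i : Fin n => r + 1 ≤ i.val) m (fun i => x i + T) ≤ 0 :=
    hTA.2
  set m0 := Nat.find hPex with hm0def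
  obtain ⟨hm01, hm0j, hm0le⟩ := Nat.find_spec hPex
  have hGm0 : esymmRes n (Finset.univ.filter fun i : Fin n => r + 1 ≤ i.val) m0
      (fun i => x i + T) = 0 := le_antisymm hm0le (hTge m0 hm01 hm0j)
  have hGm0m1 : 0 < esymmRes n (Finset.univ.filter fun i : Fin n => r + 1 ≤ i.val) (m0 - 1)
      (fun i => x i + T) := by
    rcases Nat.eq_or_lt_of_le hm01 with h | h
    · have h0 : m0 - 1 = 0 := by omega
      rw [h0, esymmRes_zero]
      norm_num
    · have hm1lt : m0 - 1 < m0 := by omega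
      have hnot := Nat.find_min hPex hm1lt
      push_neg at hnot
      have := hnot (by omega) (by omega)
      linarith [hTge (m0-1) (by omega) (by omega), this]
  have hGm0p1 : 0 < esymmRes n (Finset.univ.filter fun i : Fin n => r + 1 ≤ i.val) (m0 + 1)
      (fun i => x i + T) := by
    have hins := esymmRes_insert (n := n) (m := m0)
      (s := Finset.univ.filter fun i : Fin n => r + 1 ≤ i.val) (a := ⟨r, hr⟩)
      (by simp) (fun i => x i + T)
    rw [← S_insert n r hr] at hins
    have hFpos := hF (m0 + 1) (by omega) (by omega) T hTnonneg
    rw [hins, hGm0, mul_zero, add_zero] at hFpos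
    exact hFpos
  exact sign_lemma _ _ m0 hm01 hGm0m1 hGm0p1 hGm0

lemma iterate_removal (n k : ℕ) (hk : k ≤ n) (x : Fin n → ℝ)
    (H : ∀ m, 1 ≤ m → m ≤ k → 0 < esymm n m x) :
    ∀ r, r ≤ k → ∀ m, 1 ≤ m → m ≤ k - r →
      0 < esymmRes n (Finset.univ.filter fun i : Fin n => r ≤ i.val) m x := by
  intro r
  induction r with
  | zero =>
    intro _ m hm1 hmk
    have huniv : (Finset.univ.filter fun i : Fin n => 0 ≤ i.val) = Finset.univ :=
      Finset.filter_true_of_mem (fun _ _ => Nat.zero_le _)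
    rw [huniv]
    exact H m hm1 (by omega)
  | succ r ih =>
    intro hrk m hm1 hmk
    exact removalStep n r (k - r) (by omega) (by omega) x (ih (by omega)) m hm1 (by omega)

lemma esymmRes_one (n : ℕ) (s : Finset (Fin n)) (x : Fin n → ℝ) :
    esymmRes n s 1 x = ∑ i ∈ s, x i := by
  rw [esymmRes, Finset.powersetCard_one, Finset.sum_map]
  simp

lemma T_card (n c : ℕ) (hc : c < n) :
    (Finset.univ.filter fun i : Fin n => i.val < c).card = c := by
  have : (Finset.univ.filter fun i : Fin n => i.val < c) = Finset.Iio (⟨c, hc⟩ : Fin n) := by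
    ext i
    simp [Fin.lt_def]
  rw [this, Fin.card_Iio]

section Assemble

variable {n μ : ℕ} {lam : Fin n → ℝ}

lemma factA (hμ : 1 ≤ μ) (hμn : μ + 2 ≤ n)
    (H : ∀ m, 1 ≤ m → m ≤ μ + 2 → 0 < esymm n m lam)
    (hsort : ∀ i j : Fin n, i ≤ j → lam j ≤ lam i) :
    ∀ i : Fin n, i.val ≤ μ + 1 → 0 < lam i := by
  intro i hi
  have h1 := iterate_removal n (μ+2) hμn lam H i.val (by omega) 1 le_rfl (by omega)
  rw [esymmRes_one] at h1
  have hmem : i ∈ Finset.univ.filter fun j : Fin n => i.val ≤ j.val := by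
    simp
  have hcard := S_card n i.val (by omega)
  have hle : ∀ j ∈ (Finset.univ.filter fun j : Fin n => i.val ≤ j.val), lam j ≤ lam i := by
    intro j hj
    rw [Finset.mem_filter] at hj
    exact hsort i j hj.2
  have hsum : ∑ j ∈ (Finset.univ.filter fun j : Fin n => i.val ≤ j.val), lam j
      ≤ ((n - i.val : ℕ) : ℝ) * lam i := by
    calc ∑ j ∈ (Finset.univ.filter fun j : Fin n => i.val ≤ j.val), lam j
        ≤ ∑ _j ∈ (Finset.univ.filter fun j : Fin n => i.val ≤ j.val), lam i :=
          Finset.sum_le_sum hle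
      _ = ((n - i.val : ℕ) : ℝ) * lam i := by rw [Finset.sum_const, hcard, nsmul_eq_mul]
  have hpos : 0 < ((n - i.val : ℕ) : ℝ) * lam i := lt_of_lt_of_le h1 hsum
  rcases mul_pos_iff.1 hpos with ⟨_, h⟩ | ⟨h, _⟩
  · exact h
  · exfalso
    have : (0:ℝ) ≤ ((n - i.val : ℕ) : ℝ) := Nat.cast_nonneg _
    linarith

lemma factB (hμ : 1 ≤ μ) (hμn : μ + 2 ≤ n)
    (H : ∀ m, 1 ≤ m → m ≤ μ + 2 → 0 < esymm n m lam) :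
    0 < ∑ j ∈ (Finset.univ.filter fun j : Fin n => μ + 1 ≤ j.val), lam j := by
  have h1 := iterate_removal n (μ+2) hμn lam H (μ+1) (by omega) 1 le_rfl (by omega)
  rw [esymmRes_one] at h1
  exact h1

lemma part1 (hμ : 1 ≤ μ) (hμn : μ + 2 ≤ n)
    (H : ∀ m, 1 ≤ m → m ≤ μ + 2 → 0 < esymm n m lam)
    (hsort : ∀ i j : Fin n, i ≤ j → lam j ≤ lam i) (hμlt : μ < n) :
    ∀ i : Fin n, μ ≤ i.val → |lam i| ≤ (n : ℝ) * lam ⟨μ, hμlt⟩ := by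
  intro i hi
  have hlamμ : 0 < lam ⟨μ, hμlt⟩ := factA hμ hμn H hsort _ (by simp)
  have hle : lam i ≤ lam ⟨μ, hμlt⟩ := hsort _ i (by rw [Fin.le_def]; exact hi)
  rcases le_or_gt 0 (lam i) with hpos | hneg
  · rw [abs_of_nonneg hpos]
    have hn1 : (1:ℝ) ≤ (n:ℝ) := by
      have : 1 ≤ n := by omega
      exact_mod_cast this
    nlinarith
  · rw [abs_of_neg hneg]
    -- lam i < 0 so i.val ≥ μ + 1
    have hival : μ + 1 ≤ i.val := by
      by_contra hc
      push_neg at hc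
      have : i.val = μ := by omega
      have : lam i = lam ⟨μ, hμlt⟩ := by
        congr 1
        exact Fin.ext this
      linarith
    have hmem : i ∈ Finset.univ.filter fun j : Fin n => μ + 1 ≤ j.val := by
      simp; omega
    have hsum := factB hμ hμn H
    rw [← Finset.add_sum_erase _ _ hmem] at hsum
    have herase : ∀ j ∈ (Finset.univ.filter fun j : Fin n => μ + 1 ≤ j.val).erase i,
        lam j ≤ lam ⟨μ, hμlt⟩ := by
      intro j hj
      rw [Finset.mem_erase, Finset.mem_filter] at hj
      exact hsort _ j (by rw [Fin.le_def]; simp; omega)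
    have hcard : ((Finset.univ.filter fun j : Fin n => μ + 1 ≤ j.val).erase i).card
        = n - μ - 2 := by
      rw [Finset.card_erase_of_mem hmem, S_card n (μ+1) (by omega)]
      omega
    have hsum2 : ∑ j ∈ (Finset.univ.filter fun j : Fin n => μ + 1 ≤ j.val).erase i, lam j
        ≤ ((n - μ - 2 : ℕ) : ℝ) * lam ⟨μ, hμlt⟩ := by
      calc ∑ j ∈ (Finset.univ.filter fun j : Fin n => μ + 1 ≤ j.val).erase i, lam j
          ≤ ∑ _j ∈ (Finset.univ.filter fun j : Fin n => μ + 1 ≤ j.val).erase i, lam ⟨μ, hμlt⟩ :=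
            Finset.sum_le_sum herase
        _ = _ := by rw [Finset.sum_const, hcard, nsmul_eq_mul]
    have hcast : ((n - μ - 2 : ℕ) : ℝ) ≤ (n : ℝ) := by
      have : n - μ - 2 ≤ n := by omega
      exact_mod_cast this
    nlinarith
end Assemble

section Matching

variable {n : ℕ}

lemma prod_orderIso (s : Finset (Fin n)) {k : ℕ} (h : s.card = k) (g : Fin n → ℝ) :
    ∏ i ∈ s, g i = ∏ p : Fin k, g (s.orderIsoOfFin h p) := by
  rw [← Finset.prod_coe_sort s g]
  exact (Equiv.prod_comp (s.orderIsoOfFin h).toEquiv (fun i => g (i : Fin n))).symm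

lemma tau_le_sigma {k : ℕ} {t J : Finset (Fin n)} (ht : t.card = k) (hJ : J.card = k)
    (hinit : ∀ x ∈ t, ∀ y ∈ J, x < y → x ∈ J) (p : Fin k) :
    (J.orderIsoOfFin hJ p : Fin n) ≤ (t.orderIsoOfFin ht p : Fin n) := by
  by_contra hc
  push_neg at hc
  have hinj : Function.Injective (fun q : Fin k => ((t.orderIsoOfFin ht q : Fin n))) :=
    fun q q' he => (t.orderIsoOfFin ht).injective (Subtype.val_injective he)
  have hBcard : ((Finset.Iic p).image (fun q => (t.orderIsoOfFin ht q : Fin n))).card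
      = p.val + 1 := by
    rw [Finset.card_image_of_injective _ hinj, Fin.card_Iic]
  have hBsub : (Finset.Iic p).image (fun q => (t.orderIsoOfFin ht q : Fin n))
      ⊆ J.filter (· < (J.orderIsoOfFin hJ p : Fin n)) := by
    intro x hx
    rw [Finset.mem_image] at hx
    obtain ⟨q, hq, rfl⟩ := hx
    rw [Finset.mem_Iic] at hq
    have h1 : (t.orderIsoOfFin ht q : Fin n) ≤ (t.orderIsoOfFin ht p : Fin n) :=
      Subtype.coe_le_coe.2 ((t.orderIsoOfFin ht).monotone hq)
    have h2 : (t.orderIsoOfFin ht q : Fin n) < (J.orderIsoOfFin hJ p : Fin n) :=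
      lt_of_le_of_lt h1 hc
    have h3 : (t.orderIsoOfFin ht q : Fin n) ∈ J :=
      hinit _ (t.orderIsoOfFin ht q).2 _ (J.orderIsoOfFin hJ p).2 h2
    rw [Finset.mem_filter]
    exact ⟨h3, h2⟩
  have hfsub : J.filter (· < (J.orderIsoOfFin hJ p : Fin n))
      ⊆ (Finset.Iio p).image (fun q => (J.orderIsoOfFin hJ q : Fin n)) := by
    intro x hx
    rw [Finset.mem_filter] at hx
    obtain ⟨hxJ, hxlt⟩ := hx
    have hxq : (J.orderIsoOfFin hJ ((J.orderIsoOfFin hJ).symm ⟨x, hxJ⟩) : Fin n) = x := by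
      rw [OrderIso.apply_symm_apply]
    have hqp : (J.orderIsoOfFin hJ).symm ⟨x, hxJ⟩ < p := by
      by_contra hqp
      push_neg at hqp
      have := Subtype.coe_le_coe.2 ((J.orderIsoOfFin hJ).monotone hqp)
      rw [hxq] at this
      exact absurd hxlt (not_lt.2 this)
    rw [Finset.mem_image]
    exact ⟨_, Finset.mem_Iio.2 hqp, hxq⟩
  have h1 := Finset.card_le_card (hBsub.trans hfsub)
  have h3 := Finset.card_image_le (s := Finset.Iio p)
    (f := fun q => (J.orderIsoOfFin hJ q : Fin n))
  rw [hBcard] at h1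
  rw [Fin.card_Iio] at h3
  omega

end Matching

section Final

variable {n μ : ℕ} {lam : Fin n → ℝ}

lemma bound_pair (hμ : 1 ≤ μ) (hμn : μ + 2 ≤ n)
    (H : ∀ m, 1 ≤ m → m ≤ μ + 2 → 0 < esymm n m lam)
    (hsort : ∀ i j : Fin n, i ≤ j → lam j ≤ lam i) :
    ∀ i j : Fin n, j ≤ i → j.val ≤ μ → |lam i| ≤ (n : ℝ) * lam j := by
  intro i j hji hjμ
  have hμlt : μ < n := by omega
  have hlamj : 0 < lam j := factA hμ hμn H hsort j (by omega)
  have hn1 : (1:ℝ) ≤ (n:ℝ) := by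
    have : 1 ≤ n := by omega
    exact_mod_cast this
  rcases le_or_gt 0 (lam i) with hpos | hneg
  · rw [abs_of_nonneg hpos]
    have := hsort j i hji
    nlinarith
  · have hival : μ ≤ i.val := by
      by_contra hcon
      push_neg at hcon
      have := factA hμ hμn H hsort i (by omega)
      linarith
    have h1 := part1 hμ hμn H hsort hμlt i hival
    have h2 : lam ⟨μ, hμlt⟩ ≤ lam j := hsort j _ (by rw [Fin.le_def]; exact hjμ)
    have h3 : (0:ℝ) ≤ (n:ℝ) := by linarith
    calc |lam i| ≤ (n:ℝ) * lam ⟨μ, hμlt⟩ := h1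
      _ ≤ (n:ℝ) * lam j := mul_le_mul_of_nonneg_left h2 h3

lemma part2 (hμ : 1 ≤ μ) (hμn : μ + 2 ≤ n)
    (H : ∀ m, 1 ≤ m → m ≤ μ + 2 → 0 < esymm n m lam)
    (hsort : ∀ i j : Fin n, i ≤ j → lam j ≤ lam i)
    (a b : Fin n) (ha : (a : ℕ) < μ) (hb : (b : ℕ) < μ) (hab : a ≠ b) :
    esymmRes n ({a, b} : Finset (Fin n))ᶜ (μ - 1) lam
      ≤ ((2:ℝ)^n * (n:ℝ)^n)
        * ∏ j ∈ (Finset.univ.filter fun i : Fin n => (i : ℕ) < μ + 1) \ {a, b}, lam j := by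
  classical
  set J := (Finset.univ.filter fun i : Fin n => (i : ℕ) < μ + 1) \ {a, b} with hJdef
  have habsub : ({a, b} : Finset (Fin n)) ⊆ Finset.univ.filter fun i : Fin n => (i : ℕ) < μ + 1 := by
    intro x hx
    rcases Finset.mem_insert.1 hx with h | h
    · subst h; simp; omega
    · rw [Finset.mem_singleton] at h; subst h; simp; omega
  have habcard : ({a, b} : Finset (Fin n)).card = 2 := by
    rw [Finset.card_insert_of_notMem (by simp [hab]), Finset.card_singleton]
  have hμ1n : μ + 1 < n := by omega
  have hJcard : J.card = μ - 1 := by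
    rw [hJdef, Finset.card_sdiff_of_subset habsub, habcard, T_card n (μ+1) hμ1n]
    omega
  have hJpos : ∀ j ∈ J, 0 < lam j := by
    intro j hj
    simp only [hJdef, Finset.mem_sdiff, Finset.mem_filter] at hj
    exact factA hμ hμn H hsort j (by omega)
  have hJprodpos : 0 < ∏ j ∈ J, lam j := Finset.prod_pos hJpos
  -- per-term bound
  have hterm : ∀ t ∈ Finset.powersetCard (μ - 1) (({a, b} : Finset (Fin n))ᶜ),
      ∏ i ∈ t, lam i ≤ (n:ℝ)^(μ-1) * ∏ j ∈ J, lam j := by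
    intro t htmem
    rw [Finset.mem_powersetCard] at htmem
    obtain ⟨hts, htc⟩ := htmem
    have hinit : ∀ x ∈ t, ∀ y ∈ J, x < y → x ∈ J := by
      intro x hx y hy hxy
      have hxab := hts hx
      rw [Finset.mem_compl] at hxab
      simp only [hJdef, Finset.mem_sdiff, Finset.mem_filter] at hy ⊢
      refine ⟨⟨Finset.mem_univ _, ?_⟩, hxab⟩
      have := hy.1.2
      rw [Fin.lt_def] at hxy
      omega
    calc ∏ i ∈ t, lam i ≤ |∏ i ∈ t, lam i| := le_abs_self _
      _ = ∏ i ∈ t, |lam i| := Finset.abs_prod t lam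
      _ = ∏ p : Fin (μ-1), |lam (t.orderIsoOfFin htc p)| := by
          rw [prod_orderIso t htc (fun i => |lam i|)]
      _ ≤ ∏ p : Fin (μ-1), ((n:ℝ) * lam (J.orderIsoOfFin hJcard p)) := by
          apply Finset.prod_le_prod
          · intro p _; exact abs_nonneg _
          · intro p _
            apply bound_pair hμ hμn H hsort
            · exact tau_le_sigma htc hJcard hinit p
            · have := (J.orderIsoOfFin hJcard p).2
              simp only [hJdef, Finset.mem_sdiff, Finset.mem_filter] at this
              omega
      _ = (n:ℝ)^(μ-1) * ∏ p : Fin (μ-1), lam (J.orderIsoOfFin hJcard p) := by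
          rw [Finset.prod_mul_distrib, Finset.prod_const, Finset.card_univ, Fintype.card_fin]
      _ = (n:ℝ)^(μ-1) * ∏ j ∈ J, lam j := by
          rw [prod_orderIso J hJcard lam]
  -- sum the bound
  have hcards : (Finset.powersetCard (μ - 1) (({a, b} : Finset (Fin n))ᶜ)).card ≤ 2^n := by
    rw [Finset.card_powersetCard]
    have hcompl : (({a, b} : Finset (Fin n))ᶜ).card = n - 2 := by
      rw [Finset.card_compl, habcard, Fintype.card_fin]
    rw [hcompl]
    have h1 : (n-2).choose (μ-1) ≤ ∑ i ∈ Finset.range (n-1), (n-2).choose i := by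
      rcases le_or_gt (μ-1) (n-2) with h | h
      · exact Finset.single_le_sum (fun i _ => Nat.zero_le _)
          (Finset.mem_range.2 (by omega))
      · rw [Nat.choose_eq_zero_of_lt h]
        exact Nat.zero_le _
    have h2 : ∑ i ∈ Finset.range (n-1), (n-2).choose i = 2^(n-2) := by
      have : n - 1 = (n - 2) + 1 := by omega
      rw [this, Nat.sum_range_choose]
    calc (n-2).choose (μ-1) ≤ 2^(n-2) := by rw [← h2]; exact h1
      _ ≤ 2^n := Nat.pow_le_pow_right (by norm_num) (by omega)
  have hnn : (n:ℝ)^(μ-1) ≤ (n:ℝ)^n := by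
    apply pow_le_pow_right₀
    · have : 1 ≤ n := by omega
      exact_mod_cast this
    · omega
  calc esymmRes n ({a, b} : Finset (Fin n))ᶜ (μ - 1) lam
      ≤ ∑ _t ∈ Finset.powersetCard (μ - 1) (({a, b} : Finset (Fin n))ᶜ),
          (n:ℝ)^(μ-1) * ∏ j ∈ J, lam j := Finset.sum_le_sum hterm
    _ = ((Finset.powersetCard (μ - 1) (({a, b} : Finset (Fin n))ᶜ)).card : ℝ)
          * ((n:ℝ)^(μ-1) * ∏ j ∈ J, lam j) := by rw [Finset.sum_const, nsmul_eq_mul]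
    _ ≤ ((2:ℝ)^n) * ((n:ℝ)^n * ∏ j ∈ J, lam j) := by
        apply mul_le_mul
        · calc ((Finset.powersetCard (μ - 1) (({a, b} : Finset (Fin n))ᶜ)).card : ℝ)
              ≤ ((2^n : ℕ) : ℝ) := by exact_mod_cast hcards
            _ = (2:ℝ)^n := by push_cast; ring
        · exact mul_le_mul_of_nonneg_right hnn (le_of_lt hJprodpos)
        · positivity
        · positivity
    _ = ((2:ℝ)^n * (n:ℝ)^n) * ∏ j ∈ J, lam j := by ring

end Final

theorem stmt6 (n μ : ℕ) (hμ : 1 ≤ μ) (hμn : μ ≤ n - 2) :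
    ∃ C : ℝ, 0 < C ∧
      ∀ lam : Fin n → ℝ,
        (∀ m, 1 ≤ m → m ≤ μ + 2 → 0 < esymm n m lam) →
        (∀ i j : Fin n, i ≤ j → lam j ≤ lam i) →
        -- `|λ_i| ≤ C·λ_{μ+1}` for all `i ≥ μ+1` (1-based), i.e. index `≥ μ` (0-based)
        ((∀ i : Fin n, μ ≤ (i : ℕ) → |lam i| ≤ C * lam ⟨μ, by omega⟩) ∧
        -- `σ_{μ−1}(λ|ab) ≤ C·(λ₁⋯λ_{μ+1})/(λ_a λ_b)` for distinct `a, b ≤ μ` (1-based)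
        ∀ a b : Fin n, (a : ℕ) < μ → (b : ℕ) < μ → a ≠ b →
          esymmRes n ({a, b} : Finset (Fin n))ᶜ (μ - 1) lam
            ≤ C * (∏ i ∈ Finset.univ.filter (fun i : Fin n => (i : ℕ) < μ + 1), lam i)
                / (lam a * lam b)) := by
  have hμn' : μ + 2 ≤ n := by omega
  have hμlt : μ < n := by omega
  refine ⟨(2:ℝ)^n * (n:ℝ)^n + (n:ℝ), ?_, ?_⟩
  · have hn0 : (0:ℝ) < (n:ℝ) := by
      have : 0 < n := by omega
      exact_mod_cast this
    positivity
  · intro lam H hsort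
    constructor
    · intro i hi
      have h1 := part1 hμ hμn' H hsort hμlt i hi
      have hlamμ : 0 < lam ⟨μ, hμlt⟩ := factA hμ hμn' H hsort _ (by simp)
      have h2 : (n:ℝ) * lam ⟨μ, hμlt⟩ ≤ ((2:ℝ)^n * (n:ℝ)^n + (n:ℝ)) * lam ⟨μ, hμlt⟩ := by
        have hpos : (0:ℝ) ≤ (2:ℝ)^n * (n:ℝ)^n := by positivity
        nlinarith
      exact le_trans h1 h2
    · intro a b ha hb hab
      have hp2 := part2 hμ hμn' H hsort a b ha hb hab
      set J := (Finset.univ.filter fun i : Fin n => (i : ℕ) < μ + 1) \ {a, b} with hJdef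
      have habsub : ({a, b} : Finset (Fin n))
          ⊆ Finset.univ.filter fun i : Fin n => (i : ℕ) < μ + 1 := by
        intro x hx
        rcases Finset.mem_insert.1 hx with h | h
        · subst h; simp; omega
        · rw [Finset.mem_singleton] at h; subst h; simp; omega
      have hJpos : ∀ j ∈ J, 0 < lam j := by
        intro j hj
        simp only [hJdef, Finset.mem_sdiff, Finset.mem_filter] at hj
        exact factA hμ hμn' H hsort j (by omega)
      have hJprodpos : 0 < ∏ j ∈ J, lam j := Finset.prod_pos hJpos
      have hlama : 0 < lam a := factA hμ hμn' H hsort a (by omega)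
      have hlamb : 0 < lam b := factA hμ hμn' H hsort b (by omega)
      have hsplit : (∏ i ∈ Finset.univ.filter (fun i : Fin n => (i : ℕ) < μ + 1), lam i)
          = (∏ j ∈ J, lam j) * (lam a * lam b) := by
        rw [hJdef, ← Finset.prod_pair hab (f := lam)]
        exact (Finset.prod_sdiff habsub).symm
      have hdiv : ((2:ℝ)^n * (n:ℝ)^n + (n:ℝ))
            * (∏ i ∈ Finset.univ.filter (fun i : Fin n => (i : ℕ) < μ + 1), lam i)
            / (lam a * lam b)
          = ((2:ℝ)^n * (n:ℝ)^n + (n:ℝ)) * ∏ j ∈ J, lam j := by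
        rw [hsplit]
        field_simp
      rw [hdiv]
      calc esymmRes n ({a, b} : Finset (Fin n))ᶜ (μ - 1) lam
          ≤ ((2:ℝ)^n * (n:ℝ)^n) * ∏ j ∈ J, lam j := hp2
        _ ≤ ((2:ℝ)^n * (n:ℝ)^n + (n:ℝ)) * ∏ j ∈ J, lam j := by
            have hn0 : (0:ℝ) ≤ (n:ℝ) := Nat.cast_nonneg _
            nlinarith
end Key
end
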